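/- arXiv:2102.04061 — 5 statements merged into one kernel-verified Lean document; each statement's English description precedes it below -/
import Mathlib

section
/- Let b : ℝ^d → ℝ^d and σ : ℝ^d → ℝ^{d×d} be globally Lipschitz with constant L and satisfy |b(0)| + |σ(0)| ≤ L, and suppose σ(x) is invertible for every x ∈ ℝ^d. Define A(φ) = (1/2)∫₀^T |σ(φ(t))^{-1}(φ'(t) − b(φ(t)))|² dt for φ ∈ H¹_{x₀}(0,T;ℝ^d). Then there exists a constant C₀ > 0, depending only on x₀, T and L, such that ‖φ‖_{H¹} ≤ C₀ e^{C₀ A(φ)} for every φ ∈ H¹_{x₀}(0,T;ℝ^d). -/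
open MeasureTheory Set

set_option maxHeartbeats 1000000

lemma gronwall_boot (T a : ℝ) (hT : 0 ≤ T) (ha : 0 < a)
    (g w : ℝ → ℝ)
    (hg_cont : ContinuousOn g (Icc 0 T))
    (hg_nonneg : ∀ t ∈ Icc (0:ℝ) T, 0 ≤ g t)
    (hw_nonneg : ∀ t ∈ Icc (0:ℝ) T, 0 ≤ w t)
    (hw_int : IntegrableOn w (Icc 0 T))
    (hwg_int : IntegrableOn (fun t => w t * g t) (Icc 0 T))
    (hineq : ∀ t ∈ Icc (0:ℝ) T, g t ≤ a + ∫ s in (0:ℝ)..t, w s * g s) :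
    ∀ t ∈ Icc (0:ℝ) T, g t ≤ 4 * a * Real.exp (2 * Real.log 2 * ∫ s in (0:ℝ)..T, w s) := by
  -- interval integrability on subintervals
  have hwII : ∀ x y : ℝ, 0 ≤ x → x ≤ y → y ≤ T → IntervalIntegrable w volume x y := by
    intro x y hx hxy hyT
    rw [intervalIntegrable_iff_integrableOn_Ioc_of_le hxy]
    exact hw_int.mono_set ((Ioc_subset_Icc_self).trans (Icc_subset_Icc hx hyT))
  have hwgII : ∀ x y : ℝ, 0 ≤ x → x ≤ y → y ≤ T →
      IntervalIntegrable (fun s => w s * g s) volume x y := by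
    intro x y hx hxy hyT
    rw [intervalIntegrable_iff_integrableOn_Ioc_of_le hxy]
    exact hwg_int.mono_set ((Ioc_subset_Icc_self).trans (Icc_subset_Icc hx hyT))
  set W : ℝ → ℝ := fun t => ∫ s in (0:ℝ)..t, w s with hW
  have hWadd : ∀ x y : ℝ, 0 ≤ x → x ≤ y → y ≤ T →
      W x + (∫ s in x..y, w s) = W y := by
    intro x y hx hxy hyT
    exact intervalIntegral.integral_add_adjacent_intervals
      (hwII 0 x le_rfl hx (hxy.trans hyT)) (hwII x y hx hxy hyT)
  have hWnn : ∀ x y : ℝ, 0 ≤ x → x ≤ y → y ≤ T → 0 ≤ ∫ s in x..y, w s := by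
    intro x y hx hxy hyT
    exact intervalIntegral.integral_nonneg hxy
      (fun u hu => hw_nonneg u ⟨hx.trans hu.1, hu.2.trans hyT⟩)
  have hWmono : ∀ x y : ℝ, 0 ≤ x → x ≤ y → y ≤ T → W x ≤ W y := by
    intro x y hx hxy hyT
    have := hWadd x y hx hxy hyT
    have := hWnn x y hx hxy hyT
    linarith
  have hW0 : W 0 = 0 := intervalIntegral.integral_same
  have hWcont : ContinuousOn W (Icc 0 T) := by
    have := intervalIntegral.continuousOn_primitive_interval (a := 0) (b := T) (μ := volume)
      (f := w) (by rwa [uIcc_of_le hT])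
    rwa [uIcc_of_le hT] at this
  -- global bound on g
  obtain ⟨Cg, hCg⟩ := IsCompact.exists_bound_of_continuousOn isCompact_Icc hg_cont
  have hgle : ∀ t ∈ Icc (0:ℝ) T, g t ≤ Cg := fun t ht =>
    (le_abs_self _).trans (by simpa using hCg t ht)
  -- nonnegativity of ∫ wg
  have hwgnn : ∀ x y : ℝ, 0 ≤ x → x ≤ y → y ≤ T → 0 ≤ ∫ s in x..y, w s * g s := by
    intro x y hx hxy hyT
    refine intervalIntegral.integral_nonneg hxy (fun u hu => ?_)
    have hu' : u ∈ Icc (0:ℝ) T := ⟨hx.trans hu.1, hu.2.trans hyT⟩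
    exact mul_nonneg (hw_nonneg u hu') (hg_nonneg u hu')
  -- key induction
  have key : ∀ n : ℕ, ∀ t ∈ Icc (0:ℝ) T, W t ≤ n / 2 →
      a + (∫ s in (0:ℝ)..t, w s * g s) ≤ a * 2 ^ (n + 1) := by
    intro n
    induction n with
    | zero =>
      intro t ht hWt
      have hWt0 : W t = 0 := le_antisymm (by simpa using hWt) (hWnn 0 t le_rfl ht.1 ht.2)
      have hble : (∫ s in (0:ℝ)..t, w s * g s) ≤ ∫ s in (0:ℝ)..t, w s * Cg := by
        refine intervalIntegral.integral_mono_on ht.1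
          (hwgII 0 t le_rfl ht.1 ht.2)
          ((hwII 0 t le_rfl ht.1 ht.2).mul_const Cg) (fun x hx => ?_)
        have hx' : x ∈ Icc (0:ℝ) T := ⟨hx.1, hx.2.trans ht.2⟩
        exact mul_le_mul_of_nonneg_left (hgle x hx') (hw_nonneg x hx')
      have : (∫ s in (0:ℝ)..t, w s * Cg) = W t * Cg := by
        rw [hW]; exact intervalIntegral.integral_mul_const Cg w
      rw [this, hWt0, zero_mul] at hble
      have := hwgnn 0 t le_rfl ht.1 ht.2
      have h2 : a * 2 ^ (0 + 1) = 2 * a := by ring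
      rw [h2]; linarith
    | succ n ih =>
      intro t ht hWt
      by_cases hcase : W t ≤ n / 2
      · have := ih t ht hcase
        have h2 : a * 2 ^ (n + 1) ≤ a * 2 ^ (n + 1 + 1) := by
          have : (2:ℝ) ^ (n + 1) ≤ 2 ^ (n + 1 + 1) :=
            pow_le_pow_right₀ (by norm_num) (by omega)
          exact mul_le_mul_of_nonneg_left this ha.le
        linarith
      · push_neg at hcase
        -- find s with W s = n/2
        have hWt0 : (0:ℝ) ≤ W t := hWnn 0 t le_rfl ht.1 ht.2
        have hmem : (n / 2 : ℝ) ∈ Icc (W 0) (W t) := by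
          rw [hW0]; exact ⟨by positivity, hcase.le⟩
        obtain ⟨s, hs_mem, hWs⟩ := intermediate_value_Icc ht.1
          (hWcont.mono (Icc_subset_Icc le_rfl ht.2)) hmem
        have hs0 : 0 ≤ s := hs_mem.1
        have hst : s ≤ t := hs_mem.2
        have hsT : s ≤ T := hst.trans ht.2
        set c : ℝ := a + ∫ x in (0:ℝ)..s, w x * g x with hc
        have hcle : c ≤ a * 2 ^ (n + 1) := ih s ⟨hs0, hsT⟩ (le_of_eq hWs)
        have hcpos : 0 < c := by
          have := hwgnn 0 s le_rfl hs0 hsT; rw [hc]; linarith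
        -- max of g on [s, t]
        obtain ⟨r, hr_mem, hr_max⟩ := IsCompact.exists_isMaxOn isCompact_Icc
          (nonempty_Icc.mpr hst) (hg_cont.mono (Icc_subset_Icc hs0 ht.2))
        set S : ℝ := g r with hSdef
        have hrT : r ∈ Icc (0:ℝ) T := ⟨hs0.trans hr_mem.1, hr_mem.2.trans ht.2⟩
        have hS0 : 0 ≤ S := hg_nonneg r hrT
        -- segment bound
        have hseg : ∀ r' ∈ Icc s t, (∫ x in s..r', w x * g x) ≤ S * (1/2) := by
          intro r' hr'
          have hr'T : r' ≤ T := hr'.2.trans ht.2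
          have h1 : (∫ x in s..r', w x * g x) ≤ ∫ x in s..r', w x * S := by
            refine intervalIntegral.integral_mono_on hr'.1
              (hwgII s r' hs0 hr'.1 hr'T)
              ((hwII s r' hs0 hr'.1 hr'T).mul_const S) (fun x hx => ?_)
            have hx' : x ∈ Icc (0:ℝ) T := ⟨hs0.trans hx.1, (hx.2.trans hr'.2).trans ht.2⟩
            have hxst : x ∈ Icc s t := ⟨hx.1, hx.2.trans hr'.2⟩
            exact mul_le_mul_of_nonneg_left (hr_max hxst) (hw_nonneg x hx')
          have h2 : (∫ x in s..r', w x * S) = (∫ x in s..r', w x) * S :=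
            intervalIntegral.integral_mul_const S w
          have h3 : (∫ x in s..r', w x) ≤ 1/2 := by
            have hadd := hWadd s r' hs0 hr'.1 hr'T
            have hWr' : W r' ≤ W t := hWmono r' t (hs0.trans hr'.1) hr'.2 ht.2
            have : (n:ℝ) + 1 ≥ 0 := by positivity
            push_cast at hWt
            linarith [hWs]
          calc (∫ x in s..r', w x * g x) ≤ (∫ x in s..r', w x) * S := by rw [← h2]; exact h1
            _ ≤ (1/2) * S := by
                refine mul_le_mul_of_nonneg_right h3 hS0
            _ = S * (1/2) := by ring
        -- S ≤ 2c
        have hSle : S ≤ 2 * c := by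
          have h1 : g r ≤ a + ∫ x in (0:ℝ)..r, w x * g x := hineq r hrT
          have hsplit : (∫ x in (0:ℝ)..r, w x * g x)
              = (∫ x in (0:ℝ)..s, w x * g x) + ∫ x in s..r, w x * g x :=
            (intervalIntegral.integral_add_adjacent_intervals
              (hwgII 0 s le_rfl hs0 hsT) (hwgII s r hs0 hr_mem.1 hrT.2)).symm
          have h2 := hseg r hr_mem
          rw [hsplit] at h1
          rw [hSdef] at h2 ⊢
          rw [hc]
          linarith
        -- conclude
        have hsplit : (∫ x in (0:ℝ)..t, w x * g x)
            = (∫ x in (0:ℝ)..s, w x * g x) + ∫ x in s..t, w x * g x :=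
          (intervalIntegral.integral_add_adjacent_intervals
            (hwgII 0 s le_rfl hs0 hsT) (hwgII s t hs0 hst ht.2)).symm
        have hpow : a * 2 ^ (n + 1 + 1) = 2 * (a * 2 ^ (n + 1)) := by ring
        rw [hsplit, hpow]
        have : (∫ x in s..t, w x * g x) ≤ S * (1/2) := hseg t ⟨hst, le_rfl⟩
        rw [hc] at hcle hcpos
        linarith
  -- final conclusion
  intro t ht
  have hWt0 : (0:ℝ) ≤ W t := hWnn 0 t le_rfl ht.1 ht.2
  set n : ℕ := ⌈2 * W t⌉₊ with hn
  have hWtn : W t ≤ n / 2 := by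
    have := Nat.le_ceil (2 * W t)
    rw [← hn] at this
    linarith
  have h1 : g t ≤ a * 2 ^ (n + 1) := (hineq t ht).trans (key n t ht hWtn)
  have hnle : (n : ℝ) ≤ 2 * W t + 1 := by
    have := Nat.ceil_lt_add_one (by positivity : (0:ℝ) ≤ 2 * W t)
    rw [← hn] at this
    linarith
  have hexp : (2:ℝ) ^ (n + 1) = Real.exp ((n + 1 : ℕ) * Real.log 2) := by
    rw [Real.exp_nat_mul, Real.exp_log two_pos]
  have h2 : a * 2 ^ (n + 1) ≤ 4 * a * Real.exp (2 * Real.log 2 * W t) := by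
    rw [hexp]
    have hlog : (0:ℝ) ≤ Real.log 2 := Real.log_nonneg (by norm_num)
    have hle : ((n + 1 : ℕ) : ℝ) * Real.log 2 ≤ (2 * W t + 2) * Real.log 2 := by
      apply mul_le_mul_of_nonneg_right _ hlog
      push_cast; linarith
    have : Real.exp ((n + 1 : ℕ) * Real.log 2) ≤ Real.exp ((2 * W t + 2) * Real.log 2) :=
      Real.exp_le_exp.mpr hle
    have heq : Real.exp ((2 * W t + 2) * Real.log 2)
        = 4 * Real.exp (2 * Real.log 2 * W t) := by
      rw [show (2 * W t + 2) * Real.log 2 = 2 * Real.log 2 * W t + 2 * Real.log 2 by ring,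
        Real.exp_add, show (2:ℝ) * Real.log 2 = Real.log 2 + Real.log 2 by ring,
        Real.exp_add, Real.exp_log two_pos]
      ring
    calc a * Real.exp ((n + 1 : ℕ) * Real.log 2)
        ≤ a * Real.exp ((2 * W t + 2) * Real.log 2) := mul_le_mul_of_nonneg_left this ha.le
      _ = 4 * a * Real.exp (2 * Real.log 2 * W t) := by rw [heq]; ring
  have h3 : Real.exp (2 * Real.log 2 * W t) ≤ Real.exp (2 * Real.log 2 * W T) := by
    apply Real.exp_le_exp.mpr
    apply mul_le_mul_of_nonneg_left (hWmono t T ht.1 ht.2 le_rfl)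
    positivity
  calc g t ≤ a * 2 ^ (n + 1) := h1
    _ ≤ 4 * a * Real.exp (2 * Real.log 2 * W t) := h2
    _ ≤ 4 * a * Real.exp (2 * Real.log 2 * W T) := by
        apply mul_le_mul_of_nonneg_left h3; positivity

/-- Under global Lipschitz conditions on `b`, `σ` with constant `L`,
`|b 0| + |σ 0| ≤ L`, and pointwise invertibility of `σ`, there is `C₀ > 0` depending only
on `x₀`, `T`, `L` such that `‖φ‖_{H¹} ≤ C₀ e^{C₀ A(φ)}` for all `φ ∈ H¹_{x₀}(0,T;ℝ^d)`,
where `A(φ) = ½∫₀ᵀ |σ(φ(t))⁻¹ (φ'(t) − b(φ(t)))|² dt`. -/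
theorem H1_norm_bounded_by_A
    (d : ℕ) (hd : 1 ≤ d) (T : ℝ) (hT : 0 < T)
    (x₀ : EuclideanSpace ℝ (Fin d)) (L : NNReal) (hL : 0 < L) :
    ∃ C₀ : ℝ, 0 < C₀ ∧
      ∀ (b : EuclideanSpace ℝ (Fin d) → EuclideanSpace ℝ (Fin d))
        (σ : EuclideanSpace ℝ (Fin d) →
          (EuclideanSpace ℝ (Fin d) →L[ℝ] EuclideanSpace ℝ (Fin d))),
        LipschitzWith L b → LipschitzWith L σ → ‖b 0‖ + ‖σ 0‖ ≤ (L : ℝ) →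
        (∀ x, IsUnit (σ x)) →
        ∀ φ φ' : ℝ → EuclideanSpace ℝ (Fin d),
          IntegrableOn φ' (Icc 0 T) →
          IntegrableOn (fun t => ‖φ' t‖ ^ 2) (Icc 0 T) →
          (∀ t ∈ Icc (0 : ℝ) T, φ t = x₀ + ∫ s in (0 : ℝ)..t, φ' s) →
          Real.sqrt (∫ t in (0 : ℝ)..T, ‖φ' t‖ ^ 2) ≤
            C₀ * Real.exp (C₀ * ((1 / 2) * ∫ t in (0 : ℝ)..T,
              ‖(Ring.inverse (σ (φ t))) (φ' t - b (φ t))‖ ^ 2)) := by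
  haveI : NeZero d := ⟨by omega⟩
  haveI : Nontrivial (EuclideanSpace ℝ (Fin d)) := inferInstance
  have hLr : (0:ℝ) < (L:ℝ) := hL
  set Lr : ℝ := (L : ℝ) with hLrdef
  set lg : ℝ := Real.log 2 with hlg
  have hlg0 : 0 ≤ lg := Real.log_nonneg (by norm_num)
  set a₀ : ℝ := 1 + ‖x₀‖ with ha₀
  have ha₀pos : 0 < a₀ := by positivity
  set c : ℝ := 2 * lg * Lr + 1 with hc
  have hcpos : 0 < c := by positivity
  set C₁ : ℝ := Real.sqrt 2 * Lr * (4 * a₀ * Real.exp (3 * lg * Lr * T)) * (3 + T) with hC₁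
  have hC₁pos : 0 < C₁ := by
    apply mul_pos (mul_pos (mul_pos (Real.sqrt_pos.mpr two_pos) hLr) (by positivity))
    linarith
  refine ⟨C₁ + c, by linarith, ?_⟩
  intro b σ hb hσ hbσ hunit φ φ' hφ'int hφ'sq hφ
  -- abbreviations
  set u : ℝ → EuclideanSpace ℝ (Fin d) := fun t => (Ring.inverse (σ (φ t))) (φ' t - b (φ t)) with hu
  set J : ℝ := ∫ t in (0:ℝ)..T, ‖u t‖ ^ 2 with hJ
  set A : ℝ := (1/2) * J with hA
  set g : ℝ → ℝ := fun t => 1 + ‖φ t‖ with hg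
  set w : ℝ → ℝ := fun t => Lr * (1 + ‖u t‖) with hw
  -- the goal is about the same integral
  show Real.sqrt (∫ t in (0:ℝ)..T, ‖φ' t‖ ^ 2) ≤ (C₁ + c) * Real.exp ((C₁ + c) * A)
  -- linear growth bounds
  have hbx : ∀ x : EuclideanSpace ℝ (Fin d), ‖b x‖ ≤ Lr * (1 + ‖x‖) := by
    intro x
    have h1 : ‖b x - b 0‖ ≤ Lr * ‖x‖ := by
      have := hb.dist_le_mul x 0
      simpa [dist_eq_norm] using this
    have h2 : ‖b 0‖ ≤ Lr := le_trans (le_add_of_nonneg_right (norm_nonneg _)) hbσ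
    have h3 : ‖b x‖ ≤ ‖b x - b 0‖ + ‖b 0‖ := by
      simpa using norm_add_le (b x - b 0) (b 0)
    nlinarith [norm_nonneg x]
  have hσx : ∀ x : EuclideanSpace ℝ (Fin d), ‖σ x‖ ≤ Lr * (1 + ‖x‖) := by
    intro x
    have h1 : ‖σ x - σ 0‖ ≤ Lr * ‖x‖ := by
      have := hσ.dist_le_mul x 0
      simpa [dist_eq_norm] using this
    have h2 : ‖σ 0‖ ≤ Lr := le_trans (le_add_of_nonneg_left (norm_nonneg _)) hbσ
    have h3 : ‖σ x‖ ≤ ‖σ x - σ 0‖ + ‖σ 0‖ := by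
      simpa using norm_add_le (σ x - σ 0) (σ 0)
    nlinarith [norm_nonneg x]
  -- continuity of φ
  have hφcont : ContinuousOn φ (Icc 0 T) := by
    have hprim : ContinuousOn (fun t => x₀ + ∫ s in (0:ℝ)..t, φ' s) (Icc 0 T) := by
      apply continuousOn_const.add
      have := intervalIntegral.continuousOn_primitive_interval (a := 0) (b := T)
        (μ := volume) (f := φ') (by rwa [uIcc_of_le hT.le])
      rwa [uIcc_of_le hT.le] at this
    exact hprim.congr fun t ht => hφ t ht
  have hgcont : ContinuousOn g (Icc 0 T) :=
    continuousOn_const.add (continuous_norm.comp_continuousOn hφcont)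
  -- continuity of the inverse of σ ∘ φ
  have hσφcont : ContinuousOn (fun t => σ (φ t)) (Icc 0 T) :=
    hσ.continuous.comp_continuousOn hφcont
  have hinvcont : ContinuousOn (fun t => Ring.inverse (σ (φ t))) (Icc 0 T) := by
    intro t ht
    have h1 : ContinuousAt Ring.inverse (σ (φ t)) := by
      have := NormedRing.inverse_continuousAt (hunit (φ t)).unit
      rwa [IsUnit.unit_spec] at this
    exact ContinuousAt.comp_continuousWithinAt (g := Ring.inverse)
      (f := fun t => σ (φ t)) h1 (hσφcont t ht)
  -- bounds on compact
  obtain ⟨Mi₀, hMi₀⟩ := IsCompact.exists_bound_of_continuousOn isCompact_Icc hinvcont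
  set Mi : ℝ := max Mi₀ 0 with hMi
  have hMinv : ∀ t ∈ Icc (0:ℝ) T, ‖Ring.inverse (σ (φ t))‖ ≤ Mi :=
    fun t ht => le_trans (hMi₀ t ht) (le_max_left _ _)
  have hMi0 : 0 ≤ Mi := le_max_right _ _
  have hbφcont : ContinuousOn (fun t => b (φ t)) (Icc 0 T) :=
    hb.continuous.comp_continuousOn hφcont
  obtain ⟨Cb₀, hCb₀⟩ := IsCompact.exists_bound_of_continuousOn isCompact_Icc hbφcont
  set Cb : ℝ := max Cb₀ 0 with hCb
  have hCbφ : ∀ t ∈ Icc (0:ℝ) T, ‖b (φ t)‖ ≤ Cb :=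
    fun t ht => le_trans (hCb₀ t ht) (le_max_left _ _)
  have hCb0 : 0 ≤ Cb := le_max_right _ _
  obtain ⟨Cφ₀, hCφ₀⟩ := IsCompact.exists_bound_of_continuousOn isCompact_Icc hφcont
  set Cφ : ℝ := max Cφ₀ 0 with hCφ
  have hCφφ : ∀ t ∈ Icc (0:ℝ) T, ‖φ t‖ ≤ Cφ :=
    fun t ht => le_trans (hCφ₀ t ht) (le_max_left _ _)
  -- measurability of u
  have hφ'm : AEStronglyMeasurable φ' (volume.restrict (Icc 0 T)) :=
    hφ'int.aestronglyMeasurable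
  have hvm : AEStronglyMeasurable (fun t => φ' t - b (φ t)) (volume.restrict (Icc 0 T)) :=
    hφ'm.sub (hbφcont.aestronglyMeasurable measurableSet_Icc)
  have hinvm : AEStronglyMeasurable (fun t => Ring.inverse (σ (φ t)))
      (volume.restrict (Icc 0 T)) :=
    hinvcont.aestronglyMeasurable measurableSet_Icc
  have hum : AEStronglyMeasurable u (volume.restrict (Icc 0 T)) := by
    have : Continuous fun p : (EuclideanSpace ℝ (Fin d) →L[ℝ] EuclideanSpace ℝ (Fin d)) × EuclideanSpace ℝ (Fin d) => p.1 p.2 :=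
      isBoundedBilinearMap_apply.continuous
    exact this.comp_aestronglyMeasurable (hinvm.prodMk hvm)
  -- pointwise bound on u
  have hub : ∀ t ∈ Icc (0:ℝ) T, ‖u t‖ ≤ Mi * (‖φ' t‖ + Cb) := by
    intro t ht
    have h1 : ‖u t‖ ≤ ‖Ring.inverse (σ (φ t))‖ * ‖φ' t - b (φ t)‖ :=
      ContinuousLinearMap.le_opNorm _ _
    have h2 : ‖φ' t - b (φ t)‖ ≤ ‖φ' t‖ + Cb :=
      (norm_sub_le _ _).trans (by linarith [hCbφ t ht])
    nlinarith [hMinv t ht, norm_nonneg (φ' t - b (φ t)), norm_nonneg (u t),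
      norm_nonneg (φ' t), norm_nonneg (Ring.inverse (σ (φ t)))]
  -- integrability of ‖u‖², ‖u‖, w, w*g
  have husqm : AEStronglyMeasurable (fun t => ‖u t‖ ^ 2) (volume.restrict (Icc 0 T)) :=
    ((continuous_pow 2).comp continuous_norm).comp_aestronglyMeasurable hum
  have hconst_int : ∀ r : ℝ, IntegrableOn (fun _ : ℝ => r) (Icc 0 T) := fun r =>
    (integrableOn_const_iff).mpr (Or.inr measure_Icc_lt_top)
  have husq_int : IntegrableOn (fun t => ‖u t‖ ^ 2) (Icc 0 T) := by
    have hdom : IntegrableOn (fun t => 2 * Mi ^ 2 * (‖φ' t‖ ^ 2 + Cb ^ 2)) (Icc 0 T) :=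
      (hφ'sq.add (hconst_int (Cb ^ 2))).const_mul _
    refine Integrable.mono' hdom husqm ?_
    refine (ae_restrict_iff' measurableSet_Icc).mpr (ae_of_all _ fun t ht => ?_)
    have h1 := hub t ht
    have h2 : ‖(‖u t‖ ^ 2)‖ = ‖u t‖ ^ 2 := by
      rw [Real.norm_eq_abs, abs_of_nonneg (by positivity)]
    rw [h2]
    have h1sq : ‖u t‖ ^ 2 ≤ (Mi * (‖φ' t‖ + Cb)) ^ 2 :=
      pow_le_pow_left₀ (norm_nonneg _) h1 2
    nlinarith [h1sq, sq_nonneg (‖φ' t‖ - Cb), sq_nonneg Mi, hMi0, hCb0]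
  have hunorm_int : IntegrableOn (fun t => ‖u t‖) (Icc 0 T) := by
    have hdom : IntegrableOn (fun t => Mi * (‖φ' t‖ + Cb)) (Icc 0 T) :=
      (hφ'int.norm.add (hconst_int Cb)).const_mul _
    refine Integrable.mono' hdom (continuous_norm.comp_aestronglyMeasurable hum) ?_
    refine (ae_restrict_iff' measurableSet_Icc).mpr (ae_of_all _ fun t ht => ?_)
    rw [norm_norm]
    exact hub t ht
  have hw_int : IntegrableOn w (Icc 0 T) :=
    ((hconst_int 1).add hunorm_int).const_mul Lr
  have hw_nonneg : ∀ t ∈ Icc (0:ℝ) T, 0 ≤ w t := by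
    intro t _; rw [hw]; positivity
  have hg_nonneg : ∀ t ∈ Icc (0:ℝ) T, 0 ≤ g t := by
    intro t _; rw [hg]; positivity
  have hgleCφ : ∀ t ∈ Icc (0:ℝ) T, g t ≤ 1 + Cφ := by
    intro t ht; rw [hg]; simp only; linarith [hCφφ t ht]
  have hwg_int : IntegrableOn (fun t => w t * g t) (Icc 0 T) := by
    have hdom : IntegrableOn (fun t => (1 + Cφ) * w t) (Icc 0 T) := hw_int.const_mul _
    refine Integrable.mono' hdom
      (hw_int.aestronglyMeasurable.mul (hgcont.aestronglyMeasurable measurableSet_Icc)) ?_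
    refine (ae_restrict_iff' measurableSet_Icc).mpr (ae_of_all _ fun t ht => ?_)
    have h1 := hw_nonneg t ht
    have h2 := hg_nonneg t ht
    have h3 := hgleCφ t ht
    rw [Real.norm_eq_abs, abs_of_nonneg (mul_nonneg h1 h2)]
    nlinarith
  -- key pointwise identity and bound
  have hkey : ∀ t : ℝ, (σ (φ t)) (u t) = φ' t - b (φ t) := by
    intro t
    have h1 : σ (φ t) * Ring.inverse (σ (φ t)) = 1 :=
      Ring.mul_inverse_cancel _ (hunit (φ t))
    calc (σ (φ t)) (u t) = (σ (φ t) * Ring.inverse (σ (φ t))) (φ' t - b (φ t)) := by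
          rw [ContinuousLinearMap.mul_apply]
      _ = φ' t - b (φ t) := by rw [h1, ContinuousLinearMap.one_apply]
  have hφ'le : ∀ t ∈ Icc (0:ℝ) T, ‖φ' t‖ ≤ w t * g t := by
    intro t _
    have h0 : φ' t = (φ' t - b (φ t)) + b (φ t) := by abel
    have h1 : ‖φ' t‖ ≤ ‖φ' t - b (φ t)‖ + ‖b (φ t)‖ := by
      calc ‖φ' t‖ = ‖(φ' t - b (φ t)) + b (φ t)‖ := by rw [← h0]
        _ ≤ _ := norm_add_le _ _
    have h2 : ‖φ' t - b (φ t)‖ ≤ ‖σ (φ t)‖ * ‖u t‖ := by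
      rw [← hkey t]; exact ContinuousLinearMap.le_opNorm _ _
    have h3 := hσx (φ t)
    have h4 := hbx (φ t)
    have h5 : w t * g t = Lr * (1 + ‖u t‖) * (1 + ‖φ t‖) := by rw [hw, hg]
    rw [h5]
    nlinarith [norm_nonneg (u t), norm_nonneg (φ t), norm_nonneg (σ (φ t))]
  -- integral inequality for g
  have hwgII : ∀ t : ℝ, t ∈ Icc (0:ℝ) T →
      IntervalIntegrable (fun s => w s * g s) volume 0 t := by
    intro t ht
    rw [intervalIntegrable_iff_integrableOn_Ioc_of_le ht.1]
    exact hwg_int.mono_set (Ioc_subset_Icc_self.trans (Icc_subset_Icc le_rfl ht.2))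
  have hgineq : ∀ t ∈ Icc (0:ℝ) T, g t ≤ a₀ + ∫ s in (0:ℝ)..t, w s * g s := by
    intro t ht
    have h1 : ‖φ t‖ ≤ ‖x₀‖ + ‖∫ s in (0:ℝ)..t, φ' s‖ := by
      rw [hφ t ht]; exact norm_add_le _ _
    have h2 : ‖∫ s in (0:ℝ)..t, φ' s‖ ≤ ∫ s in (0:ℝ)..t, ‖φ' s‖ :=
      intervalIntegral.norm_integral_le_integral_norm ht.1
    have hφ'II : IntervalIntegrable (fun s => ‖φ' s‖) volume 0 t := by
      rw [intervalIntegrable_iff_integrableOn_Ioc_of_le ht.1]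
      have hn : IntegrableOn (fun s => ‖φ' s‖) (Icc 0 T) := hφ'int.norm
      exact hn.mono_set (Ioc_subset_Icc_self.trans (Icc_subset_Icc le_rfl ht.2))
    have h3 : (∫ s in (0:ℝ)..t, ‖φ' s‖) ≤ ∫ s in (0:ℝ)..t, w s * g s := by
      refine intervalIntegral.integral_mono_on ht.1 hφ'II (hwgII t ht) (fun x hx => ?_)
      exact hφ'le x ⟨hx.1, hx.2.trans ht.2⟩
    have : g t = 1 + ‖φ t‖ := by rw [hg]
    rw [this, ha₀]
    linarith
  -- Gronwall
  have hB := gronwall_boot T a₀ hT.le ha₀pos g w hgcont hg_nonneg hw_nonneg hw_int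
    hwg_int hgineq
  set I : ℝ := ∫ s in (0:ℝ)..T, w s with hI
  set B : ℝ := 4 * a₀ * Real.exp (2 * lg * I) with hBdef
  have hBpos : 0 < B := by positivity
  have hgB : ∀ t ∈ Icc (0:ℝ) T, g t ≤ B := fun t ht => hB t ht
  -- bound on I
  have hJnn : 0 ≤ J := by
    rw [hJ]
    exact intervalIntegral.integral_nonneg hT.le (fun x _ => by positivity)
  have hAnn : 0 ≤ A := by rw [hA]; linarith
  have husqII : IntervalIntegrable (fun t => ‖u t‖ ^ 2) volume 0 T := by
    rw [intervalIntegrable_iff_integrableOn_Ioc_of_le hT.le]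
    exact husq_int.mono_set Ioc_subset_Icc_self
  have hwII : IntervalIntegrable w volume 0 T := by
    rw [intervalIntegrable_iff_integrableOn_Ioc_of_le hT.le]
    exact hw_int.mono_set Ioc_subset_Icc_self
  have hIle : I ≤ (3/2) * Lr * T + Lr * A := by
    have hptw : ∀ x ∈ Icc (0:ℝ) T, w x ≤ (3/2) * Lr + (Lr/2) * ‖u x‖ ^ 2 := by
      intro x _
      have : w x = Lr * (1 + ‖u x‖) := by rw [hw]
      rw [this]
      nlinarith [sq_nonneg (1 - ‖u x‖), norm_nonneg (u x), hLr.le]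
    have hdomII : IntervalIntegrable (fun x => (3/2) * Lr + (Lr/2) * ‖u x‖ ^ 2) volume 0 T :=
      intervalIntegrable_const.add (husqII.const_mul _)
    have h1 : I ≤ ∫ x in (0:ℝ)..T, ((3/2) * Lr + (Lr/2) * ‖u x‖ ^ 2) := by
      rw [hI]
      exact intervalIntegral.integral_mono_on hT.le hwII hdomII hptw
    have h2 : (∫ x in (0:ℝ)..T, ((3/2) * Lr + (Lr/2) * ‖u x‖ ^ 2))
        = (3/2) * Lr * T + (Lr/2) * J := by
      rw [intervalIntegral.integral_add intervalIntegrable_const (husqII.const_mul _),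
        intervalIntegral.integral_const, intervalIntegral.integral_const_mul, hJ]
      simp only [smul_eq_mul, sub_zero]
      ring
    rw [h2] at h1
    rw [hA]
    linarith
  -- final integral bound
  have hφ'sqII : IntervalIntegrable (fun t => ‖φ' t‖ ^ 2) volume 0 T := by
    rw [intervalIntegrable_iff_integrableOn_Ioc_of_le hT.le]
    exact hφ'sq.mono_set Ioc_subset_Icc_self
  have hsqle : (∫ t in (0:ℝ)..T, ‖φ' t‖ ^ 2) ≤ 2 * Lr^2 * B^2 * (T + J) := by
    have hptw : ∀ t ∈ Icc (0:ℝ) T, ‖φ' t‖ ^ 2 ≤ 2 * Lr^2 * B^2 * (1 + ‖u t‖ ^ 2) := by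
      intro t ht
      have h1 := hφ'le t ht
      have h2 := hgB t ht
      have h3 := hg_nonneg t ht
      have h4 : w t = Lr * (1 + ‖u t‖) := by rw [hw]
      have h5 : ‖φ' t‖ ≤ Lr * (1 + ‖u t‖) * B := by
        calc ‖φ' t‖ ≤ w t * g t := h1
          _ ≤ w t * B := by
              apply mul_le_mul_of_nonneg_left h2
              rw [h4]; positivity
          _ = Lr * (1 + ‖u t‖) * B := by rw [h4]
      nlinarith [norm_nonneg (φ' t), norm_nonneg (u t), sq_nonneg (1 - ‖u t‖),
        hLr.le, hBpos.le, sq_nonneg (Lr * B), mul_nonneg hLr.le hBpos.le]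
    have hdomII : IntervalIntegrable (fun t => 2 * Lr^2 * B^2 * (1 + ‖u t‖ ^ 2)) volume 0 T :=
      (intervalIntegrable_const.add husqII).const_mul _
    have h1 := intervalIntegral.integral_mono_on hT.le hφ'sqII hdomII hptw
    have h2 : (∫ t in (0:ℝ)..T, 2 * Lr^2 * B^2 * (1 + ‖u t‖ ^ 2))
        = 2 * Lr^2 * B^2 * (T + J) := by
      rw [intervalIntegral.integral_const_mul,
        intervalIntegral.integral_add intervalIntegrable_const husqII,
        intervalIntegral.integral_const, hJ]
      simp only [smul_eq_mul, sub_zero]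
      ring
    rw [h2] at h1
    exact h1
  -- take square roots
  set D : ℝ := Real.sqrt 2 * Lr * B * (1 + T + J) with hD
  have hD0 : 0 ≤ D := by positivity
  have hsqrt : Real.sqrt (∫ t in (0:ℝ)..T, ‖φ' t‖ ^ 2) ≤ D := by
    have h1 : (∫ t in (0:ℝ)..T, ‖φ' t‖ ^ 2) ≤ D ^ 2 := by
      have hDsq : D ^ 2 = 2 * Lr^2 * B^2 * (1 + T + J)^2 := by
        have h2 : Real.sqrt 2 ^ 2 = 2 := Real.sq_sqrt (by norm_num)
        rw [hD, mul_pow, mul_pow, mul_pow, h2]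
      rw [hDsq]
      have hTJ : T + J ≤ (1 + T + J)^2 := by nlinarith [hJnn, hT.le, sq_nonneg (T + J)]
      have hmono : 2 * Lr^2 * B^2 * (T + J) ≤ 2 * Lr^2 * B^2 * (1 + T + J)^2 :=
        mul_le_mul_of_nonneg_left hTJ (by positivity)
      linarith [hsqle]
    calc Real.sqrt (∫ t in (0:ℝ)..T, ‖φ' t‖ ^ 2) ≤ Real.sqrt (D ^ 2) :=
        Real.sqrt_le_sqrt h1
      _ = D := by rw [Real.sqrt_sq hD0]
  -- assemble
  have hBle : B ≤ 4 * a₀ * Real.exp (3 * lg * Lr * T) * Real.exp ((2 * lg * Lr) * A) := by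
    rw [hBdef]
    have h1 : 2 * lg * I ≤ 2 * lg * ((3/2) * Lr * T + Lr * A) := by
      apply mul_le_mul_of_nonneg_left hIle
      positivity
    have h2 : 2 * lg * ((3/2) * Lr * T + Lr * A) = 3 * lg * Lr * T + (2 * lg * Lr) * A := by
      ring
    calc 4 * a₀ * Real.exp (2 * lg * I)
        ≤ 4 * a₀ * Real.exp (3 * lg * Lr * T + (2 * lg * Lr) * A) := by
          apply mul_le_mul_of_nonneg_left _ (by positivity)
          exact Real.exp_le_exp.mpr (by rw [← h2]; exact h1)
      _ = 4 * a₀ * Real.exp (3 * lg * Lr * T) * Real.exp ((2 * lg * Lr) * A) := by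
          rw [Real.exp_add]; ring
  have hJ2A : J = 2 * A := by rw [hA]; ring
  have h1TJ : 1 + T + J ≤ (3 + T) * Real.exp A := by
    have hexp : A + 1 ≤ Real.exp A := Real.add_one_le_exp A
    nlinarith [hAnn, hT.le, Real.exp_pos A]
  have hDle : D ≤ C₁ * Real.exp (c * A) := by
    rw [hD, hC₁, hc]
    have hs2 : (0:ℝ) < Real.sqrt 2 := Real.sqrt_pos.mpr two_pos
    calc Real.sqrt 2 * Lr * B * (1 + T + J)
        ≤ Real.sqrt 2 * Lr * (4 * a₀ * Real.exp (3 * lg * Lr * T) * Real.exp ((2 * lg * Lr) * A))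
            * ((3 + T) * Real.exp A) := by
          apply mul_le_mul
          · exact mul_le_mul_of_nonneg_left hBle (by positivity)
          · exact h1TJ
          · linarith
          · positivity
      _ = Real.sqrt 2 * Lr * (4 * a₀ * Real.exp (3 * lg * Lr * T)) * (3 + T)
            * Real.exp ((2 * lg * Lr + 1) * A) := by
          rw [show (2 * lg * Lr + 1) * A = (2 * lg * Lr) * A + A by ring, Real.exp_add]
          ring
  calc Real.sqrt (∫ t in (0:ℝ)..T, ‖φ' t‖ ^ 2) ≤ D := hsqrt
    _ ≤ C₁ * Real.exp (c * A) := hDle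
    _ ≤ (C₁ + c) * Real.exp ((C₁ + c) * A) := by
        apply mul_le_mul (by linarith)
        · apply Real.exp_le_exp.mpr
          apply mul_le_mul_of_nonneg_right (by linarith) hAnn
        · positivity
        · linarith
end

section
/- Let b : ℝ^d → ℝ^d and σ : ℝ^d → ℝ^{d×d} be globally Lipschitz with constant L and satisfy |b(0)| + |σ(0)| ≤ L, and suppose σ(x) is invertible for every x ∈ ℝ^d. Fix θ ∈ [0,1], T > 0, and for N ∈ ℕ⁺ set h = T/N, t_n = nh; for t ∈ [0,T] let t̂ be the largest grid point t_n ≤ t and ť the smallest grid point t_n ≥ t. Define B_h(φ) = (1/2)∫₀^T |σ(φ(t̂))^{-1}(φ'(t) − b((1−θ)φ(t̂) + θφ(ť)))|² dt for φ ∈ H¹_{x₀}(0,T;ℝ^d). Then there exists a constant C₀ > 0, depending only on x₀, T and L (in particular independent of h), such that ‖φ‖_{H¹} ≤ C₀ e^{C₀ B_h(φ)} for every φ ∈ H¹_{x₀}(0,T;ℝ^d) and every h ∈ (0, 1/(2L)]. -/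
open MeasureTheory Set
set_option maxHeartbeats 4000000

/-- Largest grid point `t_n = n h` below `t`. -/
noncomputable def gridHat (h t : ℝ) : ℝ := h * ⌊t / h⌋

/-- Smallest grid point `t_n = n h` above `t`. -/
noncomputable def gridCheck (h t : ℝ) : ℝ := h * ⌈t / h⌉

private lemma aux_II {E : Type*} [NormedAddCommGroup E] {T a c : ℝ} {f : ℝ → E}
    (hf : IntegrableOn f (Icc 0 T)) (ha : 0 ≤ a) (hac : a ≤ c) (hc : c ≤ T) :
    IntervalIntegrable f volume a c := by
  rw [intervalIntegrable_iff_integrableOn_Ioc_of_le hac]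
  exact hf.mono_set (fun x hx => ⟨ha.trans hx.1.le, hx.2.trans hc⟩)

private lemma aux_sqrt_add (x y : ℝ) (hx : 0 ≤ x) (hy : 0 ≤ y) :
    Real.sqrt (x + y) ≤ Real.sqrt x + Real.sqrt y := by
  rw [show x + y = x + y from rfl, ← Real.sqrt_sq (by positivity : (0:ℝ) ≤ Real.sqrt x + Real.sqrt y)]
  apply Real.sqrt_le_sqrt
  have hx2 := Real.sq_sqrt hx
  have hy2 := Real.sq_sqrt hy
  nlinarith [Real.sqrt_nonneg x, Real.sqrt_nonneg y]

/-- For the discrete functional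
`B_h(φ) = ½∫₀ᵀ |σ(φ(t̂))⁻¹ (φ'(t) − b((1−θ)φ(t̂) + θφ(ť)))|² dt` associated with the
stochastic θ-method on the uniform grid of step `h = T/N`, there is `C₀ > 0` depending
only on `x₀`, `T`, `L` (in particular independent of `h`) such that
`‖φ‖_{H¹} ≤ C₀ e^{C₀ B_h(φ)}` for all `φ ∈ H¹_{x₀}(0,T;ℝ^d)` and all `h ∈ (0, 1/(2L)]`. -/
theorem H1_norm_bounded_by_Bh
    (d : ℕ) (hd : 1 ≤ d) (T : ℝ) (hT : 0 < T)
    (x₀ : EuclideanSpace ℝ (Fin d)) (L : NNReal) (hL : 0 < L) :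
    ∃ C₀ : ℝ, 0 < C₀ ∧
      ∀ θ : ℝ, 0 ≤ θ → θ ≤ 1 →
      ∀ (b : EuclideanSpace ℝ (Fin d) → EuclideanSpace ℝ (Fin d))
        (σ : EuclideanSpace ℝ (Fin d) →
          (EuclideanSpace ℝ (Fin d) →L[ℝ] EuclideanSpace ℝ (Fin d))),
        LipschitzWith L b → LipschitzWith L σ → ‖b 0‖ + ‖σ 0‖ ≤ (L : ℝ) →
        (∀ x, IsUnit (σ x)) →
        ∀ N : ℕ, 0 < N → T / (N : ℝ) ≤ 1 / (2 * (L : ℝ)) →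
        ∀ φ φ' : ℝ → EuclideanSpace ℝ (Fin d),
          IntegrableOn φ' (Icc 0 T) →
          IntegrableOn (fun t => ‖φ' t‖ ^ 2) (Icc 0 T) →
          (∀ t ∈ Icc (0 : ℝ) T, φ t = x₀ + ∫ s in (0 : ℝ)..t, φ' s) →
          Real.sqrt (∫ t in (0 : ℝ)..T, ‖φ' t‖ ^ 2) ≤
            C₀ * Real.exp (C₀ * ((1 / 2) * ∫ t in (0 : ℝ)..T,
              ‖(Ring.inverse (σ (φ (gridHat (T / (N : ℝ)) t))))
                (φ' t - b ((1 - θ) • φ (gridHat (T / (N : ℝ)) t)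
                  + θ • φ (gridCheck (T / (N : ℝ)) t)))‖ ^ 2)) := by
  classical
  set C₁ : ℝ := (L : ℝ) * (1 + ‖x₀‖) * Real.exp ((5 / 2) * L * T) * (2 + Real.sqrt (2 * T))
    with hC₁def
  have hLpos : (0:ℝ) < L := hL
  have hC₁pos : 0 < C₁ := by
    have h1 : (0:ℝ) < 1 + ‖x₀‖ := by positivity
    have h2 : (0:ℝ) < 2 + Real.sqrt (2*T) := by positivity
    positivity
  refine ⟨C₁ + (L : ℝ) + 1, by positivity, ?_⟩
  intro θ hθ0 hθ1 b σ hb hσ hbσ0 hσu N hN hNh φ φ' hφ'int hφ'sq hφrep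
  set h : ℝ := T / (N : ℝ) with hhdef
  have hNpos : (0:ℝ) < N := by exact_mod_cast hN
  have hh : 0 < h := div_pos hT hNpos
  have hNT : (N : ℝ) * h = T := by rw [hhdef]; field_simp [hNpos.ne']
  have hLh : (L : ℝ) * h ≤ 1 / 2 := by
    have := mul_le_mul_of_nonneg_left hNh hLpos.le
    calc (L:ℝ) * h ≤ (L:ℝ) * (1 / (2 * L)) := this
      _ = 1 / 2 := by field_simp
  -- grid facts
  have hght : ∀ t, 0 ≤ t → 0 ≤ gridHat h t ∧ gridHat h t ≤ t := by
    intro t ht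
    constructor
    · exact mul_nonneg hh.le (by positivity)
    · unfold gridHat; rw [mul_comm]; exact (le_div_iff₀ hh).mp (Int.floor_le _)
  have hgct : ∀ t, 0 ≤ t → t ≤ gridCheck h t := by
    intro t ht
    unfold gridCheck; rw [mul_comm]; exact (div_le_iff₀ hh).mp (Int.le_ceil _)
  have hgcT : ∀ t, t ≤ T → gridCheck h t ≤ T := by
    intro t ht
    unfold gridCheck
    have h1 : t / h ≤ (N:ℝ) := by rw [div_le_iff₀ hh]; nlinarith
    have h2 : ⌈t/h⌉ ≤ (N:ℤ) := Int.ceil_le.mpr (by exact_mod_cast h1)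
    calc h * ⌈t/h⌉ ≤ h * (N:ℝ) := by
          apply mul_le_mul_of_nonneg_left _ hh.le; exact_mod_cast h2
      _ = T := by linarith [hNT]
  have hgh_mem : ∀ t ∈ Icc (0:ℝ) T, gridHat h t ∈ Icc (0:ℝ) T :=
    fun t ht => ⟨(hght t ht.1).1, (hght t ht.1).2.trans ht.2⟩
  have hgc_mem : ∀ t ∈ Icc (0:ℝ) T, gridCheck h t ∈ Icc (0:ℝ) T :=
    fun t ht => ⟨ht.1.trans (hgct t ht.1), hgcT t ht.2⟩
  -- linear growth of b and σ
  have hbg : ∀ x : EuclideanSpace ℝ (Fin d), ‖b x‖ ≤ (L:ℝ) * (1 + ‖x‖) := by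
    intro x
    have h1 : dist (b x) (b 0) ≤ (L:ℝ) * dist x 0 := hb.dist_le_mul x 0
    rw [dist_eq_norm, dist_eq_norm, sub_zero] at h1
    have h2 : ‖b x‖ ≤ ‖b x - b 0‖ + ‖b 0‖ := by
      calc ‖b x‖ = ‖(b x - b 0) + b 0‖ := by rw [sub_add_cancel]
        _ ≤ _ := norm_add_le _ _
    have h3 : ‖b 0‖ ≤ (L:ℝ) := le_trans (le_add_of_nonneg_right (norm_nonneg _)) hbσ0
    nlinarith [norm_nonneg (b x)]
  have hσg : ∀ x : EuclideanSpace ℝ (Fin d), ‖σ x‖ ≤ (L:ℝ) * (1 + ‖x‖) := by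
    intro x
    have h1 : dist (σ x) (σ 0) ≤ (L:ℝ) * dist x 0 := hσ.dist_le_mul x 0
    rw [dist_eq_norm, dist_eq_norm, sub_zero] at h1
    have h2 : ‖σ x‖ ≤ ‖σ x - σ 0‖ + ‖σ 0‖ := by
      calc ‖σ x‖ = ‖(σ x - σ 0) + σ 0‖ := by rw [sub_add_cancel]
        _ ≤ _ := norm_add_le _ _
    have h3 : ‖σ 0‖ ≤ (L:ℝ) := le_trans (le_add_of_nonneg_left (norm_nonneg _)) hbσ0
    nlinarith [norm_nonneg (σ x)]
  -- continuity of φ on [0,T]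
  have hφc : ContinuousOn φ (Icc 0 T) := by
    have hc : ContinuousOn (fun x => ∫ t in Ioc 0 x, φ' t) (Icc 0 T) :=
      intervalIntegral.continuousOn_primitive hφ'int
    have : ContinuousOn (fun x => x₀ + ∫ t in Ioc 0 x, φ' t) (Icc 0 T) :=
      continuousOn_const.add hc
    apply this.congr
    intro t ht
    simp only []
    rw [hφrep t ht, intervalIntegral.integral_of_le ht.1]
  -- the clamped version of φ
  set Φ : ℝ → EuclideanSpace ℝ (Fin d) := fun s => φ (max 0 (min s T)) with hΦdef
  have hclamp : ∀ s, max 0 (min s T) ∈ Icc (0:ℝ) T :=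
    fun s => ⟨le_max_left _ _, max_le hT.le (min_le_right _ _)⟩
  have hΦc : Continuous Φ := by
    apply hφc.comp_continuous
    · exact continuous_const.max (continuous_id.min continuous_const)
    · exact hclamp
  have hΦeq : ∀ s ∈ Icc (0:ℝ) T, Φ s = φ s := by
    intro s hs
    simp only [hΦdef]
    rw [min_eq_left hs.2, max_eq_right hs.1]
  -- bound on inverse on the compact range
  have hinvc : Continuous fun s => Ring.inverse (σ (Φ s)) := by
    rw [continuous_iff_continuousAt]
    intro s
    have h1 : ContinuousAt Ring.inverse (σ (Φ s)) := by
      have := NormedRing.inverse_continuousAt (hσu (Φ s)).unit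
      rwa [IsUnit.unit_spec] at this
    have h2 : ContinuousAt (fun s => σ (Φ s)) s := (hσ.continuous.comp hΦc).continuousAt
    show ContinuousAt (Ring.inverse ∘ fun s => σ (Φ s)) s
    exact ContinuousAt.comp h1 h2
  obtain ⟨K, hK⟩ : ∃ K : ℝ, ∀ s ∈ Icc (0:ℝ) T, ‖Ring.inverse (σ (Φ s))‖ ≤ K :=
    isCompact_Icc.exists_bound_of_continuousOn hinvc.continuousOn
  have hK0 : 0 ≤ K := le_trans (norm_nonneg _) (hK 0 ⟨le_refl _, hT.le⟩)
  -- the primitive F of ‖φ'‖ and the sup bound Mtot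
  set F : ℝ → ℝ := fun r => ∫ s in (0:ℝ)..r, ‖φ' s‖ with hFdef
  have hφn : IntegrableOn (fun s => ‖φ' s‖) (Icc 0 T) volume := hφ'int.norm
  have hFmono : ∀ t₁ t₂ : ℝ, 0 ≤ t₁ → t₁ ≤ t₂ → t₂ ≤ T → F t₁ ≤ F t₂ := by
    intro t₁ t₂ h0 h12 h2T
    apply intervalIntegral.integral_mono_interval (le_refl (0:ℝ)) h0 h12
    · filter_upwards with x using norm_nonneg _
    · exact aux_II hφn le_rfl (h0.trans h12) h2T
  have hF0 : ∀ t, 0 ≤ t → 0 ≤ F t := by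
    intro t ht
    apply intervalIntegral.integral_nonneg ht
    intro x _; exact norm_nonneg _
  set Mtot : ℝ := ‖x₀‖ + F T with hMdef
  have hφbnd : ∀ t ∈ Icc (0:ℝ) T, ‖φ t‖ ≤ ‖x₀‖ + F t := by
    intro t ht
    rw [hφrep t ht]
    calc ‖x₀ + ∫ s in (0:ℝ)..t, φ' s‖ ≤ ‖x₀‖ + ‖∫ s in (0:ℝ)..t, φ' s‖ := norm_add_le _ _
      _ ≤ ‖x₀‖ + F t := by
        gcongr
        exact intervalIntegral.norm_integral_le_integral_norm ht.1
  have hφM : ∀ t ∈ Icc (0:ℝ) T, ‖φ t‖ ≤ Mtot := by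
    intro t ht
    refine le_trans (hφbnd t ht) ?_
    rw [hMdef]
    linarith [hFmono t T ht.1 ht.2 le_rfl]
  -- the auxiliary function ψ
  set ψ : ℝ → EuclideanSpace ℝ (Fin d) := fun t =>
    Ring.inverse (σ (φ (gridHat h t)))
      (φ' t - b ((1 - θ) • φ (gridHat h t) + θ • φ (gridCheck h t))) with hψdef
  have hid : ∀ t, φ' t = σ (φ (gridHat h t)) (ψ t)
      + b ((1 - θ) • φ (gridHat h t) + θ • φ (gridCheck h t)) := by
    intro t
    have hcc := Ring.mul_inverse_cancel _ (hσu (φ (gridHat h t)))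
    have : σ (φ (gridHat h t)) (ψ t)
        = φ' t - b ((1 - θ) • φ (gridHat h t) + θ • φ (gridCheck h t)) := by
      show (σ (φ (gridHat h t)) * Ring.inverse (σ (φ (gridHat h t)))) _ = _
      rw [hcc]; rfl
    rw [this]; abel
  -- convex combination bound
  have hxθ : ∀ t (M : ℝ), ‖φ (gridHat h t)‖ ≤ M → ‖φ (gridCheck h t)‖ ≤ M →
      ‖(1 - θ) • φ (gridHat h t) + θ • φ (gridCheck h t)‖ ≤ M := by
    intro t M h1 h2
    calc ‖(1 - θ) • φ (gridHat h t) + θ • φ (gridCheck h t)‖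
        ≤ ‖(1 - θ) • φ (gridHat h t)‖ + ‖θ • φ (gridCheck h t)‖ := norm_add_le _ _
      _ = (1 - θ) * ‖φ (gridHat h t)‖ + θ * ‖φ (gridCheck h t)‖ := by
          rw [norm_smul, norm_smul, Real.norm_eq_abs, Real.norm_eq_abs,
            abs_of_nonneg (by linarith), abs_of_nonneg hθ0]
      _ ≤ (1 - θ) * M + θ * M := by
          have h0 : 0 ≤ ‖φ (gridHat h t)‖ := norm_nonneg _
          nlinarith
      _ = M := by ring
  -- key pointwise estimate
  have hkey : ∀ t (M M' : ℝ), ‖φ (gridHat h t)‖ ≤ M →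
      ‖(1 - θ) • φ (gridHat h t) + θ • φ (gridCheck h t)‖ ≤ M' →
      ‖φ' t‖ ≤ (L:ℝ) * (1 + M) * ‖ψ t‖ + (L:ℝ) * (1 + M') := by
    intro t M M' h1 h2
    have hM0 : 0 ≤ M := le_trans (norm_nonneg _) h1
    rw [hid t]
    calc ‖σ (φ (gridHat h t)) (ψ t) + b _‖
        ≤ ‖σ (φ (gridHat h t)) (ψ t)‖ + ‖b ((1 - θ) • φ (gridHat h t) + θ • φ (gridCheck h t))‖ :=
          norm_add_le _ _
      _ ≤ ‖σ (φ (gridHat h t))‖ * ‖ψ t‖ + (L:ℝ) * (1 + M') :=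
          add_le_add (ContinuousLinearMap.le_opNorm _ _)
            (le_trans (hbg _) (mul_le_mul_of_nonneg_left (by linarith) hLpos.le))
      _ ≤ (L:ℝ) * (1 + M) * ‖ψ t‖ + (L:ℝ) * (1 + M') := by
          have hσb : ‖σ (φ (gridHat h t))‖ ≤ (L:ℝ) * (1 + M) :=
            le_trans (hσg _) (mul_le_mul_of_nonneg_left (by linarith) hLpos.le)
          exact add_le_add (mul_le_mul_of_nonneg_right hσb (norm_nonneg _)) le_rfl
  -- bound on ψ
  have hψbnd : ∀ t ∈ Icc (0:ℝ) T, ‖ψ t‖ ≤ K * (‖φ' t‖ + (L:ℝ) * (1 + Mtot)) := by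
    intro t ht
    have hmem := hgh_mem t ht
    have hK' : ‖Ring.inverse (σ (φ (gridHat h t)))‖ ≤ K := by
      rw [← hΦeq _ hmem]; exact hK _ hmem
    have hb2 : ‖b ((1 - θ) • φ (gridHat h t) + θ • φ (gridCheck h t))‖ ≤ (L:ℝ) * (1 + Mtot) := by
      refine le_trans (hbg _) (mul_le_mul_of_nonneg_left ?_ hLpos.le)
      have := hxθ t Mtot (hφM _ hmem) (hφM _ (hgc_mem t ht))
      linarith
    calc ‖ψ t‖ ≤ ‖Ring.inverse (σ (φ (gridHat h t)))‖
          * ‖φ' t - b ((1 - θ) • φ (gridHat h t) + θ • φ (gridCheck h t))‖ :=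
        ContinuousLinearMap.le_opNorm (Ring.inverse (σ (φ (gridHat h t))))
          (φ' t - b ((1 - θ) • φ (gridHat h t) + θ • φ (gridCheck h t)))
      _ ≤ K * (‖φ' t‖ + (L:ℝ) * (1 + Mtot)) := by
        apply mul_le_mul hK' _ (norm_nonneg _) hK0
        calc ‖φ' t - b ((1 - θ) • φ (gridHat h t) + θ • φ (gridCheck h t))‖
            ≤ ‖φ' t‖ + ‖b ((1 - θ) • φ (gridHat h t) + θ • φ (gridCheck h t))‖ :=
              norm_sub_le _ _
          _ ≤ ‖φ' t‖ + (L:ℝ) * (1 + Mtot) := add_le_add le_rfl hb2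
  -- measurability of the grid maps
  have hgridm : Measurable (gridHat h) := by
    unfold gridHat
    have hz : Measurable (Int.cast : ℤ → ℝ) := measurable_from_top
    exact measurable_const.mul (hz.comp (measurable_id.div_const h).floor)
  have hgridcm : Measurable (gridCheck h) := by
    unfold gridCheck
    have hz : Measurable (Int.cast : ℤ → ℝ) := measurable_from_top
    exact measurable_const.mul (hz.comp (measurable_id.div_const h).ceil)
  have haein : ∀ᵐ t ∂(volume.restrict (Icc (0:ℝ) T)), t ∈ Icc (0:ℝ) T :=
    ae_restrict_mem measurableSet_Icc
  -- a.e. strong measurability of ψ on [0,T]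
  have hψm : AEStronglyMeasurable ψ (volume.restrict (Icc (0:ℝ) T)) := by
    have hA : AEStronglyMeasurable (fun t => Ring.inverse (σ (Φ (gridHat h t))))
        (volume.restrict (Icc (0:ℝ) T)) :=
      ((hinvc.measurable.comp hgridm).stronglyMeasurable).aestronglyMeasurable
    have hxm : AEStronglyMeasurable
        (fun t => φ' t - b ((1 - θ) • φ (gridHat h t) + θ • φ (gridCheck h t)))
        (volume.restrict (Icc (0:ℝ) T)) := by
      have h1 : AEStronglyMeasurable
          (fun t => b ((1 - θ) • Φ (gridHat h t) + θ • Φ (gridCheck h t)))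
          (volume.restrict (Icc (0:ℝ) T)) := by
        apply Continuous.comp_aestronglyMeasurable hb.continuous
        apply AEStronglyMeasurable.add
        · exact (((hΦc.measurable.comp hgridm).stronglyMeasurable).aestronglyMeasurable).const_smul (1 - θ)
        · exact (((hΦc.measurable.comp hgridcm).stronglyMeasurable).aestronglyMeasurable).const_smul θ
      refine hφ'int.aestronglyMeasurable.sub (h1.congr ?_)
      filter_upwards [haein] with t ht
      rw [hΦeq _ (hgh_mem t ht), hΦeq _ (hgc_mem t ht)]
    have := (ContinuousLinearMap.id ℝ
        (EuclideanSpace ℝ (Fin d) →L[ℝ] EuclideanSpace ℝ (Fin d))).aestronglyMeasurable_comp₂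
        hA hxm
    refine this.congr ?_
    filter_upwards [haein] with t ht
    simp only [ContinuousLinearMap.id_apply]
    rw [hΦeq _ (hgh_mem t ht)]
  -- integrability of ψ and ‖ψ‖²
  have hψint : IntegrableOn ψ (Icc (0:ℝ) T) volume := by
    apply Integrable.mono' ((hφn.const_mul K).add
      ((integrableOn_const_iff (C := K * ((L:ℝ) * (1 + Mtot)))).mpr (Or.inr measure_Icc_lt_top))) hψm
    filter_upwards [haein] with t ht
    calc ‖ψ t‖ ≤ K * (‖φ' t‖ + (L:ℝ) * (1 + Mtot)) := hψbnd t ht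
      _ = K * ‖φ' t‖ + K * ((L:ℝ) * (1 + Mtot)) := by ring
  have hψsqm : AEStronglyMeasurable (fun t => ‖ψ t‖ ^ 2) (volume.restrict (Icc (0:ℝ) T)) :=
    (continuous_pow 2).comp_aestronglyMeasurable hψm.norm
  have hψsq : IntegrableOn (fun t => ‖ψ t‖ ^ 2) (Icc (0:ℝ) T) volume := by
    apply Integrable.mono' (((hφ'sq.const_mul (2 * K ^ 2)).add
      ((integrableOn_const_iff (C := 2 * K ^ 2 * ((L:ℝ) * (1 + Mtot)) ^ 2 + 1)).mpr (Or.inr measure_Icc_lt_top)))) hψsqm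
    filter_upwards [haein] with t ht
    have h1 := hψbnd t ht
    have h2 : (0:ℝ) ≤ ‖φ' t‖ := norm_nonneg _
    have h3 : (0:ℝ) ≤ ‖ψ t‖ := norm_nonneg _
    have h4 : (0:ℝ) ≤ Mtot := by
      have := hFmono 0 T le_rfl hT.le le_rfl
      have h5 := hF0 T hT.le
      simp [hMdef]
      positivity
    rw [Real.norm_eq_abs, abs_of_nonneg (by positivity)]
    have hc : (0:ℝ) ≤ (L:ℝ) * (1 + Mtot) := by positivity
    calc ‖ψ t‖ ^ 2 ≤ (K * (‖φ' t‖ + (L:ℝ) * (1 + Mtot))) ^ 2 := by nlinarith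
      _ ≤ 2 * K ^ 2 * ‖φ' t‖ ^ 2 + (2 * K ^ 2 * ((L:ℝ) * (1 + Mtot)) ^ 2 + 1) := by
        nlinarith [mul_nonneg (sq_nonneg K) (sq_nonneg (‖φ' t‖ - (L:ℝ) * (1 + Mtot)))]
  -- the primitive G of ‖ψ‖
  set G : ℝ → ℝ := fun r => ∫ s in (0:ℝ)..r, ‖ψ s‖ with hGdef
  have hψn : IntegrableOn (fun s => ‖ψ s‖) (Icc 0 T) volume := hψint.norm
  -- main discrete Gronwall induction
  have main : ∀ n : ℕ, n ≤ N → 1 + ‖x₀‖ + F ((n:ℝ) * h) ≤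
      (1 + ‖x₀‖) * Real.exp ((L:ℝ) * G ((n:ℝ) * h) + 2 * (L:ℝ) * ((n:ℝ) * h)) := by
    intro n
    induction n with
    | zero =>
      intro _
      simp only [Nat.cast_zero, zero_mul]
      have hF0' : F 0 = 0 := intervalIntegral.integral_same
      have hG0' : G 0 = 0 := intervalIntegral.integral_same
      rw [hF0', hG0']
      simp [Real.exp_nonneg]
    | succ n ih =>
      intro hn1
      have hn : n ≤ N := Nat.le_of_succ_le hn1
      set a : ℝ := (n:ℝ) * h with hadef
      have ha0 : 0 ≤ a := mul_nonneg (Nat.cast_nonneg n) hh.le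
      have haa' : a ≤ a + h := by linarith
      have ha'T : a + h ≤ T := by
        have h1 : ((n:ℝ) + 1) ≤ (N:ℝ) := by exact_mod_cast hn1
        have := mul_le_mul_of_nonneg_right h1 hh.le
        rw [hadef]; nlinarith [hNT]
      have haT : a ≤ T := le_trans haa' ha'T
      have ha'eq : ((n + 1 : ℕ):ℝ) * h = a + h := by push_cast; rw [hadef]; ring
      set S : ℝ := ∫ s in a..(a + h), ‖ψ s‖ with hSdef
      have hS0 : 0 ≤ S := by
        apply intervalIntegral.integral_nonneg haa'
        intro x _; exact norm_nonneg _
      have hGadd : G a + S = G (a + h) :=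
        intervalIntegral.integral_add_adjacent_intervals
          (aux_II hψn le_rfl ha0 haT) (aux_II hψn ha0 haa' ha'T)
      have hFadd : F a + (∫ s in a..(a + h), ‖φ' s‖) = F (a + h) :=
        intervalIntegral.integral_add_adjacent_intervals
          (aux_II hφn le_rfl ha0 haT) (aux_II hφn ha0 haa' ha'T)
      -- a.e. pointwise bound on the cell
      have hnull : (volume.restrict (Icc a (a + h))) {a + h} = 0 := by
        rw [Measure.restrict_apply (measurableSet_singleton _)]
        exact measure_mono_null inter_subset_left (measure_singleton _)
      have h1ae : ∀ᵐ s ∂(volume.restrict (Icc a (a + h))), s ≠ a + h := by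
        rw [ae_iff]
        convert hnull using 2
        ext s; simp
      have hcellbnd : ∀ᵐ s ∂(volume.restrict (Icc a (a + h))),
          ‖φ' s‖ ≤ (L:ℝ) * (1 + (‖x₀‖ + F a)) * ‖ψ s‖ + (L:ℝ) * (1 + (‖x₀‖ + F (a + h))) := by
        filter_upwards [h1ae, ae_restrict_mem measurableSet_Icc] with s hs1 hs2
        have hslt : s < a + h := lt_of_le_of_ne hs2.2 hs1
        have hs0 : 0 ≤ s := le_trans ha0 hs2.1
        have hsT : s ≤ T := le_trans hslt.le ha'T
        have hgh1 : gridHat h s = a := by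
          unfold gridHat
          have : ⌊s / h⌋ = (n:ℤ) := by
            apply Int.floor_eq_iff.mpr
            constructor
            · push_cast; rw [le_div_iff₀ hh]; rw [hadef] at hs2; linarith [hs2.1]
            · push_cast; rw [div_lt_iff₀ hh]; rw [hadef] at hslt; linarith
          rw [this, hadef]; push_cast; ring
        have hgc1 : gridCheck h s ≤ a + h := by
          unfold gridCheck
          have : ⌈s / h⌉ ≤ (n:ℤ) + 1 := by
            apply Int.ceil_le.mpr
            push_cast; rw [div_le_iff₀ hh]; rw [hadef] at hslt; linarith
          calc h * ⌈s / h⌉ ≤ h * ((n:ℝ) + 1) := by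
                apply mul_le_mul_of_nonneg_left _ hh.le; exact_mod_cast this
            _ = a + h := by rw [hadef]; ring
        have hgc0 : 0 ≤ gridCheck h s := le_trans hs0 (hgct s hs0)
        have hb1 : ‖φ (gridHat h s)‖ ≤ ‖x₀‖ + F a := by
          rw [hgh1]; exact hφbnd a ⟨ha0, haT⟩
        have hb2 : ‖(1 - θ) • φ (gridHat h s) + θ • φ (gridCheck h s)‖ ≤ ‖x₀‖ + F (a + h) := by
          apply hxθ
          · refine le_trans hb1 ?_
            have := hFmono a (a + h) ha0 haa' ha'T
            linarith
          · refine le_trans (hφbnd _ ⟨hgc0, le_trans hgc1 ha'T⟩) ?_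
            have := hFmono (gridCheck h s) (a + h) hgc0 hgc1 ha'T
            linarith
        exact hkey s _ _ hb1 hb2
      -- integrate the bound over the cell
      have hRHSint : IntervalIntegrable
          (fun s => (L:ℝ) * (1 + (‖x₀‖ + F a)) * ‖ψ s‖ + (L:ℝ) * (1 + (‖x₀‖ + F (a + h))))
          volume a (a + h) :=
        ((aux_II hψn ha0 haa' ha'T).const_mul _).add intervalIntegrable_const
      have hint1 : (∫ s in a..(a + h), ‖φ' s‖) ≤
          (L:ℝ) * (1 + (‖x₀‖ + F a)) * S + (L:ℝ) * (1 + (‖x₀‖ + F (a + h))) * h := by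
        have h1 := intervalIntegral.integral_mono_ae_restrict haa'
          (aux_II hφn ha0 haa' ha'T) hRHSint hcellbnd
        refine le_trans h1 ?_
        rw [intervalIntegral.integral_add ((aux_II hψn ha0 haa' ha'T).const_mul _)
          intervalIntegrable_const, intervalIntegral.integral_const_mul,
          intervalIntegral.integral_const]
        rw [← hSdef]
        have : (a + h - a) = h := by ring
        rw [this, smul_eq_mul]
        ring_nf
        exact le_rfl
      -- Gronwall algebra
      have hun0 : (0:ℝ) ≤ 1 + ‖x₀‖ + F a := by
        have := hF0 a ha0; positivity
      have hun'0 : (0:ℝ) ≤ 1 + ‖x₀‖ + F (a + h) := by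
        have := hF0 (a + h) (le_trans ha0 haa'); positivity
      have hrec : 1 + ‖x₀‖ + F (a + h) ≤ (1 + ‖x₀‖ + F a)
          + (L:ℝ) * (1 + ‖x₀‖ + F a) * S + (L:ℝ) * h * (1 + ‖x₀‖ + F (a + h)) := by
        have := hFadd
        nlinarith [hint1]
      have h6 : (1 - (L:ℝ) * h) * (1 + ‖x₀‖ + F (a + h)) ≤
          (1 + ‖x₀‖ + F a) * (1 + (L:ℝ) * S) := by nlinarith [hrec]
      have step1 : 1 + ‖x₀‖ + F (a + h) ≤
          (1 + ‖x₀‖ + F a) * (1 + (L:ℝ) * S) * (1 + 2 * (L:ℝ) * h) := by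
        have hpos : (0:ℝ) ≤ 1 + 2 * (L:ℝ) * h := by positivity
        have h7 := mul_le_mul_of_nonneg_right h6 hpos
        have hq : (0:ℝ) ≤ ((L:ℝ) * h) * (1 - 2 * (L:ℝ) * h) * (1 + ‖x₀‖ + F (a + h)) := by
          apply mul_nonneg (mul_nonneg (by positivity) (by linarith)) hun'0
        nlinarith [h7, hq]
      have e1 : 1 + (L:ℝ) * S ≤ Real.exp ((L:ℝ) * S) := by
        linarith [Real.add_one_le_exp ((L:ℝ) * S)]
      have e2 : 1 + 2 * (L:ℝ) * h ≤ Real.exp (2 * (L:ℝ) * h) := by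
        linarith [Real.add_one_le_exp (2 * (L:ℝ) * h)]
      have step2 : (1 + ‖x₀‖ + F a) * (1 + (L:ℝ) * S) * (1 + 2 * (L:ℝ) * h) ≤
          ((1 + ‖x₀‖) * Real.exp ((L:ℝ) * G a + 2 * (L:ℝ) * a))
            * Real.exp ((L:ℝ) * S) * Real.exp (2 * (L:ℝ) * h) := by
        apply mul_le_mul _ e2 (by positivity) (by positivity)
        apply mul_le_mul (ih hn) e1 (by positivity) (by positivity)
      rw [ha'eq]
      refine le_trans step1 (le_trans step2 ?_)
      rw [mul_assoc, mul_assoc, ← Real.exp_add, ← Real.exp_add]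
      apply mul_le_mul_of_nonneg_left _ (by positivity)
      apply Real.exp_le_exp.mpr
      have : G (a + h) = G a + S := hGadd.symm
      rw [this]; ring_nf; exact le_rfl
  -- conclusion
  have hMtot0 : (0:ℝ) ≤ Mtot := by
    rw [hMdef]; have := hF0 T hT.le; positivity
  have hMtotb : 1 + Mtot ≤ (1 + ‖x₀‖) * Real.exp ((L:ℝ) * G T + 2 * (L:ℝ) * T) := by
    have h1 := main N le_rfl
    rw [hNT] at h1
    rw [hMdef]
    linarith
  set Q : ℝ := ∫ t in (0:ℝ)..T, ‖ψ t‖ ^ 2 with hQdef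
  clear_value ψ F G Mtot Q
  have hQ0 : 0 ≤ Q := by
    rw [hQdef]
    apply intervalIntegral.integral_nonneg hT.le
    intro x _; positivity
  have hGT : G T ≤ (Q + T) / 2 := by
    simp only [hGdef]
    have hpt : ∀ s ∈ Icc (0:ℝ) T, ‖ψ s‖ ≤ (‖ψ s‖ ^ 2 + 1) / 2 := by
      intro s _
      nlinarith [sq_nonneg (‖ψ s‖ - 1)]
    have hRi : IntervalIntegrable (fun s => (‖ψ s‖ ^ 2 + 1) / 2) volume 0 T :=
      ((aux_II hψsq le_rfl hT.le le_rfl).add intervalIntegrable_const).div_const 2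
    have h1 := intervalIntegral.integral_mono_on hT.le
      (aux_II hψn le_rfl hT.le le_rfl) hRi hpt
    refine le_trans h1 ?_
    rw [intervalIntegral.integral_div, intervalIntegral.integral_add
      (aux_II hψsq le_rfl hT.le le_rfl) intervalIntegrable_const,
      intervalIntegral.integral_const, smul_eq_mul, mul_one, sub_zero, ← hQdef]
  have hU : 1 + Mtot ≤ (1 + ‖x₀‖) * Real.exp ((L:ℝ) * ((Q + T) / 2) + 2 * (L:ℝ) * T) := by
    refine le_trans hMtotb ?_
    apply mul_le_mul_of_nonneg_left _ (by positivity)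
    apply Real.exp_le_exp.mpr
    nlinarith [hGT, hLpos.le]
  -- pointwise final bound
  have hfin : ∀ t ∈ Icc (0:ℝ) T, ‖φ' t‖ ^ 2 ≤
      ((L:ℝ) * (1 + Mtot)) ^ 2 * (2 * ‖ψ t‖ ^ 2 + 2) := by
    intro t ht
    have hm1 := hφM _ (hgh_mem t ht)
    have h1 := hkey t Mtot Mtot hm1 (hxθ t Mtot hm1 (hφM _ (hgc_mem t ht)))
    have h1' : ‖φ' t‖ ≤ ((L:ℝ) * (1 + Mtot)) * (‖ψ t‖ + 1) := by nlinarith [h1]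
    have h3 := pow_le_pow_left₀ (norm_nonneg (φ' t)) h1' 2
    refine le_trans h3 ?_
    have hc0 : (0:ℝ) ≤ (L:ℝ) * (1 + Mtot) := by positivity
    nlinarith [sq_nonneg (‖ψ t‖ - 1), sq_nonneg ((L:ℝ) * (1 + Mtot))]
  have hIsq : (∫ t in (0:ℝ)..T, ‖φ' t‖ ^ 2) ≤ ((L:ℝ) * (1 + Mtot)) ^ 2 * (2 * Q + 2 * T) := by
    have hRi : IntervalIntegrable
        (fun t => ((L:ℝ) * (1 + Mtot)) ^ 2 * (2 * ‖ψ t‖ ^ 2 + 2)) volume 0 T :=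
      (((aux_II hψsq le_rfl hT.le le_rfl).const_mul 2).add
        intervalIntegrable_const).const_mul _
    have h1 := intervalIntegral.integral_mono_on hT.le
      (aux_II hφ'sq le_rfl hT.le le_rfl) hRi hfin
    refine le_trans h1 ?_
    rw [intervalIntegral.integral_const_mul, intervalIntegral.integral_add
      ((aux_II hψsq le_rfl hT.le le_rfl).const_mul 2) intervalIntegrable_const,
      intervalIntegral.integral_const_mul, intervalIntegral.integral_const,
      smul_eq_mul, sub_zero, ← hQdef]
    apply mul_le_mul_of_nonneg_left _ (by positivity)
    linarith
  have hsq1 : Real.sqrt (∫ t in (0:ℝ)..T, ‖φ' t‖ ^ 2) ≤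
      (L:ℝ) * (1 + Mtot) * Real.sqrt (2 * Q + 2 * T) := by
    refine le_trans (Real.sqrt_le_sqrt hIsq) ?_
    rw [Real.sqrt_mul (sq_nonneg _), Real.sqrt_sq (by positivity)]
  have hsplit : Real.sqrt (2 * Q + 2 * T) ≤ 2 * Real.sqrt (Q / 2) + Real.sqrt (2 * T) := by
    have he : 2 * Q + 2 * T = 4 * (Q / 2) + 2 * T := by ring
    rw [he]
    refine le_trans (aux_sqrt_add _ _ (by positivity) (by positivity)) ?_
    have h4 : Real.sqrt (4 * (Q / 2)) = 2 * Real.sqrt (Q / 2) := by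
      rw [show (4:ℝ) * (Q / 2) = 2 ^ 2 * (Q / 2) by ring,
        Real.sqrt_mul (by positivity), Real.sqrt_sq (by norm_num)]
    rw [h4]
  have hexp1 : (1:ℝ) ≤ Real.exp (Q / 2) := Real.one_le_exp (by positivity)
  have e3 : 2 * Real.sqrt (Q / 2) + Real.sqrt (2 * T) ≤
      (2 + Real.sqrt (2 * T)) * Real.exp (Q / 2) := by
    have h2 : 2 * Real.sqrt (Q / 2) ≤ Q / 2 + 1 := by
      nlinarith [Real.sq_sqrt (show (0:ℝ) ≤ Q / 2 by positivity),
        sq_nonneg (Real.sqrt (Q / 2) - 1)]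
    have h3 : Q / 2 + 1 ≤ Real.exp (Q / 2) := by
      linarith [Real.add_one_le_exp (Q / 2)]
    have h5 : (0:ℝ) ≤ Real.sqrt (2 * T) := Real.sqrt_nonneg _
    nlinarith
  have chain1 : Real.sqrt (∫ t in (0:ℝ)..T, ‖φ' t‖ ^ 2) ≤
      ((L:ℝ) * (1 + ‖x₀‖) * Real.exp ((L:ℝ) * ((Q + T) / 2) + 2 * (L:ℝ) * T))
        * ((2 + Real.sqrt (2 * T)) * Real.exp (Q / 2)) := by
    refine le_trans hsq1 ?_
    apply mul_le_mul _ (le_trans hsplit e3) (by positivity) (by positivity)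
    calc (L:ℝ) * (1 + Mtot) ≤ (L:ℝ) * ((1 + ‖x₀‖)
          * Real.exp ((L:ℝ) * ((Q + T) / 2) + 2 * (L:ℝ) * T)) :=
        mul_le_mul_of_nonneg_left hU hLpos.le
      _ = _ := by ring
  refine le_trans chain1 ?_
  have hre : ((L:ℝ) * (1 + ‖x₀‖) * Real.exp ((L:ℝ) * ((Q + T) / 2) + 2 * (L:ℝ) * T))
        * ((2 + Real.sqrt (2 * T)) * Real.exp (Q / 2))
      = C₁ * Real.exp (((L:ℝ) + 1) * (1 / 2 * Q)) := by
    rw [hC₁def]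
    rw [show (L:ℝ) * ((Q + T) / 2) + 2 * (L:ℝ) * T
      = 5 / 2 * (L:ℝ) * T + (L:ℝ) * (1 / 2 * Q) by ring]
    rw [Real.exp_add]
    rw [show ((L:ℝ) + 1) * (1 / 2 * Q) = (L:ℝ) * (1 / 2 * Q) + Q / 2 by ring]
    rw [Real.exp_add]
    ring
  rw [hre]
  have hcoef : C₁ ≤ C₁ + (L:ℝ) + 1 := by linarith [hLpos]
  have hexp2 : Real.exp (((L:ℝ) + 1) * (1 / 2 * Q)) ≤
      Real.exp ((C₁ + (L:ℝ) + 1) * (1 / 2 * Q)) := by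
    apply Real.exp_le_exp.mpr
    have : (0:ℝ) ≤ 1 / 2 * Q := by positivity
    nlinarith [hC₁pos]
  calc C₁ * Real.exp (((L:ℝ) + 1) * (1 / 2 * Q))
      ≤ (C₁ + (L:ℝ) + 1) * Real.exp ((C₁ + (L:ℝ) + 1) * (1 / 2 * Q)) :=
        mul_le_mul hcoef hexp2 (Real.exp_nonneg _) (by positivity)
end

section
/- Let b : ℝ^d → ℝ^d and σ : ℝ^d → ℝ^{d×d} be globally Lipschitz with constant L and satisfy |b(0)| + |σ(0)| ≤ L, and suppose σ(x) is invertible for every x ∈ ℝ^d. Define I(x) = inf{ A(φ) : φ ∈ H¹_{x₀}(0,T;ℝ^d), φ(T) = x } where A(φ) = (1/2)∫₀^T |σ(φ(t))^{-1}(φ'(t) − b(φ(t)))|² dt. Then for every a ∈ [0,∞) the sublevel set { x ∈ ℝ^d : I(x) ≤ a } is a compact subset of ℝ^d. -/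
open MeasureTheory Set

/-- The set of values `A(φ) = ½∫₀ᵀ |σ(φ(t))⁻¹ (φ'(t) − b(φ(t)))|² dt` over all
`φ ∈ H¹_{x₀}(0,T;ℝ^d)` with `φ(T) = x`; the rate function is `I(x) = inf` of this set. -/
def rateValues (d : ℕ) (T : ℝ) (x₀ : EuclideanSpace ℝ (Fin d))
    (b : EuclideanSpace ℝ (Fin d) → EuclideanSpace ℝ (Fin d))
    (σ : EuclideanSpace ℝ (Fin d) →
      (EuclideanSpace ℝ (Fin d) →L[ℝ] EuclideanSpace ℝ (Fin d)))
    (x : EuclideanSpace ℝ (Fin d)) : Set ℝ :=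
  {r : ℝ | ∃ φ φ' : ℝ → EuclideanSpace ℝ (Fin d),
    IntegrableOn φ' (Icc 0 T) ∧
    IntegrableOn (fun t => ‖φ' t‖ ^ 2) (Icc 0 T) ∧
    (∀ t ∈ Icc (0 : ℝ) T, φ t = x₀ + ∫ s in (0 : ℝ)..t, φ' s) ∧
    φ T = x ∧
    r = (1 / 2) * ∫ t in (0 : ℝ)..T,
      ‖(Ring.inverse (σ (φ t))) (φ' t - b (φ t))‖ ^ 2}

section RVAux
variable {d : ℕ} {T : ℝ} {L : NNReal}
  {b : EuclideanSpace ℝ (Fin d) → EuclideanSpace ℝ (Fin d)}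
  {σ : EuclideanSpace ℝ (Fin d) → (EuclideanSpace ℝ (Fin d) →L[ℝ] EuclideanSpace ℝ (Fin d))}

lemma rateValues_nonneg (hT : 0 ≤ T) (x₀ x : EuclideanSpace ℝ (Fin d)) :
    ∀ r ∈ rateValues d T x₀ b σ x, 0 ≤ r := by
  rintro r ⟨φ, φ', -, -, -, -, rfl⟩
  have h : 0 ≤ ∫ t in (0:ℝ)..T, ‖(Ring.inverse (σ (φ t))) (φ' t - b (φ t))‖ ^ 2 :=
    intervalIntegral.integral_nonneg hT fun t _ => by positivity
  linarith

lemma rateValues_nonempty (hT : 0 < T) (x₀ x : EuclideanSpace ℝ (Fin d)) :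
    (rateValues d T x₀ b σ x).Nonempty := by
  refine ⟨_, fun t => x₀ + t • (T⁻¹ • (x - x₀)), fun _ => T⁻¹ • (x - x₀),
    integrableOn_const measure_Icc_lt_top.ne,
    integrableOn_const measure_Icc_lt_top.ne, ?_, ?_, rfl⟩
  · intro t _
    rw [intervalIntegral.integral_const]
    rw [sub_zero]
  · show x₀ + T • (T⁻¹ • (x - x₀)) = x
    rw [smul_smul, mul_inv_cancel₀ hT.ne', one_smul]
    abel

lemma rateValues_bddBelow (hT : 0 ≤ T) (x₀ x : EuclideanSpace ℝ (Fin d)) :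
    BddBelow (rateValues d T x₀ b σ x) :=
  ⟨0, fun r hr => rateValues_nonneg hT x₀ x r hr⟩

end RVAux
section Gronwall
variable {T : ℝ}

/-- Abstract integral-form Gronwall-type bound via interval-halving induction. -/
lemma gronwall_pow (hT : 0 ≤ T) (g u : ℝ → ℝ)
    (hg : IntegrableOn g (Icc 0 T)) (hgu : IntegrableOn (fun t => g t * u t) (Icc 0 T))
    (hgnn : ∀ t ∈ Icc (0:ℝ) T, 0 ≤ g t) (hunn : ∀ t ∈ Icc (0:ℝ) T, 0 ≤ u t)
    (C : ℝ) (hC : 0 ≤ C)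
    (hkey : ∀ t ∈ Icc (0:ℝ) T, u t ≤ C + ∫ s in (0:ℝ)..t, g s * u s)
    (N : ℕ) (hN : (∫ s in (0:ℝ)..T, g s) ≤ N / 2) :
    ∀ t ∈ Icc (0:ℝ) T, u t ≤ 2 ^ N * C := by
  -- interval integrability on subintervals
  have hsub : ∀ s t : ℝ, s ∈ Icc (0:ℝ) T → t ∈ Icc (0:ℝ) T → uIcc s t ⊆ Icc (0:ℝ) T := by
    intro s t hs ht
    rw [← uIcc_of_le hT]
    exact uIcc_subset_uIcc (by rwa [uIcc_of_le hT]) (by rwa [uIcc_of_le hT])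
  have hIg : ∀ s t : ℝ, s ∈ Icc (0:ℝ) T → t ∈ Icc (0:ℝ) T → IntervalIntegrable g volume s t :=
    fun s t hs ht => (hg.mono_set (hsub s t hs ht)).intervalIntegrable
  have hIgu : ∀ s t : ℝ, s ∈ Icc (0:ℝ) T → t ∈ Icc (0:ℝ) T →
      IntervalIntegrable (fun t => g t * u t) volume s t :=
    fun s t hs ht => (hgu.mono_set (hsub s t hs ht)).intervalIntegrable
  -- monotonicity of the primitive of g
  have hGmono : ∀ s t : ℝ, s ∈ Icc (0:ℝ) T → t ∈ Icc (0:ℝ) T → s ≤ t →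
      (∫ r in (0:ℝ)..s, g r) ≤ ∫ r in (0:ℝ)..t, g r := by
    intro s t hs ht hst
    have hadd := intervalIntegral.integral_add_adjacent_intervals
      (hIg 0 s ⟨le_rfl, hT⟩ hs) (hIg s t hs ht)
    have hnn : 0 ≤ ∫ r in s..t, g r := by
      apply intervalIntegral.integral_nonneg hst
      intro r hr
      exact hgnn r ⟨hs.1.trans hr.1, hr.2.trans ht.2⟩
    linarith
  have hGUmono : ∀ s t : ℝ, s ∈ Icc (0:ℝ) T → t ∈ Icc (0:ℝ) T → s ≤ t →
      (∫ r in (0:ℝ)..s, g r * u r) ≤ ∫ r in (0:ℝ)..t, g r * u r := by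
    intro s t hs ht hst
    have hadd := intervalIntegral.integral_add_adjacent_intervals
      (hIgu 0 s ⟨le_rfl, hT⟩ hs) (hIgu s t hs ht)
    have hnn : 0 ≤ ∫ r in s..t, g r * u r := by
      apply intervalIntegral.integral_nonneg hst
      intro r hr
      have hrI : r ∈ Icc (0:ℝ) T := ⟨hs.1.trans hr.1, hr.2.trans ht.2⟩
      exact mul_nonneg (hgnn r hrI) (hunn r hrI)
    linarith
  -- main induction
  have main : ∀ n : ℕ, ∀ t ∈ Icc (0:ℝ) T, (∫ s in (0:ℝ)..t, g s) ≤ n / 2 →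
      C + (∫ s in (0:ℝ)..t, g s * u s) ≤ 2 ^ n * C := by
    intro n
    induction n with
    | zero =>
      intro t ht hGt
      have hG0 : (∫ s in (0:ℝ)..t, g s) = 0 := by
        refine le_antisymm (by simpa using hGt) ?_
        exact intervalIntegral.integral_nonneg ht.1 fun s hs => hgnn s ⟨hs.1, hs.2.trans ht.2⟩
      -- g = 0 a.e. on Ioc 0 t
      have hInt : IntegrableOn g (Ioc 0 t) := hg.mono_set (Ioc_subset_Icc_self.trans
        (Icc_subset_Icc le_rfl ht.2))
      have hnn : 0 ≤ᵐ[volume.restrict (Ioc (0:ℝ) t)] g := by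
        refine (ae_restrict_iff' measurableSet_Ioc).2 (ae_of_all _ fun s hs => ?_)
        exact hgnn s ⟨hs.1.le, hs.2.trans ht.2⟩
      have hG0' : (∫ s in Ioc (0:ℝ) t, g s) = 0 := by
        rwa [intervalIntegral.integral_of_le ht.1] at hG0
      have hg0 : g =ᵐ[volume.restrict (Ioc (0:ℝ) t)] 0 :=
        (integral_eq_zero_iff_of_nonneg_ae hnn hInt).1 hG0'
      have hgu0 : (fun s => g s * u s) =ᵐ[volume.restrict (Ioc (0:ℝ) t)] 0 := by
        filter_upwards [hg0] with s hs
        simp [hs]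
      have : (∫ s in (0:ℝ)..t, g s * u s) = 0 := by
        rw [intervalIntegral.integral_of_le ht.1, integral_congr_ae hgu0]
        simp
      rw [this]
      simp
    | succ n ih =>
      intro t ht hGt
      by_cases hcase : (∫ s in (0:ℝ)..t, g s) ≤ n / 2
      · have h1 := ih t ht hcase
        have h2 : (2:ℝ) ^ n * C ≤ 2 ^ (n+1) * C := by
          have : (2:ℝ) ^ n ≤ 2 ^ (n+1) := by
            apply pow_le_pow_right₀ (by norm_num) (by omega)
          exact mul_le_mul_of_nonneg_right this hC
        linarith
      · push_neg at hcase
        set S : Set ℝ := Icc 0 t ∩ (fun s => ∫ r in (0:ℝ)..s, g r) ⁻¹' Iic (n / 2) with hS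
        have hGcont : ContinuousOn (fun s => ∫ r in (0:ℝ)..s, g r) (Icc 0 t) := by
          have h_int : IntegrableOn g (uIcc (0:ℝ) t) := by
            rw [uIcc_of_le ht.1]
            exact hg.mono_set (Icc_subset_Icc le_rfl ht.2)
          have := intervalIntegral.continuousOn_primitive_interval h_int
          rwa [uIcc_of_le ht.1] at this
        have hSclosed : IsClosed S :=
          hGcont.preimage_isClosed_of_isClosed isClosed_Icc isClosed_Iic
        have hS0 : (0:ℝ) ∈ S := by
          refine ⟨⟨le_rfl, ht.1⟩, ?_⟩
          simp only [mem_preimage, mem_Iic, intervalIntegral.integral_same]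
          positivity
        have hSbdd : BddAbove S := bddAbove_Icc.mono inter_subset_left
        set c := sSup S with hc
        have hcS : c ∈ S := hSclosed.csSup_mem ⟨0, hS0⟩ hSbdd
        have hcIcc : c ∈ Icc (0:ℝ) T := ⟨hcS.1.1, hcS.1.2.trans ht.2⟩
        have hih := ih c hcIcc hcS.2
        have hGc : (n:ℝ) / 2 ≤ ∫ s in (0:ℝ)..c, g s := by
          by_contra hlt
          push_neg at hlt
          have hct : c < t := by
            rcases lt_or_eq_of_le hcS.1.2 with h | h
            · exact h
            · exfalso; rw [h] at hlt; linarith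
          have hcw : ContinuousWithinAt (fun s => ∫ r in (0:ℝ)..s, g r) (Icc 0 t) c :=
            hGcont c hcS.1
          have hev : ∀ᶠ s in nhdsWithin c (Icc 0 t),
              (∫ r in (0:ℝ)..s, g r) < n / 2 := hcw.eventually_lt_const hlt
          have hne : (nhdsWithin c (Ioc c t)).NeBot := by
            rw [← mem_closure_iff_nhdsWithin_neBot, closure_Ioc (ne_of_lt hct)]
            exact left_mem_Icc.2 hct.le
          have hev2 : ∀ᶠ s in nhdsWithin c (Ioc c t),
              (∫ r in (0:ℝ)..s, g r) < n / 2 :=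
            hev.filter_mono (nhdsWithin_mono _ (Ioc_subset_Icc_self.trans (Icc_subset_Icc hcS.1.1 le_rfl)))
          obtain ⟨s', hs'lt, hs'mem⟩ := (hev2.and self_mem_nhdsWithin).exists
          have : s' ≤ c := le_csSup hSbdd ⟨⟨hcS.1.1.trans hs'mem.1.le, hs'mem.2⟩, hs'lt.le⟩
          linarith [hs'mem.1]
        set W := C + ∫ s in (0:ℝ)..t, g s * u s with hW
        have hWbound : ∀ s ∈ Icc c t, u s ≤ W := by
          intro s hs
          have hsI : s ∈ Icc (0:ℝ) T := ⟨hcS.1.1.trans hs.1, hs.2.trans ht.2⟩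
          have h1 := hkey s hsI
          have h2 := hGUmono s t hsI ht hs.2
          rw [hW]; linarith
        have hWnn : 0 ≤ W := by
          have h1 := hWbound t ⟨hcS.1.2, le_rfl⟩
          have h2 := hunn t ht
          linarith
        have hsplit : (∫ s in (0:ℝ)..t, g s * u s) =
            (∫ s in (0:ℝ)..c, g s * u s) + ∫ s in c..t, g s * u s :=
          (intervalIntegral.integral_add_adjacent_intervals (hIgu 0 c ⟨le_rfl, hT⟩ hcIcc)
            (hIgu c t hcIcc ht)).symm
        have htail : (∫ s in c..t, g s * u s) ≤ (∫ s in c..t, g s) * W := by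
          have h1 : (∫ s in c..t, g s * u s) ≤ ∫ s in c..t, g s * W := by
            apply intervalIntegral.integral_mono_on hcS.1.2 (hIgu c t hcIcc ht)
              ((hIg c t hcIcc ht).mul_const W)
            intro s hs
            have hsI : s ∈ Icc (0:ℝ) T := ⟨hcS.1.1.trans hs.1, hs.2.trans ht.2⟩
            exact mul_le_mul_of_nonneg_left (hWbound s hs) (hgnn s hsI)
          rwa [intervalIntegral.integral_mul_const] at h1
        have hGsplit : (∫ s in (0:ℝ)..c, g s) + (∫ s in c..t, g s) = ∫ s in (0:ℝ)..t, g s :=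
          intervalIntegral.integral_add_adjacent_intervals (hIg 0 c ⟨le_rfl, hT⟩ hcIcc)
            (hIg c t hcIcc ht)
        have hghalf : (∫ s in c..t, g s) ≤ 1/2 := by
          have hGt' : (∫ s in (0:ℝ)..t, g s) ≤ (n:ℝ)/2 + 1/2 := by push_cast at hGt; linarith
          linarith [hGsplit, hGc, hGt']
        have hWhalf : (∫ s in c..t, g s) * W ≤ W / 2 := by
          have := mul_le_mul_of_nonneg_right hghalf hWnn
          linarith
        have hW2 : W = C + ((∫ s in (0:ℝ)..c, g s * u s) + ∫ s in c..t, g s * u s) := by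
          rw [hW, hsplit]
        have h2pow : (2:ℝ) ^ (n+1) = 2 * 2 ^ n := by ring
        show W ≤ 2 ^ (n+1) * C
        clear_value W
        rw [h2pow]
        linarith
  intro t ht
  have hGle : (∫ s in (0:ℝ)..t, g s) ≤ N / 2 :=
    le_trans (hGmono t T ht ⟨hT, le_rfl⟩ ht.2) hN
  exact le_trans (hkey t ht) (main N t ht hGle)

end Gronwall
section Psi
variable {d : ℕ} {T : ℝ} {L : NNReal}
  {b : EuclideanSpace ℝ (Fin d) → EuclideanSpace ℝ (Fin d)}
  {σ : EuclideanSpace ℝ (Fin d) → (EuclideanSpace ℝ (Fin d) →L[ℝ] EuclideanSpace ℝ (Fin d))}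

/-- Linear growth from Lipschitz plus bound at zero. -/
lemma lip_growth {F : Type*} [NormedAddCommGroup F]
    (f : EuclideanSpace ℝ (Fin d) → F) (hf : LipschitzWith L f)
    (h0 : ‖f 0‖ ≤ (L : ℝ)) (z : EuclideanSpace ℝ (Fin d)) :
    ‖f z‖ ≤ (L : ℝ) * (1 + ‖z‖) := by
  have h1 : ‖f z - f 0‖ ≤ (L : ℝ) * ‖z - 0‖ := by
    have := hf.dist_le_mul z 0
    rwa [dist_eq_norm, dist_eq_norm] at this
  have h2 : ‖f z‖ ≤ ‖f z - f 0‖ + ‖f 0‖ := by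
    have := norm_le_norm_add_norm_sub' (f z) (f 0)
    linarith
  rw [sub_zero] at h1
  nlinarith [norm_nonneg z]

/-- Continuity of `t ↦ (σ (φ t))⁻¹` on a set where `φ` is continuous. -/
lemma inv_continuousOn (hσ : LipschitzWith L σ)
    (hinv : ∀ x, IsUnit (σ x)) {φ : ℝ → EuclideanSpace ℝ (Fin d)} {s : Set ℝ}
    (hφc : ContinuousOn φ s) :
    ContinuousOn (fun t => Ring.inverse (σ (φ t))) s := by
  intro t ht
  have hσφ : ContinuousWithinAt (fun t => σ (φ t)) s t :=
    (hσ.continuous.continuousAt).comp_continuousWithinAt (hφc t ht)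
  have hc : ContinuousAt Ring.inverse (σ (φ t)) := by
    obtain ⟨u, hu⟩ := hinv (φ t)
    rw [← hu]
    exact NormedRing.inverse_continuousAt u
  exact ContinuousAt.comp_continuousWithinAt (f := fun t => σ (φ t)) hc hσφ

/-- Integrability of `ψ`, `‖ψ‖`, `‖ψ‖²` where `ψ t = (σ (φ t))⁻¹ (φ' t - b (φ t))`. -/
lemma psi_props (hT : 0 ≤ T) (hb : LipschitzWith L b) (hσ : LipschitzWith L σ)
    (hinv : ∀ x, IsUnit (σ x)) (φ φ' : ℝ → EuclideanSpace ℝ (Fin d))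
    (hφc : ContinuousOn φ (Icc 0 T))
    (h1 : IntegrableOn φ' (Icc 0 T))
    (h2 : IntegrableOn (fun t => ‖φ' t‖ ^ 2) (Icc 0 T)) :
    IntegrableOn (fun t => (Ring.inverse (σ (φ t))) (φ' t - b (φ t))) (Icc 0 T) ∧
    IntegrableOn (fun t => ‖(Ring.inverse (σ (φ t))) (φ' t - b (φ t))‖) (Icc 0 T) ∧
    IntegrableOn (fun t => ‖(Ring.inverse (σ (φ t))) (φ' t - b (φ t))‖ ^ 2) (Icc 0 T) := by
  set ψ := fun t => (Ring.inverse (σ (φ t))) (φ' t - b (φ t)) with hψ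
  have hA : ContinuousOn (fun t => Ring.inverse (σ (φ t))) (Icc 0 T) :=
    inv_continuousOn hσ hinv hφc
  obtain ⟨MA, hMA⟩ := isCompact_Icc.exists_bound_of_continuousOn hA
  have hbφ : ContinuousOn (fun t => b (φ t)) (Icc 0 T) :=
    hb.continuous.comp_continuousOn hφc
  obtain ⟨Mb, hMb⟩ := isCompact_Icc.exists_bound_of_continuousOn hbφ
  have hMA0 : ∀ t ∈ Icc (0:ℝ) T, (0:ℝ) ≤ MA := fun t ht => (norm_nonneg _).trans (hMA t ht)
  have hMb0 : ∀ t ∈ Icc (0:ℝ) T, (0:ℝ) ≤ Mb := fun t ht => (norm_nonneg _).trans (hMb t ht)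
  -- measurability
  have hvm : AEStronglyMeasurable (fun t => φ' t - b (φ t)) (volume.restrict (Icc 0 T)) :=
    h1.aestronglyMeasurable.sub (hbφ.aestronglyMeasurable measurableSet_Icc)
  have hAm : AEStronglyMeasurable (fun t => Ring.inverse (σ (φ t)))
      (volume.restrict (Icc 0 T)) := hA.aestronglyMeasurable measurableSet_Icc
  have hψm : AEStronglyMeasurable ψ (volume.restrict (Icc 0 T)) := by
    have : Continuous fun p : (EuclideanSpace ℝ (Fin d) →L[ℝ] EuclideanSpace ℝ (Fin d)) ×
        EuclideanSpace ℝ (Fin d) => p.1 p.2 := isBoundedBilinearMap_apply.continuous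
    exact this.comp_aestronglyMeasurable (hAm.prodMk hvm)
  -- pointwise bound
  have hptw : ∀ t ∈ Icc (0:ℝ) T, ‖ψ t‖ ≤ MA * (‖φ' t‖ + Mb) := by
    intro t ht
    calc ‖ψ t‖ ≤ ‖Ring.inverse (σ (φ t))‖ * ‖φ' t - b (φ t)‖ :=
          ContinuousLinearMap.le_opNorm _ _
      _ ≤ MA * (‖φ' t‖ + Mb) := by
          have h3 := norm_sub_le (φ' t) (b (φ t))
          have h4 := hMb t ht
          have h5 := hMA t ht
          have := norm_nonneg (φ' t - b (φ t))
          nlinarith [norm_nonneg (φ' t), norm_nonneg (Ring.inverse (σ (φ t)))]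
  have hdom : IntegrableOn (fun t => MA * (‖φ' t‖ + Mb)) (Icc 0 T) := by
    exact ((h1.norm.add (integrableOn_const measure_Icc_lt_top.ne)).const_mul MA)
  have hψint : IntegrableOn ψ (Icc 0 T) := by
    refine Integrable.mono' hdom hψm ?_
    refine (ae_restrict_iff' measurableSet_Icc).2 (ae_of_all _ fun t ht => hptw t ht)
  refine ⟨hψint, hψint.norm, ?_⟩
  -- square integrability
  have hdom2 : IntegrableOn (fun t => MA^2 * (‖φ' t‖^2 + 2*Mb*‖φ' t‖ + Mb^2)) (Icc 0 T) := by
    refine Integrable.const_mul ?_ _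
    exact (h2.add (h1.norm.const_mul (2*Mb))).add (integrableOn_const measure_Icc_lt_top.ne)
  refine Integrable.mono' hdom2 ?_ ?_
  · exact (hψm.norm.pow 2)
  · refine (ae_restrict_iff' measurableSet_Icc).2 (ae_of_all _ fun t ht => ?_)
    have h5 := hptw t ht
    have h6 : ‖ψ t‖^2 ≤ (MA * (‖φ' t‖ + Mb))^2 := by
      have := norm_nonneg (ψ t)
      nlinarith
    have h7 : (MA * (‖φ' t‖ + Mb))^2 = MA^2 * (‖φ' t‖^2 + 2*Mb*‖φ' t‖ + Mb^2) := by ring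
    rw [Real.norm_eq_abs, abs_of_nonneg (by positivity : (0:ℝ) ≤ ‖ψ t‖^2)]
    linarith

end Psi
section KeyBound
variable {d : ℕ} {T : ℝ} {L : NNReal}
  {b : EuclideanSpace ℝ (Fin d) → EuclideanSpace ℝ (Fin d)}
  {σ : EuclideanSpace ℝ (Fin d) → (EuclideanSpace ℝ (Fin d) →L[ℝ] EuclideanSpace ℝ (Fin d))}

lemma gronwall_pow' : True := trivial

theorem key_bound (hT : 0 < T) (x₀ : EuclideanSpace ℝ (Fin d))
    (hb : LipschitzWith L b) (hσ : LipschitzWith L σ)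
    (hbound : ‖b 0‖ + ‖σ 0‖ ≤ (L : ℝ)) (hinv : ∀ x, IsUnit (σ x))
    (a : ℝ) (φ φ' : ℝ → EuclideanSpace ℝ (Fin d))
    (h1 : IntegrableOn φ' (Icc 0 T)) (h2 : IntegrableOn (fun t => ‖φ' t‖ ^ 2) (Icc 0 T))
    (hrep : ∀ t ∈ Icc (0:ℝ) T, φ t = x₀ + ∫ s in (0:ℝ)..t, φ' s)
    (hr : (1/2) * (∫ t in (0:ℝ)..T, ‖(Ring.inverse (σ (φ t))) (φ' t - b (φ t))‖^2) ≤ a + 1) :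
    ∀ t ∈ Icc (0:ℝ) T, 1 + ‖φ t‖ ≤
      2 ^ (⌈2*((L:ℝ)*(T + ((a+1) + T/2)))⌉₊) * (1 + ‖x₀‖) := by
  have hII : ∀ (f : ℝ → ℝ), IntegrableOn f (Icc 0 T) → ∀ t, t ∈ Icc (0:ℝ) T →
      IntervalIntegrable f volume 0 t := by
    intro f hf t ht
    rw [intervalIntegrable_iff_integrableOn_Icc_of_le ht.1]
    exact hf.mono_set (Icc_subset_Icc le_rfl ht.2)
  have hb0 : ‖b 0‖ ≤ (L:ℝ) := by have := norm_nonneg (σ 0); linarith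
  have hσ0 : ‖σ 0‖ ≤ (L:ℝ) := by have := norm_nonneg (b 0); linarith
  have hφc : ContinuousOn φ (Icc 0 T) := by
    have hprim : ContinuousOn (fun t => x₀ + ∫ s in (0:ℝ)..t, φ' s) (Icc 0 T) := by
      refine continuousOn_const.add ?_
      have h_int : IntegrableOn φ' (uIcc (0:ℝ) T) := by rwa [uIcc_of_le hT.le]
      have := intervalIntegral.continuousOn_primitive_interval h_int
      rwa [uIcc_of_le hT.le] at this
    exact hprim.congr hrep
  obtain ⟨hψ1, hψn, hψ2⟩ := psi_props hT.le hb hσ hinv φ φ' hφc h1 h2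
  set ψ := fun t => (Ring.inverse (σ (φ t))) (φ' t - b (φ t)) with hψdef
  set g := fun t => (L:ℝ) * (1 + ‖ψ t‖) with hgdef
  set u := fun t => 1 + ‖φ t‖ with hudef
  have hg : IntegrableOn g (Icc 0 T) :=
    ((integrableOn_const measure_Icc_lt_top.ne).add hψn).const_mul _
  obtain ⟨Mφ, hMφ⟩ := isCompact_Icc.exists_bound_of_continuousOn hφc
  have hgu : IntegrableOn (fun t => g t * u t) (Icc 0 T) := by
    have hum : AEStronglyMeasurable u (volume.restrict (Icc 0 T)) :=
      (continuousOn_const.add hφc.norm).aestronglyMeasurable measurableSet_Icc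
    refine Integrable.mono' (hg.mul_const (1 + Mφ)) ((hg.aestronglyMeasurable).mul hum) ?_
    refine (ae_restrict_iff' measurableSet_Icc).2 (ae_of_all _ fun t ht => ?_)
    have h3 := hMφ t ht
    have h4 : (0:ℝ) ≤ g t := by rw [hgdef]; positivity
    rw [Real.norm_eq_abs, abs_of_nonneg (mul_nonneg h4 (by rw [hudef]; positivity))]
    have : u t ≤ 1 + Mφ := by rw [hudef]; simp; linarith
    nlinarith
  have hgnn : ∀ t ∈ Icc (0:ℝ) T, 0 ≤ g t := fun t _ => by rw [hgdef]; positivity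
  have hunn : ∀ t ∈ Icc (0:ℝ) T, 0 ≤ u t := fun t _ => by rw [hudef]; positivity
  have hkey : ∀ t ∈ Icc (0:ℝ) T, u t ≤ (1 + ‖x₀‖) + ∫ s in (0:ℝ)..t, g s * u s := by
    intro t ht
    have e1 := hrep t ht
    have e2 : ‖φ t‖ ≤ ‖x₀‖ + ‖∫ s in (0:ℝ)..t, φ' s‖ := by rw [e1]; exact norm_add_le _ _
    have e3 : ‖∫ s in (0:ℝ)..t, φ' s‖ ≤ ∫ s in (0:ℝ)..t, ‖φ' s‖ :=
      intervalIntegral.norm_integral_le_integral_norm ht.1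
    have hsub : Icc (0:ℝ) t ⊆ Icc (0:ℝ) T := Icc_subset_Icc le_rfl ht.2
    have e4 : (∫ s in (0:ℝ)..t, ‖φ' s‖) ≤ ∫ s in (0:ℝ)..t, g s * u s := by
      apply intervalIntegral.integral_mono_on ht.1
      · exact hII _ h1.norm t ht
      · exact hII _ hgu t ht
      · intro s hs
        have hsI : s ∈ Icc (0:ℝ) T := hsub hs
        have happ : (σ (φ s)) (ψ s) = φ' s - b (φ s) := by
          have hmul := Ring.mul_inverse_cancel (σ (φ s)) (hinv (φ s))
          calc (σ (φ s)) (ψ s) = ((σ (φ s)) * Ring.inverse (σ (φ s))) (φ' s - b (φ s)) := rfl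
            _ = φ' s - b (φ s) := by rw [hmul]; rfl
        have n1 : ‖φ' s‖ ≤ ‖φ' s - b (φ s)‖ + ‖b (φ s)‖ := by
          have := norm_sub_le (φ' s - b (φ s)) (-(b (φ s)))
          have h' := norm_le_norm_add_norm_sub' (φ' s) (b (φ s))
          linarith
        have n2 : ‖φ' s - b (φ s)‖ ≤ (L:ℝ) * (1 + ‖φ s‖) * ‖ψ s‖ := by
          rw [← happ]
          calc ‖(σ (φ s)) (ψ s)‖ ≤ ‖σ (φ s)‖ * ‖ψ s‖ := ContinuousLinearMap.le_opNorm _ _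
            _ ≤ (L:ℝ) * (1 + ‖φ s‖) * ‖ψ s‖ := by
                have := lip_growth σ hσ hσ0 (φ s)
                exact mul_le_mul_of_nonneg_right this (norm_nonneg _)
        have n3 : ‖b (φ s)‖ ≤ (L:ℝ) * (1 + ‖φ s‖) := lip_growth b hb hb0 (φ s)
        have : g s * u s = (L:ℝ) * (1 + ‖ψ s‖) * (1 + ‖φ s‖) := by rw [hgdef, hudef]
        nlinarith [norm_nonneg (ψ s), norm_nonneg (φ s)]
    rw [hudef]
    simp only
    linarith
  have hN : (∫ s in (0:ℝ)..T, g s) ≤ (⌈2*((L:ℝ)*(T + ((a+1) + T/2)))⌉₊ : ℝ) / 2 := by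
    have hIψn : IntervalIntegrable (fun t => ‖ψ t‖) volume 0 T := by
      rw [intervalIntegrable_iff_integrableOn_Icc_of_le hT.le]; exact hψn
    have hIψ2 : IntervalIntegrable (fun t => ‖ψ t‖^2) volume 0 T := by
      rw [intervalIntegrable_iff_integrableOn_Icc_of_le hT.le]; exact hψ2
    have e5 : (∫ s in (0:ℝ)..T, g s) = (L:ℝ) * (T + ∫ s in (0:ℝ)..T, ‖ψ s‖) := by
      rw [hgdef]
      rw [intervalIntegral.integral_const_mul]
      rw [intervalIntegral.integral_add intervalIntegrable_const hIψn]
      simp [smul_eq_mul]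
    have e6 : (∫ s in (0:ℝ)..T, ‖ψ s‖) ≤ (∫ s in (0:ℝ)..T, (‖ψ s‖^2 + 1)/2) := by
      apply intervalIntegral.integral_mono_on hT.le hIψn
      · exact (hIψ2.add intervalIntegrable_const).div_const 2
      · intro s _
        nlinarith [norm_nonneg (ψ s), sq_nonneg (‖ψ s‖ - 1)]
    have e7 : (∫ s in (0:ℝ)..T, (‖ψ s‖^2 + 1)/2)
        = (1/2) * (∫ s in (0:ℝ)..T, ‖ψ s‖^2) + T/2 := by
      have hfeq : (fun s => (‖ψ s‖^2 + 1)/2) = fun s => (1/2) * ‖ψ s‖^2 + (1/2) := by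
        funext s; ring
      rw [hfeq, intervalIntegral.integral_add (hIψ2.const_mul _) intervalIntegrable_const]
      rw [intervalIntegral.integral_const_mul]
      simp [smul_eq_mul]
      ring
    have hceil : 2*((L:ℝ)*(T + ((a+1) + T/2))) ≤ (⌈2*((L:ℝ)*(T + ((a+1) + T/2)))⌉₊ : ℝ) :=
      Nat.le_ceil _
    have hLnn : (0:ℝ) ≤ (L:ℝ) := L.2
    nlinarith [hr]
  have := gronwall_pow hT.le g u hg hgu hgnn hunn (1 + ‖x₀‖) (by positivity) hkey
    (⌈2*((L:ℝ)*(T + ((a+1) + T/2)))⌉₊) hN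
  intro t ht
  exact this t ht

end KeyBound
section PW
variable {d : ℕ} {L : NNReal}
  {b : EuclideanSpace ℝ (Fin d) → EuclideanSpace ℝ (Fin d)}
  {σ : EuclideanSpace ℝ (Fin d) → (EuclideanSpace ℝ (Fin d) →L[ℝ] EuclideanSpace ℝ (Fin d))}

set_option maxHeartbeats 800000 in
/-- Pointwise quadratic perturbation estimate, with existentially packaged constants. -/
lemma pointwise_bound_ex (hinv : ∀ x, IsUnit (σ x)) (T M R : ℝ)
    (hT : 0 < T) (hM0 : 0 ≤ M) (hR : 0 ≤ R) :
    ∃ c₁ c₂ : ℝ, 0 ≤ c₁ ∧ 0 ≤ c₂ ∧ ∀ δ : ℝ, 0 ≤ δ → δ ≤ 1 →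
      ∀ z zt v c : EuclideanSpace ℝ (Fin d),
      ‖Ring.inverse (σ z)‖ ≤ M → ‖Ring.inverse (σ zt)‖ ≤ M →
      ‖σ z - σ zt‖ ≤ (L:ℝ)*δ → ‖b z - b zt‖ ≤ (L:ℝ)*δ →
      ‖σ z‖ ≤ (L:ℝ)*(1+R) → ‖c‖ ≤ δ/T →
      ‖(Ring.inverse (σ zt)) ((v + c) - b zt)‖^2 ≤
        (1 + δ*c₁) * ‖(Ring.inverse (σ z)) (v - b z)‖^2 + δ*c₂ := by
  set K₁ : ℝ := M * (1/T + L) with hK₁def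
  set K₂ : ℝ := M^2 * (L:ℝ)^2 * (1+R) with hK₂def
  have hLnn : (0:ℝ) ≤ (L:ℝ) := L.coe_nonneg
  have hK₁ : 0 ≤ K₁ := by
    have h1 : (0:ℝ) ≤ 1/T := by positivity
    have h2 : (0:ℝ) ≤ 1/T + L := by positivity
    exact mul_nonneg hM0 h2
  have hK₂ : 0 ≤ K₂ := by
    have : (0:ℝ) ≤ 1 + R := by linarith
    positivity
  refine ⟨K₁ + 2*K₂ + 2*K₂^2, K₁ + 2*K₁^2, by positivity, by positivity, ?_⟩
  intro δ hδ0 hδ1 z zt v c hMz hMzt hσd hbd hσz hc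
  set Iz := Ring.inverse (σ z) with hIz
  set Izt := Ring.inverse (σ zt) with hIzt
  set p := ‖Iz (v - b z)‖ with hpdef
  have hp0 : 0 ≤ p := norm_nonneg _
  have hid : Izt - Iz = Izt * (σ z - σ zt) * Iz := by
    have e1 := Ring.mul_inverse_cancel (σ z) (hinv z)
    have e2 := Ring.inverse_mul_cancel (σ zt) (hinv zt)
    rw [← hIz] at e1
    rw [← hIzt] at e2
    calc Izt - Iz = Izt * (σ z * Iz) - (Izt * σ zt) * Iz := by
          rw [e1, e2, mul_one, one_mul]
      _ = Izt * (σ z - σ zt) * Iz := by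
          rw [mul_sub, sub_mul, mul_assoc Izt (σ z) Iz]
  have hdI : ‖Izt - Iz‖ ≤ M^2 * ((L:ℝ) * δ) := by
    rw [hid]
    calc ‖Izt * (σ z - σ zt) * Iz‖ ≤ ‖Izt * (σ z - σ zt)‖ * ‖Iz‖ := norm_mul_le _ _
      _ ≤ ‖Izt‖ * ‖σ z - σ zt‖ * ‖Iz‖ :=
          mul_le_mul_of_nonneg_right (norm_mul_le _ _) (norm_nonneg _)
      _ ≤ M * ((L:ℝ) * δ) * M := by
          have h1 := norm_nonneg (σ z - σ zt)
          have h3 := norm_nonneg Iz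
          have hLδ : (0:ℝ) ≤ (L:ℝ) * δ := mul_nonneg hLnn hδ0
          have s1 : ‖Izt‖ * ‖σ z - σ zt‖ ≤ M * ((L:ℝ)*δ) := mul_le_mul hMzt hσd h1 hM0
          exact mul_le_mul s1 hMz h3 (mul_nonneg hM0 hLδ)
      _ = M^2 * ((L:ℝ) * δ) := by ring
  have happ : (σ z) (Iz (v - b z)) = v - b z := by
    have hmul := Ring.mul_inverse_cancel (σ z) (hinv z)
    rw [← hIz] at hmul
    calc (σ z) (Iz (v - b z)) = ((σ z) * Iz) (v - b z) := rfl
      _ = v - b z := by rw [hmul]; rfl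
  have hn2 : ‖v - b z‖ ≤ (L:ℝ) * (1 + R) * p := by
    rw [← happ]
    calc ‖(σ z) (Iz (v - b z))‖ ≤ ‖σ z‖ * ‖Iz (v - b z)‖ :=
        ContinuousLinearMap.le_opNorm _ _
      _ ≤ (L:ℝ) * (1 + R) * p := by
          rw [← hpdef]
          exact mul_le_mul_of_nonneg_right hσz (norm_nonneg _)
  have hdiff : Izt ((v + c) - b zt) - Iz (v - b z) =
      (Izt - Iz) (v - b z) + Izt (c + (b z - b zt)) := by
    have e3 : v + c - b zt = (v - b z) + (c + (b z - b zt)) := by abel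
    rw [e3, map_add, ContinuousLinearMap.sub_apply]
    abel
  have hdn : ‖Izt ((v + c) - b zt) - Iz (v - b z)‖ ≤ δ * (K₂ * p + K₁) := by
    rw [hdiff]
    have t1 : ‖(Izt - Iz) (v - b z)‖ ≤ M^2 * ((L:ℝ)*δ) * ((L:ℝ) * (1 + R) * p) := by
      calc ‖(Izt - Iz) (v - b z)‖ ≤ ‖Izt - Iz‖ * ‖v - b z‖ :=
          ContinuousLinearMap.le_opNorm _ _
        _ ≤ M^2 * ((L:ℝ)*δ) * ((L:ℝ) * (1 + R) * p) := by
            have hnn1 := norm_nonneg (Izt - Iz)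
            have hnn2 := norm_nonneg (v - b z)
            have hLR : (0:ℝ) ≤ (L:ℝ) * (1+R) * p := by nlinarith
            nlinarith
    have t2 : ‖Izt (c + (b z - b zt))‖ ≤ M * (δ/T + (L:ℝ)*δ) := by
      calc ‖Izt (c + (b z - b zt))‖ ≤ ‖Izt‖ * ‖c + (b z - b zt)‖ :=
          ContinuousLinearMap.le_opNorm _ _
        _ ≤ M * (δ/T + (L:ℝ)*δ) := by
            have hsum : ‖c + (b z - b zt)‖ ≤ δ/T + (L:ℝ)*δ := by
              have := norm_add_le c (b z - b zt)
              linarith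
            have hnn := norm_nonneg (c + (b z - b zt))
            have hnn2 := norm_nonneg Izt
            nlinarith
    have hfin := norm_add_le ((Izt - Iz) (v - b z)) (Izt (c + (b z - b zt)))
    have hexp : M^2 * ((L:ℝ)*δ) * ((L:ℝ) * (1 + R) * p) + M * (δ/T + (L:ℝ)*δ)
        = δ * (K₂ * p + K₁) := by
      rw [hK₂def, hK₁def]
      field_simp
    linarith
  have hq : ‖Izt ((v + c) - b zt)‖ ≤ p + δ * (K₂ * p + K₁) := by
    calc ‖Izt ((v + c) - b zt)‖
        ≤ ‖Iz (v - b z)‖ + ‖Izt ((v + c) - b zt) - Iz (v - b z)‖ :=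
          norm_le_norm_add_norm_sub' _ _
      _ ≤ p + δ * (K₂ * p + K₁) := by rw [← hpdef]; linarith
  have hq0 := norm_nonneg (Izt ((v + c) - b zt))
  have hsq : ‖Izt ((v + c) - b zt)‖^2 ≤ (p + δ * (K₂ * p + K₁))^2 := by nlinarith
  have halg : (p + δ * (K₂ * p + K₁))^2 ≤
      (1 + δ*(K₁ + 2*K₂ + 2*K₂^2)) * p^2 + δ*(K₁ + 2*K₁^2) := by
    nlinarith [mul_nonneg hδ0 (mul_nonneg hK₁ (sq_nonneg (p - 1))),
      mul_nonneg hδ0 (sq_nonneg (K₂*p - K₁)),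
      mul_nonneg (mul_nonneg hδ0 (by linarith : (0:ℝ) ≤ 1 - δ)) (sq_nonneg (K₂*p + K₁))]
  calc ‖Izt ((v + c) - b zt)‖^2 ≤ (p + δ * (K₂ * p + K₁))^2 := hsq
    _ ≤ (1 + δ*(K₁ + 2*K₂ + 2*K₂^2)) * p^2 + δ*(K₁ + 2*K₁^2) := halg

/-- Integrability of `‖f + c‖²`. -/
lemma add_const_sq_int {T : ℝ} (f : ℝ → EuclideanSpace ℝ (Fin d))
    (c : EuclideanSpace ℝ (Fin d))
    (h1 : IntegrableOn f (Icc 0 T)) (h2 : IntegrableOn (fun t => ‖f t‖^2) (Icc 0 T)) :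
    IntegrableOn (fun t => ‖f t + c‖^2) (Icc 0 T) := by
  have hdom : IntegrableOn (fun t => (‖f t‖^2 + 2*‖c‖*‖f t‖) + ‖c‖^2) (Icc 0 T) :=
    (h2.add (h1.norm.const_mul (2*‖c‖))).add
      (integrableOn_const measure_Icc_lt_top.ne)
  refine Integrable.mono' hdom ?_ ?_
  · exact ((h1.aestronglyMeasurable.add aestronglyMeasurable_const).norm.pow 2)
  · refine ae_of_all _ fun t => ?_
    have hna := norm_add_le (f t) c
    rw [Real.norm_eq_abs, abs_of_nonneg (by positivity : (0:ℝ) ≤ ‖f t + c‖^2)]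
    nlinarith [norm_nonneg (f t + c), norm_nonneg (f t), norm_nonneg c]

end PW
open Metric in
set_option maxHeartbeats 1000000 in
/-- Under the global Lipschitz and invertibility assumptions, every sublevel
set `{x ∈ ℝ^d : I(x) ≤ a}`, `a ∈ [0,∞)`, of the rate function
`I(x) = inf{A(φ) : φ ∈ H¹_{x₀}, φ(T) = x}` is compact. -/
theorem rate_function_sublevel_compact
    (d : ℕ) (hd : 1 ≤ d) (T : ℝ) (hT : 0 < T)
    (x₀ : EuclideanSpace ℝ (Fin d)) (L : NNReal) (hL : 0 < L)
    (b : EuclideanSpace ℝ (Fin d) → EuclideanSpace ℝ (Fin d))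
    (σ : EuclideanSpace ℝ (Fin d) →
      (EuclideanSpace ℝ (Fin d) →L[ℝ] EuclideanSpace ℝ (Fin d)))
    (hb : LipschitzWith L b) (hσ : LipschitzWith L σ)
    (hbound : ‖b 0‖ + ‖σ 0‖ ≤ (L : ℝ))
    (hinv : ∀ x, IsUnit (σ x)) :
    ∀ a : ℝ, 0 ≤ a →
      IsCompact {x : EuclideanSpace ℝ (Fin d) | sInf (rateValues d T x₀ b σ x) ≤ a} := by
  intro a ha
  set R : ℝ := 2 ^ (⌈2*((L:ℝ)*(T + ((a+1) + T/2)))⌉₊) * (1 + ‖x₀‖) with hRdef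
  have hR1 : 1 ≤ R := by
    have h2 : (1:ℝ) ≤ 2 ^ (⌈2*((L:ℝ)*(T + ((a+1) + T/2)))⌉₊) := one_le_pow₀ one_le_two
    nlinarith [norm_nonneg x₀]
  have hlt : ∀ x : EuclideanSpace ℝ (Fin d), ∀ c : ℝ, a < c →
      sInf (rateValues d T x₀ b σ x) ≤ a → ∃ r ∈ rateValues d T x₀ b σ x, r < c := by
    intro x c hc hs
    exact (csInf_lt_iff (rateValues_bddBelow hT.le x₀ x) (rateValues_nonempty hT x₀ x)).1
      (lt_of_le_of_lt hs hc)
  -- boundedness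
  have hBdd : Bornology.IsBounded
      {x : EuclideanSpace ℝ (Fin d) | sInf (rateValues d T x₀ b σ x) ≤ a} := by
    refine (Metric.isBounded_closedBall (x := (0 : EuclideanSpace ℝ (Fin d))) (r := R)).subset ?_
    intro x hx
    obtain ⟨r, hrS, hrlt⟩ := hlt x (a+1) (by linarith) hx
    obtain ⟨φ, φ', h1, h2, hrep, hend, hrdef⟩ := hrS
    have hbnd := key_bound hT x₀ hb hσ hbound hinv a φ φ' h1 h2 hrep (by
      rw [← hrdef]; linarith)
    have hTm : T ∈ Icc (0:ℝ) T := ⟨hT.le, le_rfl⟩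
    have := hbnd T hTm
    rw [hend] at this
    rw [mem_closedBall_zero_iff]
    rw [hRdef]
    linarith
  -- closedness
  have hClosed : IsClosed
      {x : EuclideanSpace ℝ (Fin d) | sInf (rateValues d T x₀ b σ x) ≤ a} := by
    refine isClosed_of_closure_subset ?_
    intro x hx
    have key : ∀ ε : ℝ, 0 < ε → ε ≤ 1 → sInf (rateValues d T x₀ b σ x) ≤ a + ε := by
      intro ε hε hε1
      -- uniform bound for the inverse of σ on the relevant ball
      have hcontinv : Continuous fun z : EuclideanSpace ℝ (Fin d) => Ring.inverse (σ z) := by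
        rw [continuous_iff_continuousAt]
        intro z
        have hc : ContinuousAt Ring.inverse (σ z) := by
          obtain ⟨u, hu⟩ := hinv z
          rw [← hu]
          exact NormedRing.inverse_continuousAt u
        exact hc.comp hσ.continuous.continuousAt
      obtain ⟨M₀, hM₀⟩ := (isCompact_closedBall (0 : EuclideanSpace ℝ (Fin d)) (R+1))
        |>.exists_bound_of_continuousOn hcontinv.continuousOn
      set M : ℝ := max M₀ 0 with hMdef
      have hM : ∀ z ∈ closedBall (0 : EuclideanSpace ℝ (Fin d)) (R+1),
          ‖Ring.inverse (σ z)‖ ≤ M := fun z hz => (hM₀ z hz).trans (le_max_left _ _)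
      have hM0 : 0 ≤ M := le_max_right _ _
      obtain ⟨c₁, c₂, hc₁, hc₂, hPW⟩ :=
        pointwise_bound_ex (b := b) hinv T M R hT hM0 (by linarith : (0:ℝ) ≤ R)
      set D : ℝ := c₁*(a+1) + c₂*T/2 with hDdef
      have hD : 0 ≤ D := by
        rw [hDdef]
        have ha1 := mul_nonneg hc₁ (by linarith : (0:ℝ) ≤ a+1)
        have ha2 : (0:ℝ) ≤ c₂*T/2 := by
          have := mul_nonneg hc₂ hT.le
          linarith
        linarith
      set δ : ℝ := min 1 (ε/(2*(D+1))) with hδdef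
      have hδ0 : 0 < δ := lt_min one_pos (by positivity)
      have hδ1 : δ ≤ 1 := min_le_left _ _
      -- pick a nearby point in the sublevel set
      obtain ⟨y, hyS, hyd⟩ := Metric.mem_closure_iff.1 hx δ hδ0
      obtain ⟨r, hrS, hrlt⟩ := hlt y (a + ε/2) (by linarith) hyS
      have hrnn : 0 ≤ r := rateValues_nonneg hT.le x₀ y r hrS
      obtain ⟨φ, φ', h1, h2, hrep, hend, hrdef⟩ := hrS
      have hr1 : (1/2) * (∫ t in (0:ℝ)..T,
          ‖(Ring.inverse (σ (φ t))) (φ' t - b (φ t))‖^2) ≤ a + 1 := by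
        rw [← hrdef]; linarith
      -- path facts
      have hφc : ContinuousOn φ (Icc 0 T) := by
        have h_int : IntegrableOn φ' (uIcc (0:ℝ) T) := by rwa [uIcc_of_le hT.le]
        have hprim := intervalIntegral.continuousOn_primitive_interval h_int
        rw [uIcc_of_le hT.le] at hprim
        exact (continuousOn_const.add hprim).congr hrep
      obtain ⟨hψ1, hψn, hψ2⟩ := psi_props hT.le hb hσ hinv φ φ' hφc h1 h2
      have hbnd := key_bound hT x₀ hb hσ hbound hinv a φ φ' h1 h2 hrep hr1
      rw [← hRdef] at hbnd
      have hφR : ∀ t ∈ Icc (0:ℝ) T, ‖φ t‖ ≤ R - 1 := fun t ht => by linarith [hbnd t ht]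
      -- the perturbed path
      set c : EuclideanSpace ℝ (Fin d) := T⁻¹ • (x - y) with hcdef
      have hxy : ‖x - y‖ ≤ δ := by
        rw [← dist_eq_norm]; exact hyd.le
      have hcnorm : ‖c‖ ≤ δ / T := by
        rw [hcdef, norm_smul, norm_inv, Real.norm_eq_abs, abs_of_pos hT, inv_mul_eq_div]
        gcongr
      have hIc : IntegrableOn (fun _ : ℝ => c) (Icc 0 T) :=
        integrableOn_const measure_Icc_lt_top.ne
      have h1t : IntegrableOn (fun t => φ' t + c) (Icc 0 T) := h1.add hIc
      have h2t : IntegrableOn (fun t => ‖φ' t + c‖^2) (Icc 0 T) :=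
        add_const_sq_int φ' c h1 h2
      have hrept : ∀ t ∈ Icc (0:ℝ) T,
          φ t + t • c = x₀ + ∫ s in (0:ℝ)..t, (φ' s + c) := by
        intro t ht
        have hIφ' : IntervalIntegrable φ' volume 0 t := by
          rw [intervalIntegrable_iff_integrableOn_Icc_of_le ht.1]
          exact h1.mono_set (Icc_subset_Icc le_rfl ht.2)
        have hIcc : IntervalIntegrable (fun _ : ℝ => c) volume 0 t := by
          rw [intervalIntegrable_iff_integrableOn_Icc_of_le ht.1]
          exact hIc.mono_set (Icc_subset_Icc le_rfl ht.2)
        rw [intervalIntegral.integral_add hIφ' hIcc]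
        rw [intervalIntegral.integral_const, sub_zero, hrep t ht]
        abel
      have hendt : φ T + T • c = x := by
        rw [hend, hcdef, smul_smul, mul_inv_cancel₀ hT.ne', one_smul]
        abel
      have hφtc : ContinuousOn (fun t => φ t + t • c) (Icc 0 T) :=
        hφc.add ((continuous_id.smul continuous_const).continuousOn)
      obtain ⟨hψt1, hψtn, hψt2⟩ := psi_props hT.le hb hσ hinv
        (fun t => φ t + t • c) (fun t => φ' t + c) hφtc h1t h2t
      -- pointwise comparison
      have hptw : ∀ t ∈ Icc (0:ℝ) T,
          ‖(Ring.inverse (σ (φ t + t • c))) ((φ' t + c) - b (φ t + t • c))‖^2 ≤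
            (1 + δ*c₁) * ‖(Ring.inverse (σ (φ t))) (φ' t - b (φ t))‖^2 + δ*c₂ := by
        intro t ht
        have hzR : ‖φ t‖ ≤ R - 1 := hφR t ht
        have htc : ‖t • c‖ ≤ δ := by
          rw [norm_smul, Real.norm_eq_abs, abs_of_nonneg ht.1]
          calc t * ‖c‖ ≤ T * (δ/T) :=
                mul_le_mul ht.2 hcnorm (norm_nonneg c) hT.le
            _ = δ := by field_simp
        have hztR : ‖φ t + t • c‖ ≤ R := by
          have := norm_add_le (φ t) (t • c)
          linarith
        have hd1 : dist (φ t) (φ t + t • c) = ‖t • c‖ := by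
          rw [dist_eq_norm, show φ t - (φ t + t • c) = -(t • c) by abel, norm_neg]
        refine hPW δ hδ0.le hδ1 (φ t) (φ t + t • c) (φ' t) c
          (hM _ (by rw [mem_closedBall_zero_iff]; linarith))
          (hM _ (by rw [mem_closedBall_zero_iff]; linarith))
          ?_ ?_ ?_ hcnorm
        · have h := hσ.dist_le_mul (φ t) (φ t + t • c)
          rw [hd1] at h
          rw [← dist_eq_norm]
          calc dist (σ (φ t)) (σ (φ t + t • c)) ≤ (L:ℝ) * ‖t • c‖ := h
            _ ≤ (L:ℝ) * δ := mul_le_mul_of_nonneg_left htc L.coe_nonneg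
        · have h := hb.dist_le_mul (φ t) (φ t + t • c)
          rw [hd1] at h
          rw [← dist_eq_norm]
          calc dist (b (φ t)) (b (φ t + t • c)) ≤ (L:ℝ) * ‖t • c‖ := h
            _ ≤ (L:ℝ) * δ := mul_le_mul_of_nonneg_left htc L.coe_nonneg
        · have hσ0' : ‖σ 0‖ ≤ (L:ℝ) := by have := norm_nonneg (b 0); linarith
          have hg := lip_growth σ hσ hσ0' (φ t)
          have : (L:ℝ) * (1 + ‖φ t‖) ≤ (L:ℝ) * (1 + R) :=
            mul_le_mul_of_nonneg_left (by linarith) L.coe_nonneg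
          linarith
      -- integrate the pointwise bound
      have hIψ2 : IntervalIntegrable
          (fun t => ‖(Ring.inverse (σ (φ t))) (φ' t - b (φ t))‖^2) volume 0 T :=
        (intervalIntegrable_iff_integrableOn_Icc_of_le hT.le).2 hψ2
      have hIψt2 : IntervalIntegrable
          (fun t => ‖(Ring.inverse (σ (φ t + t • c))) ((φ' t + c) - b (φ t + t • c))‖^2)
          volume 0 T :=
        (intervalIntegrable_iff_integrableOn_Icc_of_le hT.le).2 hψt2
      have hmono : (∫ t in (0:ℝ)..T,
            ‖(Ring.inverse (σ (φ t + t • c))) ((φ' t + c) - b (φ t + t • c))‖^2)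
          ≤ ∫ t in (0:ℝ)..T,
            ((1 + δ*c₁) * ‖(Ring.inverse (σ (φ t))) (φ' t - b (φ t))‖^2 + δ*c₂) := by
        refine intervalIntegral.integral_mono_on hT.le hIψt2
          ((hIψ2.const_mul _).add intervalIntegrable_const) ?_
        intro t ht
        exact hptw t ht
      have hval : (∫ t in (0:ℝ)..T,
            ((1 + δ*c₁) * ‖(Ring.inverse (σ (φ t))) (φ' t - b (φ t))‖^2 + δ*c₂))
          = (1 + δ*c₁) * (∫ t in (0:ℝ)..T,
              ‖(Ring.inverse (σ (φ t))) (φ' t - b (φ t))‖^2) + δ*c₂*T := by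
        rw [intervalIntegral.integral_add (hIψ2.const_mul _) intervalIntegrable_const]
        rw [intervalIntegral.integral_const_mul, intervalIntegral.integral_const]
        simp [smul_eq_mul]
        ring
      have hmem : (1/2) * (∫ t in (0:ℝ)..T,
            ‖(Ring.inverse (σ (φ t + t • c))) ((φ' t + c) - b (φ t + t • c))‖^2)
          ∈ rateValues d T x₀ b σ x :=
        ⟨fun t => φ t + t • c, fun t => φ' t + c, h1t, h2t, hrept, hendt, rfl⟩
      have hle := csInf_le (rateValues_bddBelow hT.le x₀ x) hmem
      have h2r : (∫ t in (0:ℝ)..T, ‖(Ring.inverse (σ (φ t))) (φ' t - b (φ t))‖^2)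
          = 2*r := by rw [hrdef]; ring
      have hδD : δ * D ≤ ε/2 := by
        have hmin : δ ≤ ε/(2*(D+1)) := min_le_right _ _
        have hD1 : (0:ℝ) < D + 1 := by linarith
        calc δ * D ≤ δ * (D+1) := by nlinarith [hδ0.le]
          _ ≤ (ε/(2*(D+1))) * (D+1) := mul_le_mul_of_nonneg_right hmin hD1.le
          _ = ε/2 := by field_simp
      have hrle : r ≤ a + 1 := by linarith
      have hfinal : (1/2) * (∫ t in (0:ℝ)..T,
            ‖(Ring.inverse (σ (φ t + t • c))) ((φ' t + c) - b (φ t + t • c))‖^2)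
          ≤ a + ε := by
        have hδc₁r : δ*c₁*r ≤ δ*c₁*(a+1) :=
          mul_le_mul_of_nonneg_left hrle (mul_nonneg hδ0.le hc₁)
        have hDexp : δ*(c₁*(a+1) + c₂*T/2) = δ*D := by rw [hDdef]
        nlinarith [hmono, hval, h2r, hδD]
      linarith
    show sInf (rateValues d T x₀ b σ x) ≤ a
    by_contra hgt
    push_neg at hgt
    set ε : ℝ := min 1 ((sInf (rateValues d T x₀ b σ x) - a)/2) with hεdef
    have hε0 : 0 < ε := lt_min one_pos (by linarith)
    have h1 := key ε hε0 (min_le_left _ _)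
    have h2 : ε ≤ (sInf (rateValues d T x₀ b σ x) - a)/2 := min_le_right _ _
    linarith
  exact Metric.isCompact_of_isClosed_isBounded hClosed hBdd
end

section
/- Let b : ℝ^d → ℝ^d and σ : ℝ^d → ℝ^{d×d} be globally Lipschitz with constant L and satisfy |b(0)| + |σ(0)| ≤ L, and suppose σ(x) is invertible for every x ∈ ℝ^d. Fix θ ∈ [0,1]. With A(φ) = (1/2)∫₀^T |σ(φ(t))^{-1}(φ'(t) − b(φ(t)))|² dt and B_h(φ) = (1/2)∫₀^T |σ(φ(t̂))^{-1}(φ'(t) − b((1−θ)φ(t̂) + θφ(ť)))|² dt, for every R > 0 there exists a constant K₁(R) > 0 such that for all h = T/N with h ∈ (0,1], sup{ |A(φ) − B_h(φ)| : φ ∈ H¹_{x₀}(0,T;ℝ^d), ‖φ‖_{H¹} ≤ R } ≤ K₁(R) h^{1/2}. -/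
open MeasureTheory Set

lemma meas_comp_countable {α γ E F : Type*} [MeasurableSpace α] [MeasurableSpace γ]
    [MeasurableSingletonClass γ] [MeasurableSpace E] [MeasurableSpace F]
    {P : α → γ} (hP : Measurable P) (hc : (Set.range P).Countable)
    {w : α → E} (hw : Measurable w) (G : γ → E → F) (hG : ∀ p, Measurable (G p)) :
    Measurable (fun t => G (P t) (w t)) := by
  intro s hs
  have : (fun t => G (P t) (w t)) ⁻¹' s
      = ⋃ p ∈ Set.range P, (P ⁻¹' {p} ∩ w ⁻¹' ((G p) ⁻¹' s)) := by
    ext t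
    simp only [mem_preimage, mem_iUnion, mem_inter_iff, mem_singleton_iff]
    constructor
    · intro ht; exact ⟨P t, ⟨t, rfl⟩, rfl, ht⟩
    · rintro ⟨p, _, rfl, ht⟩; exact ht
  rw [this]
  exact MeasurableSet.biUnion hc fun p _ =>
    (hP (measurableSet_singleton p)).inter (hw (hG p hs))

lemma ring_inv_sub {A : Type*} [Ring A] {a c : A} (ha : IsUnit a) (hc : IsUnit c) :
    Ring.inverse a - Ring.inverse c = Ring.inverse a * (c - a) * Ring.inverse c := by
  rw [mul_sub, sub_mul, Ring.inverse_mul_cancel a ha, mul_assoc,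
    Ring.mul_inverse_cancel c hc, mul_one, one_mul]

lemma grid_facts (T : ℝ) (hT : 0 < T) (N : ℕ) (hN : 0 < N) (t : ℝ) (ht : t ∈ Icc 0 T) :
    0 ≤ gridHat (T/N) t ∧ gridHat (T/N) t ≤ t ∧ t - gridHat (T/N) t ≤ T/N ∧
    gridCheck (T/N) t ≤ T ∧ t ≤ gridCheck (T/N) t ∧ gridCheck (T/N) t - t ≤ T/N := by
  set h := T / N with hh
  have hN0 : (0:ℝ) < N := Nat.cast_pos.mpr hN
  have h0 : 0 < h := div_pos hT hN0
  have ht0 : 0 ≤ t := ht.1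
  have htT : t ≤ T := ht.2
  have hfl0 : (0:ℝ) ≤ (⌊t / h⌋ : ℝ) := by
    exact_mod_cast Int.floor_nonneg.mpr (div_nonneg ht0 h0.le)
  have hfle : (⌊t / h⌋ : ℝ) ≤ t / h := Int.floor_le (t / h)
  have hflt : t / h < (⌊t / h⌋ : ℝ) + 1 := Int.lt_floor_add_one (t / h)
  have hcle : t / h ≤ (⌈t / h⌉ : ℝ) := Int.le_ceil (t / h)
  have hceilN : (⌈t / h⌉ : ℝ) ≤ (N : ℝ) := by
    have h1 : (⌈t / h⌉ : ℤ) ≤ (N:ℤ) := Int.ceil_le.mpr (by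
      push_cast
      rw [div_le_iff₀ h0]
      calc t ≤ T := htT
      _ = N * h := by rw [hh]; field_simp [hN0.ne'])
    exact_mod_cast h1
  have hth : t = (t / h) * h := by field_simp
  have hTh : T = N * h := by rw [hh]; field_simp [hN0.ne']
  have hclt : (⌈t / h⌉ : ℝ) < t / h + 1 := Int.ceil_lt_add_one (t / h)
  unfold gridHat gridCheck
  refine ⟨mul_nonneg h0.le hfl0, ?_, ?_, ?_, ?_, ?_⟩ <;>
    nlinarith [mul_le_mul_of_nonneg_left hfle h0.le, mul_le_mul_of_nonneg_left hcle h0.le,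
      mul_le_mul_of_nonneg_left hceilN h0.le, mul_lt_mul_of_pos_left hflt h0,
      mul_lt_mul_of_pos_left hclt h0]

lemma L1_sqrt_bound {E : Type*} [NormedAddCommGroup E] {φ' : ℝ → E} {T R : ℝ}
    (hR : 0 < R)
    (hInt : IntegrableOn φ' (Icc 0 T))
    (hInt2 : IntegrableOn (fun t => ‖φ' t‖ ^ 2) (Icc 0 T))
    (hL2 : ∫ t in Ioc 0 T, ‖φ' t‖ ^ 2 ≤ R ^ 2)
    {s t δ : ℝ} (h0s : 0 ≤ s) (hst : s ≤ t) (htT : t ≤ T) (hδ : 0 < δ) (hts : t - s ≤ δ) :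
    ∫ u in Ioc s t, ‖φ' u‖ ≤ R * Real.sqrt δ := by
  have hsub : Ioc s t ⊆ Icc 0 T := fun u hu => ⟨h0s.trans hu.1.le, hu.2.trans htT⟩
  have hsqδ : 0 < Real.sqrt δ := Real.sqrt_pos.mpr hδ
  set ε : ℝ := Real.sqrt δ / R with hε
  have hε0 : 0 < ε := div_pos hsqδ hR
  have hIntn : IntegrableOn (fun u => ‖φ' u‖) (Ioc s t) := (hInt.mono_set hsub).norm
  have hInt2' : IntegrableOn (fun u => ‖φ' u‖ ^ 2) (Ioc s t) := hInt2.mono_set hsub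
  have hIntrhs : IntegrableOn (fun u => ε / 2 * ‖φ' u‖ ^ 2 + 1 / (2 * ε)) (Ioc s t) :=
    (hInt2'.const_mul (ε / 2)).add (integrableOn_const measure_Ioc_lt_top.ne)
  have step1 : ∫ u in Ioc s t, ‖φ' u‖ ≤ ∫ u in Ioc s t, (ε / 2 * ‖φ' u‖ ^ 2 + 1 / (2 * ε)) := by
    refine setIntegral_mono_on hIntn hIntrhs measurableSet_Ioc fun u _ => ?_
    have h2 : 0 ≤ (ε * ‖φ' u‖ - 1) ^ 2 / (2 * ε) := by positivity
    have h3 : ε / 2 * ‖φ' u‖ ^ 2 + 1 / (2 * ε) - ‖φ' u‖ = (ε * ‖φ' u‖ - 1) ^ 2 / (2 * ε) := by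
      field_simp; ring
    linarith
  have step2 : ∫ u in Ioc s t, (ε / 2 * ‖φ' u‖ ^ 2 + 1 / (2 * ε))
      = ε / 2 * (∫ u in Ioc s t, ‖φ' u‖ ^ 2) + (t - s) * (1 / (2 * ε)) := by
    rw [integral_add (hInt2'.const_mul (ε/2)) (integrableOn_const measure_Ioc_lt_top.ne),
      MeasureTheory.integral_const_mul, setIntegral_const, smul_eq_mul, Real.volume_real_Ioc_of_le (by linarith)]
  have step3 : ∫ u in Ioc s t, ‖φ' u‖ ^ 2 ≤ R ^ 2 := by
    refine le_trans (setIntegral_mono_set (hInt2.mono_set Ioc_subset_Icc_self) ?_ ?_) hL2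
    · exact Filter.Eventually.of_forall fun u => sq_nonneg _
    · exact HasSubset.Subset.eventuallyLE (fun u hu => ⟨lt_of_le_of_lt h0s hu.1, hu.2.trans htT⟩)
  have hδs : Real.sqrt δ * Real.sqrt δ = δ := Real.mul_self_sqrt hδ.le
  have key : ε / 2 * R ^ 2 + δ * (1 / (2 * ε)) = R * Real.sqrt δ := by
    rw [hε]; field_simp; nlinarith
  calc ∫ u in Ioc s t, ‖φ' u‖ ≤ ε / 2 * (∫ u in Ioc s t, ‖φ' u‖ ^ 2) + (t - s) * (1 / (2 * ε)) := by
        rw [← step2]; exact step1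
  _ ≤ ε / 2 * R ^ 2 + δ * (1 / (2 * ε)) := by
      have h1 : 0 < 1 / (2 * ε) := by positivity
      nlinarith [step3]
  _ = R * Real.sqrt δ := key

set_option maxHeartbeats 2000000 in
/-- With `A(φ) = ½∫₀ᵀ |σ(φ(t))⁻¹(φ'(t) − b(φ(t)))|² dt` and
`B_h(φ) = ½∫₀ᵀ |σ(φ(t̂))⁻¹(φ'(t) − b((1−θ)φ(t̂) + θφ(ť)))|² dt`, for every `R > 0` there is
`K₁(R) > 0` such that for every step-size `h = T/N ∈ (0,1]`,
`|A(φ) − B_h(φ)| ≤ K₁(R) h^{1/2}` uniformly over `φ ∈ H¹_{x₀}` with `‖φ‖_{H¹} ≤ R`. -/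
theorem A_Bh_uniform_error_multiplicative
    (d : ℕ) (hd : 1 ≤ d) (T : ℝ) (hT : 0 < T)
    (x₀ : EuclideanSpace ℝ (Fin d)) (L : NNReal) (hL : 0 < L)
    (θ : ℝ) (hθ0 : 0 ≤ θ) (hθ1 : θ ≤ 1)
    (b : EuclideanSpace ℝ (Fin d) → EuclideanSpace ℝ (Fin d))
    (σ : EuclideanSpace ℝ (Fin d) →
      (EuclideanSpace ℝ (Fin d) →L[ℝ] EuclideanSpace ℝ (Fin d)))
    (hb : LipschitzWith L b) (hσ : LipschitzWith L σ)
    (hbound : ‖b 0‖ + ‖σ 0‖ ≤ (L : ℝ))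
    (hinv : ∀ x, IsUnit (σ x)) :
    ∀ R : ℝ, 0 < R → ∃ K₁ : ℝ, 0 < K₁ ∧
      ∀ N : ℕ, 0 < N → T / (N : ℝ) ≤ 1 →
      ∀ φ φ' : ℝ → EuclideanSpace ℝ (Fin d),
        IntegrableOn φ' (Icc 0 T) →
        IntegrableOn (fun t => ‖φ' t‖ ^ 2) (Icc 0 T) →
        (∀ t ∈ Icc (0 : ℝ) T, φ t = x₀ + ∫ s in (0 : ℝ)..t, φ' s) →
        Real.sqrt (∫ t in (0 : ℝ)..T, ‖φ' t‖ ^ 2) ≤ R →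
        |((1 / 2) * ∫ t in (0 : ℝ)..T,
            ‖(Ring.inverse (σ (φ t))) (φ' t - b (φ t))‖ ^ 2) -
          ((1 / 2) * ∫ t in (0 : ℝ)..T,
            ‖(Ring.inverse (σ (φ (gridHat (T / (N : ℝ)) t))))
              (φ' t - b ((1 - θ) • φ (gridHat (T / (N : ℝ)) t)
                + θ • φ (gridCheck (T / (N : ℝ)) t)))‖ ^ 2)| ≤
          K₁ * Real.sqrt (T / (N : ℝ)) := by
  intro R hR
  have hL0 : (0:ℝ) < L := hL
  -- continuity of x ↦ (σ x)⁻¹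
  have hcont : Continuous (fun x : EuclideanSpace ℝ (Fin d) => Ring.inverse (σ x)) := by
    rw [continuous_iff_continuousAt]
    intro x
    obtain ⟨u, hu⟩ := hinv x
    exact ((hu ▸ NormedRing.inverse_continuousAt u :
      ContinuousAt Ring.inverse (σ x))).comp hσ.continuous.continuousAt
  set M : ℝ := ‖x₀‖ + R * Real.sqrt T with hMdef
  have hM0 : 0 ≤ M := by positivity
  obtain ⟨Cinv, hC1, hCbd⟩ : ∃ C : ℝ, 1 ≤ C ∧
      ∀ x : EuclideanSpace ℝ (Fin d), ‖x‖ ≤ M → ‖Ring.inverse (σ x)‖ ≤ C := by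
    obtain ⟨z, _, hzmax⟩ := (isCompact_closedBall (0 : EuclideanSpace ℝ (Fin d)) M).exists_isMaxOn
      ⟨0, Metric.mem_closedBall_self hM0⟩ (continuous_norm.comp hcont).continuousOn
    exact ⟨max 1 ‖Ring.inverse (σ z)‖, le_max_left _ _, fun x hx =>
      le_trans (hzmax (mem_closedBall_zero_iff.mpr hx) : _) (le_max_right _ _)⟩
  have hC0 : (0:ℝ) < Cinv := lt_of_lt_of_le one_pos hC1
  set β : ℝ := L * (1 + M) + 1 with hβdef
  have hβ0 : 0 < β := by positivity
  have hβL : (L:ℝ) * (1 + M) ≤ β := by simp [hβdef]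
  refine ⟨L * R * Cinv^3 * (2*R^2 + 2*β^2*T), by positivity, ?_⟩
  intro N hN hh1 φ φ' hInt hInt2 hφeq hH1
  have hN0 : (0:ℝ) < N := Nat.cast_pos.mpr hN
  set h : ℝ := T / (N:ℝ) with hdef
  have h0 : 0 < h := div_pos hT hN0
  have hsqh : 0 < Real.sqrt h := Real.sqrt_pos.mpr h0
  -- L² bound as a set integral
  have hL2 : ∫ t in Ioc 0 T, ‖φ' t‖ ^ 2 ≤ R ^ 2 := by
    rw [intervalIntegral.integral_of_le hT.le] at hH1
    have hnn : 0 ≤ ∫ t in Ioc 0 T, ‖φ' t‖ ^ 2 :=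
      setIntegral_nonneg measurableSet_Ioc fun _ _ => sq_nonneg _
    calc ∫ t in Ioc 0 T, ‖φ' t‖ ^ 2 = (Real.sqrt (∫ t in Ioc 0 T, ‖φ' t‖ ^ 2)) ^ 2 :=
          (Real.sq_sqrt hnn).symm
    _ ≤ R ^ 2 := by
        have := Real.sqrt_nonneg (∫ t in Ioc 0 T, ‖φ' t‖ ^ 2)
        nlinarith [hH1]
  -- increments of φ
  have hdiffδ : ∀ δ : ℝ, 0 < δ → ∀ s t : ℝ, 0 ≤ s → s ≤ t → t ≤ T → t - s ≤ δ →
      ‖φ t - φ s‖ ≤ R * Real.sqrt δ := by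
    intro δ hδ s t hs hst htT hd
    have hii : ∀ u : ℝ, 0 ≤ u → u ≤ T → IntervalIntegrable φ' volume 0 u := by
      intro u hu huT
      exact (hInt.mono_set (by rw [uIcc_of_le hu]; exact Icc_subset_Icc le_rfl huT)).intervalIntegrable
    have hsub : φ t - φ s = ∫ u in s..t, φ' u := by
      rw [hφeq t ⟨hs.trans hst, htT⟩, hφeq s ⟨hs, hst.trans htT⟩, add_sub_add_left_eq_sub,
        intervalIntegral.integral_interval_sub_left (hii t (hs.trans hst) htT) (hii s hs (hst.trans htT))]
    calc ‖φ t - φ s‖ = ‖∫ u in s..t, φ' u‖ := by rw [hsub]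
    _ ≤ ∫ u in s..t, ‖φ' u‖ := intervalIntegral.norm_integral_le_integral_norm hst
    _ = ∫ u in Ioc s t, ‖φ' u‖ := intervalIntegral.integral_of_le hst
    _ ≤ R * Real.sqrt δ := L1_sqrt_bound hR hInt hInt2 hL2 hs hst htT hδ hd
  have hφ0 : φ 0 = x₀ := by
    rw [hφeq 0 ⟨le_rfl, hT.le⟩, intervalIntegral.integral_same, add_zero]
  have hφM : ∀ t ∈ Icc (0:ℝ) T, ‖φ t‖ ≤ M := by
    intro t ht
    have h1 := hdiffδ T hT 0 t le_rfl ht.1 ht.2 (by linarith [ht.2])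
    have h2 : ‖φ t‖ - ‖φ 0‖ ≤ ‖φ t - φ 0‖ := norm_sub_norm_le _ _
    rw [hφ0] at h1 h2
    rw [hMdef]; linarith
  -- bound on b
  have hbM : ∀ x : EuclideanSpace ℝ (Fin d), ‖x‖ ≤ M → ‖b x‖ ≤ (L:ℝ) * (1 + M) := by
    intro x hx
    have h1 : ‖b x - b 0‖ ≤ (L:ℝ) * ‖x‖ := by
      have := hb.dist_le_mul x 0
      rwa [dist_eq_norm, dist_eq_norm, sub_zero] at this
    have h2 : ‖b 0‖ ≤ (L:ℝ) := le_trans (le_add_of_nonneg_right (norm_nonneg _)) hbound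
    have h3 : ‖b x‖ - ‖b 0‖ ≤ ‖b x - b 0‖ := norm_sub_norm_le _ _
    have h4 : (L:ℝ) * ‖x‖ ≤ (L:ℝ) * M := mul_le_mul_of_nonneg_left hx L.coe_nonneg
    linarith
  -- Lipschitz bound for b
  have hbLip : ∀ x y : EuclideanSpace ℝ (Fin d), ‖b x - b y‖ ≤ (L:ℝ) * ‖x - y‖ := by
    intro x y
    have := hb.dist_le_mul x y
    rwa [dist_eq_norm, dist_eq_norm] at this
  -- difference of inverses
  have hinvd : ∀ x y : EuclideanSpace ℝ (Fin d), ‖x‖ ≤ M → ‖y‖ ≤ M →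
      ‖Ring.inverse (σ x) - Ring.inverse (σ y)‖ ≤ Cinv^2 * L * ‖x - y‖ := by
    intro x y hx hy
    rw [ring_inv_sub (hinv x) (hinv y)]
    have hσd : ‖σ y - σ x‖ ≤ (L:ℝ) * ‖x - y‖ := by
      have := hσ.dist_le_mul y x
      rw [dist_eq_norm, dist_eq_norm] at this
      rwa [norm_sub_rev x y]
    calc ‖Ring.inverse (σ x) * (σ y - σ x) * Ring.inverse (σ y)‖
        ≤ ‖Ring.inverse (σ x) * (σ y - σ x)‖ * ‖Ring.inverse (σ y)‖ := norm_mul_le _ _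
    _ ≤ ‖Ring.inverse (σ x)‖ * ‖σ y - σ x‖ * ‖Ring.inverse (σ y)‖ :=
        mul_le_mul_of_nonneg_right (norm_mul_le _ _) (norm_nonneg _)
    _ ≤ Cinv * ((L:ℝ) * ‖x - y‖) * Cinv := by
        have hbx := hCbd x hx
        have hby := hCbd y hy
        have hn1 : (0:ℝ) ≤ ‖Ring.inverse (σ x)‖ := norm_nonneg _
        have hn2 : (0:ℝ) ≤ ‖σ y - σ x‖ := norm_nonneg _
        have hn3 : (0:ℝ) ≤ ‖Ring.inverse (σ y)‖ := norm_nonneg _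
        have hn4 : (0:ℝ) ≤ ‖x - y‖ := norm_nonneg _
        exact mul_le_mul (mul_le_mul hbx hσd hn2 hC0.le) hby hn3 (by positivity)
    _ = Cinv^2 * L * ‖x - y‖ := by ring
  -- the two integrands
  set fF : ℝ → ℝ := fun t => ‖(Ring.inverse (σ (φ t))) (φ' t - b (φ t))‖ ^ 2 with hfFdef
  set gF : ℝ → ℝ := fun t => ‖(Ring.inverse (σ (φ (gridHat h t))))
      (φ' t - b ((1 - θ) • φ (gridHat h t) + θ • φ (gridCheck h t)))‖ ^ 2 with hgFdef
  have hCinv2 : (0:ℝ) ≤ Cinv^2 := sq_nonneg _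
  have hCinv3 : (0:ℝ) ≤ Cinv^3 := by positivity
  -- pointwise bounds
  have hpt : ∀ t ∈ Ioc (0:ℝ) T,
      fF t ≤ 2*Cinv^2*‖φ' t‖^2 + 2*Cinv^2*β^2 ∧
      gF t ≤ 2*Cinv^2*‖φ' t‖^2 + 2*Cinv^2*β^2 ∧
      |fF t - gF t| ≤ 2*(L:ℝ)*R*Real.sqrt h*Cinv^3 * (2*‖φ' t‖^2 + 2*β^2) := by
    intro t ht
    have htIcc : t ∈ Icc (0:ℝ) T := ⟨ht.1.le, ht.2⟩
    obtain ⟨g1, g2, g3, g4, g5, g6⟩ := grid_facts T hT N hN t htIcc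
    rw [← hdef] at g1 g2 g3 g4 g5 g6
    have hhatIcc : gridHat h t ∈ Icc (0:ℝ) T := ⟨g1, g2.trans ht.2⟩
    have hcheckIcc : gridCheck h t ∈ Icc (0:ℝ) T := ⟨ht.1.le.trans g5, g4⟩
    have hxM := hφM t htIcc
    have hhM := hφM _ hhatIcc
    have hkM := hφM _ hcheckIcc
    have hd1 : ‖φ t - φ (gridHat h t)‖ ≤ R * Real.sqrt h := hdiffδ h h0 _ t g1 g2 ht.2 g3
    have hd2 : ‖φ (gridCheck h t) - φ t‖ ≤ R * Real.sqrt h := hdiffδ h h0 t _ ht.1.le g5 g4 g6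
    set ccomb := (1 - θ) • φ (gridHat h t) + θ • φ (gridCheck h t) with hccomb
    have hcombM : ‖ccomb‖ ≤ M := by
      calc ‖ccomb‖ ≤ ‖(1-θ) • φ (gridHat h t)‖ + ‖θ • φ (gridCheck h t)‖ := norm_add_le _ _
      _ = (1-θ) * ‖φ (gridHat h t)‖ + θ * ‖φ (gridCheck h t)‖ := by
          rw [norm_smul, norm_smul, Real.norm_eq_abs, Real.norm_eq_abs,
            abs_of_nonneg (by linarith), abs_of_nonneg hθ0]
      _ ≤ M := by
          have h1 : (1-θ) * ‖φ (gridHat h t)‖ ≤ (1-θ) * M :=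
            mul_le_mul_of_nonneg_left hhM (by linarith)
          have h2 : θ * ‖φ (gridCheck h t)‖ ≤ θ * M := mul_le_mul_of_nonneg_left hkM hθ0
          linarith
    have hcombd : ‖ccomb - φ t‖ ≤ R * Real.sqrt h := by
      have hsplit : ccomb - φ t
          = (1-θ) • (φ (gridHat h t) - φ t) + θ • (φ (gridCheck h t) - φ t) := by
        rw [hccomb]; module
      rw [hsplit]
      have hr1 : ‖φ (gridHat h t) - φ t‖ ≤ R * Real.sqrt h := by rwa [norm_sub_rev]
      calc ‖(1-θ) • (φ (gridHat h t) - φ t) + θ • (φ (gridCheck h t) - φ t)‖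
          ≤ ‖(1-θ) • (φ (gridHat h t) - φ t)‖ + ‖θ • (φ (gridCheck h t) - φ t)‖ := norm_add_le _ _
      _ = (1-θ) * ‖φ (gridHat h t) - φ t‖ + θ * ‖φ (gridCheck h t) - φ t‖ := by
          rw [norm_smul, norm_smul, Real.norm_eq_abs, Real.norm_eq_abs,
            abs_of_nonneg (by linarith), abs_of_nonneg hθ0]
      _ ≤ R * Real.sqrt h := by
          have h1 : (1-θ) * ‖φ (gridHat h t) - φ t‖ ≤ (1-θ) * (R * Real.sqrt h) :=
            mul_le_mul_of_nonneg_left hr1 (by linarith)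
          have h2 : θ * ‖φ (gridCheck h t) - φ t‖ ≤ θ * (R * Real.sqrt h) :=
            mul_le_mul_of_nonneg_left hd2 hθ0
          linarith
    set A1 := Ring.inverse (σ (φ t)) with hA1
    set A2 := Ring.inverse (σ (φ (gridHat h t))) with hA2
    have hA1n : ‖A1‖ ≤ Cinv := hCbd _ hxM
    have hA2n : ‖A2‖ ≤ Cinv := hCbd _ hhM
    set u := A1 (φ' t - b (φ t)) with hu
    set v := A2 (φ' t - b ccomb) with hv
    have hfFt : fF t = ‖u‖^2 := rfl
    have hgFt : gF t = ‖v‖^2 := rfl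
    have hP0 : (0:ℝ) ≤ ‖φ' t‖ := norm_nonneg _
    have harg1 : ‖φ' t - b (φ t)‖ ≤ ‖φ' t‖ + (L:ℝ)*(1+M) := by
      have h1 := hbM _ hxM
      have h2 := norm_sub_le (φ' t) (b (φ t))
      linarith
    have harg1β : ‖φ' t - b (φ t)‖ ≤ ‖φ' t‖ + β := by linarith [hβL]
    have harg2β : ‖φ' t - b ccomb‖ ≤ ‖φ' t‖ + β := by
      have h1 := hbM _ hcombM
      have h2 := norm_sub_le (φ' t) (b ccomb)
      linarith [hβL]
    have hPβ : (0:ℝ) ≤ ‖φ' t‖ + β := by linarith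
    have hun : ‖u‖ ≤ Cinv * (‖φ' t‖ + β) :=
      (A1.le_opNorm _).trans (mul_le_mul hA1n harg1β (norm_nonneg _) hC0.le)
    have hvn : ‖v‖ ≤ Cinv * (‖φ' t‖ + β) :=
      (A2.le_opNorm _).trans (mul_le_mul hA2n harg2β (norm_nonneg _) hC0.le)
    have huv : ‖u - v‖ ≤ (L:ℝ)*R*Real.sqrt h*Cinv^2*(‖φ' t‖ + β) := by
      have hsplit : u - v = (A1 - A2) (φ' t - b (φ t)) + A2 (b ccomb - b (φ t)) := by
        simp only [hu, hv, ContinuousLinearMap.sub_apply, map_sub]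
        abel
      have hbd1 : ‖(A1 - A2) (φ' t - b (φ t))‖
          ≤ (Cinv^2 * L * (R*Real.sqrt h)) * (‖φ' t‖ + (L:ℝ)*(1+M)) := by
        refine ((A1 - A2).le_opNorm _).trans (mul_le_mul ?_ harg1 (norm_nonneg _) ?_)
        · exact (hinvd _ _ hxM hhM).trans (mul_le_mul_of_nonneg_left hd1
            (by positivity))
        · positivity
      have hbd2 : ‖A2 (b ccomb - b (φ t))‖ ≤ Cinv * ((L:ℝ)*(R*Real.sqrt h)) := by
        refine (A2.le_opNorm _).trans (mul_le_mul hA2n ?_ (norm_nonneg _) hC0.le)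
        exact (hbLip _ _).trans (mul_le_mul_of_nonneg_left hcombd L.coe_nonneg)
      have h3 : ‖u - v‖ ≤ (Cinv^2 * L * (R*Real.sqrt h)) * (‖φ' t‖ + (L:ℝ)*(1+M))
          + Cinv * ((L:ℝ)*(R*Real.sqrt h)) := by
        rw [hsplit]; exact (norm_add_le _ _).trans (add_le_add hbd1 hbd2)
      have h4 : (0:ℝ) ≤ (L:ℝ)*R*Real.sqrt h*(Cinv*(Cinv-1)) := by
        have : (0:ℝ) ≤ Cinv*(Cinv-1) := mul_nonneg hC0.le (by linarith)
        have h5 : (0:ℝ) ≤ (L:ℝ)*R*Real.sqrt h := by positivity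
        exact mul_nonneg h5 this
      have hident : (L:ℝ)*R*Real.sqrt h*Cinv^2*(‖φ' t‖ + β)
          = (Cinv^2 * L * (R*Real.sqrt h)) * (‖φ' t‖ + (L:ℝ)*(1+M))
            + Cinv * ((L:ℝ)*(R*Real.sqrt h)) + (L:ℝ)*R*Real.sqrt h*(Cinv*(Cinv-1)) := by
        rw [hβdef]; ring
      linarith [h3, h4]
    refine ⟨?_, ?_, ?_⟩
    · rw [hfFt, pow_two]
      have hsq := mul_self_le_mul_self (norm_nonneg u) hun
      have hident : (Cinv*(‖φ' t‖+β))*(Cinv*(‖φ' t‖+β)) + (Cinv*(‖φ' t‖-β))^2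
          = 2*Cinv^2*‖φ' t‖^2 + 2*Cinv^2*β^2 := by ring
      linarith [sq_nonneg (Cinv*(‖φ' t‖-β))]
    · rw [hgFt, pow_two]
      have hsq := mul_self_le_mul_self (norm_nonneg v) hvn
      have hident : (Cinv*(‖φ' t‖+β))*(Cinv*(‖φ' t‖+β)) + (Cinv*(‖φ' t‖-β))^2
          = 2*Cinv^2*‖φ' t‖^2 + 2*Cinv^2*β^2 := by ring
      linarith [sq_nonneg (Cinv*(‖φ' t‖-β))]
    · rw [hfFt, hgFt]
      have habs : |‖u‖^2 - ‖v‖^2| ≤ (‖u‖+‖v‖) * ‖u-v‖ := by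
        have h1 : |‖u‖ - ‖v‖| ≤ ‖u-v‖ := abs_norm_sub_norm_le u v
        have h2 : ‖u‖^2 - ‖v‖^2 = (‖u‖+‖v‖)*(‖u‖-‖v‖) := by ring
        rw [h2, abs_mul, abs_of_nonneg (by positivity)]
        exact mul_le_mul_of_nonneg_left h1 (by positivity)
      calc |‖u‖^2-‖v‖^2| ≤ (‖u‖+‖v‖)*‖u-v‖ := habs
      _ ≤ (2*Cinv*(‖φ' t‖+β)) * ((L:ℝ)*R*Real.sqrt h*Cinv^2*(‖φ' t‖+β)) := by
          refine mul_le_mul (by linarith) huv (norm_nonneg _) ?_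
          have : (0:ℝ) ≤ Cinv*(‖φ' t‖+β) := mul_nonneg hC0.le hPβ
          linarith
      _ = 2*(L:ℝ)*R*Real.sqrt h*Cinv^3*(‖φ' t‖+β)^2 := by ring
      _ ≤ 2*(L:ℝ)*R*Real.sqrt h*Cinv^3 * (2*‖φ' t‖^2+2*β^2) := by
          have h5 : (‖φ' t‖+β)^2 ≤ 2*‖φ' t‖^2+2*β^2 := by
            have hid : 2*‖φ' t‖^2+2*β^2 - (‖φ' t‖+β)^2 = (‖φ' t‖-β)^2 := by ring
            linarith [sq_nonneg (‖φ' t‖-β)]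
          have h6 : (0:ℝ) ≤ 2*(L:ℝ)*R*Real.sqrt h*Cinv^3 := by positivity
          exact mul_le_mul_of_nonneg_left h5 h6
  -- basic integrability on (0, T]
  have hIoc : IntegrableOn φ' (Ioc 0 T) := hInt.mono_set Ioc_subset_Icc_self
  have hIoc2 : IntegrableOn (fun t => ‖φ' t‖ ^ 2) (Ioc 0 T) := hInt2.mono_set Ioc_subset_Icc_self
  have hφ'm : AEStronglyMeasurable φ' (volume.restrict (Ioc 0 T)) := hIoc.1
  -- measurability of fF
  have hψc : ContinuousOn (fun t => x₀ + ∫ u in Ioc 0 t, φ' u) (Icc 0 T) :=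
    continuousOn_const.add (intervalIntegral.continuousOn_primitive hInt)
  have hφψ : ∀ t ∈ Icc (0:ℝ) T, φ t = x₀ + ∫ u in Ioc 0 t, φ' u := by
    intro t ht
    rw [hφeq t ht, intervalIntegral.integral_of_le ht.1]
  have hψm : AEStronglyMeasurable (fun t => x₀ + ∫ u in Ioc 0 t, φ' u)
      (volume.restrict (Ioc 0 T)) :=
    (hψc.aestronglyMeasurable measurableSet_Icc).mono_measure
      (Measure.restrict_mono Ioc_subset_Icc_self le_rfl)
  have hFc : Continuous (fun p : (EuclideanSpace ℝ (Fin d)) × (EuclideanSpace ℝ (Fin d)) =>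
      ‖(Ring.inverse (σ p.1)) (p.2 - b p.1)‖ ^ 2) :=
    ((hcont.comp continuous_fst).clm_apply
      (continuous_snd.sub (hb.continuous.comp continuous_fst))).norm.pow 2
  have hfm : AEStronglyMeasurable fF (volume.restrict (Ioc 0 T)) := by
    have h1 := hFc.comp_aestronglyMeasurable (hψm.prodMk hφ'm)
    refine h1.congr ?_
    filter_upwards [ae_restrict_mem measurableSet_Ioc] with t ht
    simp only [hfFdef]
    rw [hφψ t ⟨ht.1.le, ht.2⟩]
  -- measurability of gF
  obtain ⟨w, hwsm, hweq⟩ := hφ'm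
  have hPm : Measurable (fun t : ℝ => (gridHat h t, gridCheck h t)) := by
    have m0 : Measurable (fun t : ℝ => t / h) := measurable_id.div_const h
    have m1 : Measurable (fun t : ℝ => gridHat h t) := by
      unfold gridHat
      exact measurable_const.mul ((Measurable.of_discrete (f := (Int.cast : ℤ → ℝ))).comp
        (Int.measurable_floor.comp m0))
    have m2 : Measurable (fun t : ℝ => gridCheck h t) := by
      unfold gridCheck
      exact measurable_const.mul ((Measurable.of_discrete (f := (Int.cast : ℤ → ℝ))).comp
        (Int.measurable_ceil.comp m0))
    exact m1.prodMk m2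
  have hPc : (Set.range (fun t : ℝ => (gridHat h t, gridCheck h t))).Countable := by
    refine Set.Countable.mono ?_ ((Set.countable_range (fun k : ℤ => h * (k:ℝ))).prod
      (Set.countable_range (fun k : ℤ => h * (k:ℝ))))
    rintro ⟨a, c⟩ ⟨t, ht⟩
    rw [← ht]
    exact ⟨⟨⌊t / h⌋, rfl⟩, ⟨⌈t / h⌉, rfl⟩⟩
  have hG2 : ∀ p : ℝ × ℝ, Measurable (fun y : EuclideanSpace ℝ (Fin d) =>
      ‖(Ring.inverse (σ (φ p.1))) (y - b ((1 - θ) • φ p.1 + θ • φ p.2))‖ ^ 2) := by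
    intro p
    exact (((Ring.inverse (σ (φ p.1))).continuous.comp
      (continuous_id.sub continuous_const)).norm.pow 2).measurable
  have hgm0 : Measurable (fun t : ℝ =>
      ‖(Ring.inverse (σ (φ (gridHat h t))))
        (w t - b ((1 - θ) • φ (gridHat h t) + θ • φ (gridCheck h t)))‖ ^ 2) :=
    meas_comp_countable hPm hPc hwsm.measurable
      (fun p (y : EuclideanSpace ℝ (Fin d)) =>
        ‖(Ring.inverse (σ (φ p.1))) (y - b ((1 - θ) • φ p.1 + θ • φ p.2))‖ ^ 2) hG2
  have hgm : AEStronglyMeasurable gF (volume.restrict (Ioc 0 T)) := by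
    refine hgm0.aestronglyMeasurable.congr ?_
    filter_upwards [hweq] with t htw
    simp only [hgFdef]
    rw [htw]
  -- integrability of fF and gF
  have hfF0 : ∀ t, 0 ≤ fF t := fun t => sq_nonneg _
  have hgF0 : ∀ t, 0 ≤ gF t := fun t => sq_nonneg _
  have hDint : Integrable (fun t => 2*Cinv^2*‖φ' t‖^2 + 2*Cinv^2*β^2)
      (volume.restrict (Ioc 0 T)) :=
    (hIoc2.const_mul (2*Cinv^2)).add (integrableOn_const measure_Ioc_lt_top.ne)
  have hfInt : IntegrableOn fF (Ioc 0 T) := by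
    refine Integrable.mono' hDint hfm ?_
    filter_upwards [ae_restrict_mem measurableSet_Ioc] with t ht
    rw [Real.norm_eq_abs, abs_of_nonneg (hfF0 t)]
    exact (hpt t ht).1
  have hgInt : IntegrableOn gF (Ioc 0 T) := by
    refine Integrable.mono' hDint hgm ?_
    filter_upwards [ae_restrict_mem measurableSet_Ioc] with t ht
    rw [Real.norm_eq_abs, abs_of_nonneg (hgF0 t)]
    exact (hpt t ht).2.1
  -- assemble the final bound
  have hIf : (∫ t in (0:ℝ)..T, fF t) = ∫ t in Ioc 0 T, fF t :=
    intervalIntegral.integral_of_le hT.le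
  have hIg : (∫ t in (0:ℝ)..T, gF t) = ∫ t in Ioc 0 T, gF t :=
    intervalIntegral.integral_of_le hT.le
  have h1 : |(∫ t in Ioc 0 T, fF t) - (∫ t in Ioc 0 T, gF t)|
      ≤ ∫ t in Ioc 0 T, |fF t - gF t| := by
    rw [← integral_sub hfInt hgInt]
    simpa [Real.norm_eq_abs] using
      norm_integral_le_integral_norm (μ := volume.restrict (Ioc 0 T)) (fun t => fF t - gF t)
  have hbigInt : Integrable (fun t => 2*(L:ℝ)*R*Real.sqrt h*Cinv^3 * (2*‖φ' t‖^2 + 2*β^2))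
      (volume.restrict (Ioc 0 T)) :=
    ((hIoc2.const_mul 2).add
      (integrableOn_const measure_Ioc_lt_top.ne)).const_mul _
  have h2 : ∫ t in Ioc 0 T, |fF t - gF t|
      ≤ ∫ t in Ioc 0 T, (2*(L:ℝ)*R*Real.sqrt h*Cinv^3 * (2*‖φ' t‖^2 + 2*β^2)) := by
    refine setIntegral_mono_on (hfInt.sub hgInt).abs hbigInt measurableSet_Ioc
      fun t ht => (hpt t ht).2.2
  have h3 : ∫ t in Ioc 0 T, (2*(L:ℝ)*R*Real.sqrt h*Cinv^3 * (2*‖φ' t‖^2 + 2*β^2))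
      = 2*(L:ℝ)*R*Real.sqrt h*Cinv^3 * (2*(∫ t in Ioc 0 T, ‖φ' t‖^2) + 2*β^2*(T-0)) := by
    rw [MeasureTheory.integral_const_mul,
      integral_add (hIoc2.const_mul 2) (integrableOn_const measure_Ioc_lt_top.ne),
      MeasureTheory.integral_const_mul, setIntegral_const, smul_eq_mul, Real.volume_real_Ioc_of_le (by linarith)]
    ring
  have hCnn : (0:ℝ) ≤ 2*(L:ℝ)*R*Real.sqrt h*Cinv^3 :=
    mul_nonneg (mul_nonneg (mul_nonneg (mul_nonneg (by norm_num) L.coe_nonneg) hR.le)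
      (Real.sqrt_nonneg h)) (pow_nonneg hC0.le 3)
  have h4 : 2*(L:ℝ)*R*Real.sqrt h*Cinv^3 * (2*(∫ t in Ioc 0 T, ‖φ' t‖^2) + 2*β^2*(T-0))
      ≤ 2*(L:ℝ)*R*Real.sqrt h*Cinv^3 * (2*R^2 + 2*β^2*T) :=
    mul_le_mul_of_nonneg_left (by linarith [hL2]) hCnn
  have hfinal : |(1/2) * (∫ t in (0:ℝ)..T, fF t) - (1/2) * (∫ t in (0:ℝ)..T, gF t)|
      ≤ (L:ℝ) * R * Cinv^3 * (2*R^2 + 2*β^2*T) * Real.sqrt h := by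
    rw [hIf, hIg, ← mul_sub, abs_mul, abs_of_nonneg (by norm_num : (0:ℝ) ≤ 1/2)]
    have h5 := (h1.trans (h2.trans_eq h3)).trans h4
    have h6 : (L:ℝ) * R * Cinv^3 * (2*R^2 + 2*β^2*T) * Real.sqrt h
        = (1/2) * (2*(L:ℝ)*R*Real.sqrt h*Cinv^3 * (2*R^2 + 2*β^2*T)) := by ring
    rw [h6]
    exact mul_le_mul_of_nonneg_left h5 (by norm_num : (0:ℝ) ≤ 1/2)
  exact hfinal
end

section
/- Let b : ℝ^d → ℝ^d be globally Lipschitz with constant L and |b(0)| ≤ L, and let σ = I_d be the identity matrix. Fix θ ∈ [0,1]. With A(φ) = (1/2)∫₀^T |φ'(t) − b(φ(t))|² dt and B_h(φ) = (1/2)∫₀^T |φ'(t) − b((1−θ)φ(t̂) + θφ(ť))|² dt, for every R > 0 there exists a constant K₂(R) > 0 such that for all h = T/N with h ∈ (0,1], sup{ |A(φ) − B_h(φ)| : φ ∈ H¹_{x₀}(0,T;ℝ^d), ‖φ‖_{H¹} ≤ R } ≤ K₂(R) h. -/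
open MeasureTheory Set

open intervalIntegral

section Helpers

lemma cs_interval (f : ℝ → ℝ) (s t : ℝ) (hst : s ≤ t)
    (hf0 : ∀ x, 0 ≤ f x)
    (hfi : IntervalIntegrable f volume s t)
    (hfi2 : IntervalIntegrable (fun x => f x ^ 2) volume s t) :
    (∫ x in s..t, f x) ^ 2 ≤ (t - s) * ∫ x in s..t, f x ^ 2 := by
  rcases eq_or_lt_of_le hst with rfl | hlt
  · simp
  set I := ∫ x in s..t, f x with hI
  set J := ∫ x in s..t, f x ^ 2 with hJ
  have hI0 : 0 ≤ I := intervalIntegral.integral_nonneg hst (fun x _ => hf0 x)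
  have hJ0 : 0 ≤ J := intervalIntegral.integral_nonneg hst (fun x _ => sq_nonneg _)
  set a : ℝ := I / (t - s) with ha
  have key : ∀ x ∈ Icc s t, 2 * a * f x ≤ f x ^ 2 + a ^ 2 := by
    intro x _
    nlinarith [sq_nonneg (f x - a)]
  have hmono : ∫ x in s..t, 2 * a * f x ≤ ∫ x in s..t, (f x ^ 2 + a ^ 2) := by
    apply intervalIntegral.integral_mono_on hst (hfi.const_mul _)
      (hfi2.add intervalIntegrable_const) key
  rw [intervalIntegral.integral_const_mul, intervalIntegral.integral_add hfi2
    intervalIntegrable_const, intervalIntegral.integral_const] at hmono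
  have hts : 0 < t - s := by linarith
  rw [ha] at hmono
  have : 2 * (I / (t - s)) * I ≤ J + (I / (t-s))^2 * (t - s) := by
    simpa [smul_eq_mul, mul_comm] using hmono
  rw [div_pow] at this
  have hmul : 2 * I * I ≤ (J + I ^ 2 / (t - s) ^ 2 * (t - s)) * (t - s) := by
    have := mul_le_mul_of_nonneg_right this hts.le
    calc 2 * I * I = 2 * (I / (t - s)) * I * (t - s) := by field_simp
      _ ≤ _ := this
  have heq : I ^ 2 / (t - s) ^ 2 * (t - s) * (t - s) = I ^ 2 := by
    field_simp
  nlinarith [hmul, heq]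

lemma gridHat_le {h : ℝ} (hh : 0 < h) (t : ℝ) : gridHat h t ≤ t := by
  have := mul_le_mul_of_nonneg_left (Int.floor_le (t / h)) hh.le
  calc gridHat h t ≤ h * (t / h) := this
    _ = t := by field_simp

lemma le_gridCheck {h : ℝ} (hh : 0 < h) (t : ℝ) : t ≤ gridCheck h t := by
  have := mul_le_mul_of_nonneg_left (Int.le_ceil (t / h)) hh.le
  calc t = h * (t / h) := by field_simp
    _ ≤ gridCheck h t := this

lemma gridHat_ge {h : ℝ} (hh : 0 < h) {k : ℕ} {t : ℝ} (ht : (k : ℝ) * h ≤ t) :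
    (k : ℝ) * h ≤ gridHat h t := by
  have hk : ((k : ℤ) : ℝ) ≤ t / h := by
    rw [le_div_iff₀ hh]; push_cast; linarith
  have := Int.le_floor.mpr hk
  have : ((k : ℤ) : ℝ) ≤ (⌊t / h⌋ : ℝ) := by exact_mod_cast this
  have := mul_le_mul_of_nonneg_left this hh.le
  push_cast at this ⊢
  unfold gridHat; linarith

lemma gridCheck_le {h : ℝ} (hh : 0 < h) {k : ℕ} {t : ℝ} (ht : t ≤ (k : ℝ) * h) :
    gridCheck h t ≤ (k : ℝ) * h := by
  have hk : t / h ≤ ((k : ℤ) : ℝ) := by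
    rw [div_le_iff₀ hh]; push_cast; linarith
  have := Int.ceil_le.mpr hk
  have : (⌈t / h⌉ : ℝ) ≤ ((k : ℤ) : ℝ) := by exact_mod_cast this
  have := mul_le_mul_of_nonneg_left this hh.le
  push_cast at this ⊢
  unfold gridCheck; linarith

lemma gridHat_nonneg {h : ℝ} (hh : 0 < h) {t : ℝ} (ht : 0 ≤ t) : 0 ≤ gridHat h t := by
  have := gridHat_ge hh (k := 0) (t := t) (by simpa using ht)
  simpa using this

lemma gridHat_le_gridCheck {h : ℝ} (hh : 0 < h) (t : ℝ) : gridHat h t ≤ gridCheck h t :=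
  (gridHat_le hh t).trans (le_gridCheck hh t)

lemma measurable_comp_grid {X : Type*} [MeasurableSpace X] {h : ℝ}
    (F : ℤ × ℤ → X) :
    Measurable (fun t : ℝ => F (⌊t / h⌋, ⌈t / h⌉)) := by
  have h1 : Measurable (fun t : ℝ => (⌊t / h⌋, ⌈t / h⌉)) :=
    ((measurable_id.div_const h).floor).prodMk ((measurable_id.div_const h).ceil)
  exact (measurable_of_countable F).comp h1

lemma sq_norm_diff_bound {E : Type*} [NormedAddCommGroup E] (a c : E) :
    |‖a‖ ^ 2 - ‖c‖ ^ 2| ≤ ‖a - c‖ * (‖a‖ + ‖c‖) := by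
  have h1 := abs_norm_sub_norm_le a c
  rw [abs_le] at h1 ⊢
  constructor <;> nlinarith [norm_nonneg a, norm_nonneg c, norm_nonneg (a - c), h1.1, h1.2]

end Helpers

set_option maxHeartbeats 4000000 in
/-- In the additive-noise case `σ = I_d`, with
`A(φ) = ½∫₀ᵀ |φ'(t) − b(φ(t))|² dt` and
`B_h(φ) = ½∫₀ᵀ |φ'(t) − b((1−θ)φ(t̂) + θφ(ť))|² dt`, for every `R > 0` there is
`K₂(R) > 0` such that for all `h = T/N ∈ (0,1]`,
`|A(φ) − B_h(φ)| ≤ K₂(R) h` uniformly over `φ ∈ H¹_{x₀}` with `‖φ‖_{H¹} ≤ R`. -/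
theorem A_Bh_uniform_error_additive
    (d : ℕ) (hd : 1 ≤ d) (T : ℝ) (hT : 0 < T)
    (x₀ : EuclideanSpace ℝ (Fin d)) (L : NNReal) (hL : 0 < L)
    (θ : ℝ) (hθ0 : 0 ≤ θ) (hθ1 : θ ≤ 1)
    (b : EuclideanSpace ℝ (Fin d) → EuclideanSpace ℝ (Fin d))
    (hb : LipschitzWith L b) (hbound : ‖b 0‖ ≤ (L : ℝ)) :
    ∀ R : ℝ, 0 < R → ∃ K₂ : ℝ, 0 < K₂ ∧
      ∀ N : ℕ, 0 < N → T / (N : ℝ) ≤ 1 →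
      ∀ φ φ' : ℝ → EuclideanSpace ℝ (Fin d),
        IntegrableOn φ' (Icc 0 T) →
        IntegrableOn (fun t => ‖φ' t‖ ^ 2) (Icc 0 T) →
        (∀ t ∈ Icc (0 : ℝ) T, φ t = x₀ + ∫ s in (0 : ℝ)..t, φ' s) →
        Real.sqrt (∫ t in (0 : ℝ)..T, ‖φ' t‖ ^ 2) ≤ R →
        |((1 / 2) * ∫ t in (0 : ℝ)..T, ‖φ' t - b (φ t)‖ ^ 2) -
          ((1 / 2) * ∫ t in (0 : ℝ)..T,
            ‖φ' t - b ((1 - θ) • φ (gridHat (T / (N : ℝ)) t)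
              + θ • φ (gridCheck (T / (N : ℝ)) t))‖ ^ 2)| ≤
          K₂ * (T / (N : ℝ)) := by
  intro R hR
  set M : ℝ := ‖x₀‖ + Real.sqrt T * R with hM_def
  have hM0 : 0 ≤ M := by positivity
  set Cb : ℝ := (L : ℝ) * M + (L : ℝ) with hCb_def
  have hCb0 : 0 ≤ Cb := by positivity
  refine ⟨(L : ℝ) * R ^ 2 + (L : ℝ) * Cb * (Real.sqrt T * R) + 1, by positivity, ?_⟩
  intro N hN hh1 φ φ' hφ' hφ'2 hφ hRb
  set h : ℝ := T / (N : ℝ) with hh_def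
  have hN0 : (0 : ℝ) < N := by exact_mod_cast hN
  have hh0 : 0 < h := div_pos hT hN0
  have hNe : (N : ℝ) ≠ 0 := ne_of_gt hN0
  have hNh : (N : ℝ) * h = T := by rw [hh_def]; field_simp
  have h0T : (0 : ℝ) ∈ Icc (0 : ℝ) T := ⟨le_refl 0, hT.le⟩
  have hTT : T ∈ Icc (0 : ℝ) T := ⟨hT.le, le_refl T⟩
  -- subinterval integrability
  have hsub : ∀ s t : ℝ, s ∈ Icc (0:ℝ) T → t ∈ Icc (0:ℝ) T → uIcc s t ⊆ Icc (0:ℝ) T := by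
    intro s t hs ht
    rw [← uIcc_of_le hT.le]
    exact uIcc_subset_uIcc (by rwa [uIcc_of_le hT.le]) (by rwa [uIcc_of_le hT.le])
  have hφ'_ii : ∀ s t : ℝ, s ∈ Icc (0:ℝ) T → t ∈ Icc (0:ℝ) T →
      IntervalIntegrable φ' volume s t := fun s t hs ht =>
    (hφ'.mono_set (hsub s t hs ht)).intervalIntegrable
  have hf_ii : ∀ s t : ℝ, s ∈ Icc (0:ℝ) T → t ∈ Icc (0:ℝ) T →
      IntervalIntegrable (fun u => ‖φ' u‖) volume s t := by
    have hn : IntegrableOn (fun u => ‖φ' u‖) (Icc (0:ℝ) T) volume := hφ'.norm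
    exact fun s t hs ht => (hn.mono_set (hsub s t hs ht)).intervalIntegrable
  have hf2_ii : ∀ s t : ℝ, s ∈ Icc (0:ℝ) T → t ∈ Icc (0:ℝ) T →
      IntervalIntegrable (fun u => ‖φ' u‖ ^ 2) volume s t := fun s t hs ht =>
    (hφ'2.mono_set (hsub s t hs ht)).intervalIntegrable
  -- L² bound
  have hR2 : ∫ t in (0:ℝ)..T, ‖φ' t‖ ^ 2 ≤ R ^ 2 := by
    have hnn : 0 ≤ ∫ t in (0:ℝ)..T, ‖φ' t‖ ^ 2 :=
      intervalIntegral.integral_nonneg hT.le (fun x _ => sq_nonneg _)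
    nlinarith [Real.sq_sqrt hnn, Real.sqrt_nonneg (∫ t in (0:ℝ)..T, ‖φ' t‖ ^ 2)]
  -- L¹ bound via Cauchy–Schwarz
  have hFnn : 0 ≤ ∫ t in (0:ℝ)..T, ‖φ' t‖ :=
    intervalIntegral.integral_nonneg hT.le (fun x _ => norm_nonneg _)
  have hF : ∫ t in (0:ℝ)..T, ‖φ' t‖ ≤ Real.sqrt T * R := by
    have hcs := cs_interval (fun u => ‖φ' u‖) 0 T hT.le (fun x => norm_nonneg _)
      (hf_ii 0 T h0T hTT) (hf2_ii 0 T h0T hTT)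
    nlinarith [Real.sq_sqrt hT.le, Real.sqrt_nonneg T, hR2, hFnn,
      mul_nonneg (Real.sqrt_nonneg T) hR.le,
      sq_nonneg ((∫ t in (0:ℝ)..T, ‖φ' t‖) - Real.sqrt T * R)]
  -- displacement bound
  have hdisp : ∀ s t : ℝ, s ∈ Icc (0:ℝ) T → t ∈ Icc (0:ℝ) T → s ≤ t →
      ‖φ t - φ s‖ ≤ ∫ u in s..t, ‖φ' u‖ := by
    intro s t hs ht hst
    rw [hφ s hs, hφ t ht]
    have heq : (x₀ + ∫ u in (0:ℝ)..t, φ' u) - (x₀ + ∫ u in (0:ℝ)..s, φ' u)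
        = ∫ u in s..t, φ' u := by
      rw [add_sub_add_left_eq_sub]
      exact intervalIntegral.integral_interval_sub_left (hφ'_ii 0 t h0T ht)
        (hφ'_ii 0 s h0T hs)
    rw [heq]
    exact intervalIntegral.norm_integral_le_integral_norm hst
  -- partial integrals of ‖φ'‖ are below the total
  have hpart : ∀ s t : ℝ, s ∈ Icc (0:ℝ) T → t ∈ Icc (0:ℝ) T → s ≤ t →
      ∫ u in s..t, ‖φ' u‖ ≤ ∫ u in (0:ℝ)..T, ‖φ' u‖ := by
    intro s t hs ht hst
    exact intervalIntegral.integral_mono_interval hs.1 hst ht.2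
      (Filter.Eventually.of_forall fun x => norm_nonneg _) (hf_ii 0 T h0T hTT)
  -- φ bounded by M on [0,T]
  have hφM : ∀ t ∈ Icc (0:ℝ) T, ‖φ t‖ ≤ M := by
    intro t ht
    rw [hφ t ht]
    calc ‖x₀ + ∫ u in (0:ℝ)..t, φ' u‖ ≤ ‖x₀‖ + ‖∫ u in (0:ℝ)..t, φ' u‖ := norm_add_le _ _
      _ ≤ ‖x₀‖ + ∫ u in (0:ℝ)..t, ‖φ' u‖ := by
          gcongr
          exact intervalIntegral.norm_integral_le_integral_norm ht.1
      _ ≤ ‖x₀‖ + ∫ u in (0:ℝ)..T, ‖φ' u‖ := by gcongr; exact hpart 0 t h0T ht ht.1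
      _ ≤ M := by rw [hM_def]; gcongr
  -- b bounded on the M-ball
  have hbB : ∀ x : EuclideanSpace ℝ (Fin d), ‖x‖ ≤ M → ‖b x‖ ≤ Cb := by
    intro x hx
    calc ‖b x‖ ≤ ‖b x - b 0‖ + ‖b 0‖ := by
          simpa using norm_add_le (b x - b 0) (b 0)
      _ ≤ (L : ℝ) * ‖x‖ + (L : ℝ) := by
          gcongr
          simpa [dist_eq_norm] using hb.dist_le_mul x 0
      _ ≤ Cb := by rw [hCb_def]; gcongr
  -- grid points stay in [0,T]
  have hhat_mem : ∀ t ∈ Icc (0:ℝ) T, gridHat h t ∈ Icc (0:ℝ) T :=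
    fun t ht => ⟨gridHat_nonneg hh0 ht.1, (gridHat_le hh0 t).trans ht.2⟩
  have hchk_mem : ∀ t ∈ Icc (0:ℝ) T, gridCheck h t ∈ Icc (0:ℝ) T := by
    intro t ht
    refine ⟨ht.1.trans (le_gridCheck hh0 t), ?_⟩
    have := gridCheck_le hh0 (k := N) (t := t) (by rw [hNh]; exact ht.2)
    rwa [hNh] at this
  -- the interpolated point and modulus
  set v : ℝ → EuclideanSpace ℝ (Fin d) :=
    fun t => (1 - θ) • φ (gridHat h t) + θ • φ (gridCheck h t) with hv_def
  set g : ℝ → ℝ := fun t => ∫ u in gridHat h t..gridCheck h t, ‖φ' u‖ with hg_def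
  have hg0 : ∀ t ∈ Icc (0:ℝ) T, 0 ≤ g t := by
    intro t ht
    exact intervalIntegral.integral_nonneg (gridHat_le_gridCheck hh0 t)
      (fun x _ => norm_nonneg _)
  have hgub : ∀ t ∈ Icc (0:ℝ) T, g t ≤ Real.sqrt T * R := by
    intro t ht
    refine le_trans ?_ hF
    exact hpart _ _ (hhat_mem t ht) (hchk_mem t ht) (gridHat_le_gridCheck hh0 t)
  have hvM : ∀ t ∈ Icc (0:ℝ) T, ‖v t‖ ≤ M := by
    intro t ht
    rw [hv_def]
    calc ‖(1 - θ) • φ (gridHat h t) + θ • φ (gridCheck h t)‖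
        ≤ ‖(1 - θ) • φ (gridHat h t)‖ + ‖θ • φ (gridCheck h t)‖ := norm_add_le _ _
      _ = (1 - θ) * ‖φ (gridHat h t)‖ + θ * ‖φ (gridCheck h t)‖ := by
          rw [norm_smul, norm_smul, Real.norm_eq_abs, Real.norm_eq_abs,
            abs_of_nonneg (by linarith), abs_of_nonneg hθ0]
      _ ≤ (1 - θ) * M + θ * M := by
          have h1 := hφM _ (hhat_mem t ht)
          have h2 := hφM _ (hchk_mem t ht)
          have := norm_nonneg (φ (gridHat h t))
          have := norm_nonneg (φ (gridCheck h t))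
          nlinarith
      _ = M := by ring
  have huv : ∀ t ∈ Icc (0:ℝ) T, ‖φ t - v t‖ ≤ g t := by
    intro t ht
    have e1 : φ t - v t = (1 - θ) • (φ t - φ (gridHat h t))
        + θ • (φ t - φ (gridCheck h t)) := by
      rw [hv_def]; module
    have d1 : ‖φ t - φ (gridHat h t)‖ ≤ g t := by
      refine le_trans (hdisp _ t (hhat_mem t ht) ht (gridHat_le hh0 t)) ?_
      exact intervalIntegral.integral_mono_interval le_rfl (gridHat_le hh0 t)
        (le_gridCheck hh0 t) (Filter.Eventually.of_forall fun x => norm_nonneg _)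
        (hf_ii _ _ (hhat_mem t ht) (hchk_mem t ht))
    have d2 : ‖φ t - φ (gridCheck h t)‖ ≤ g t := by
      rw [norm_sub_rev]
      refine le_trans (hdisp t _ ht (hchk_mem t ht) (le_gridCheck hh0 t)) ?_
      exact intervalIntegral.integral_mono_interval (gridHat_le hh0 t) (le_gridCheck hh0 t)
        le_rfl (Filter.Eventually.of_forall fun x => norm_nonneg _)
        (hf_ii _ _ (hhat_mem t ht) (hchk_mem t ht))
    have hnorm : ‖φ t - v t‖ ≤ (1 - θ) * ‖φ t - φ (gridHat h t)‖
        + θ * ‖φ t - φ (gridCheck h t)‖ := by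
      rw [e1]
      refine le_trans (norm_add_le _ _) (le_of_eq ?_)
      rw [norm_smul, norm_smul, Real.norm_eq_abs, Real.norm_eq_abs,
        abs_of_nonneg (by linarith : (0:ℝ) ≤ 1 - θ), abs_of_nonneg hθ0]
    nlinarith [d1, d2, norm_nonneg (φ t - φ (gridHat h t)),
      norm_nonneg (φ t - φ (gridCheck h t))]
  -- pointwise bound on the difference of squared norms
  have hXY : ∀ t ∈ Icc (0:ℝ) T,
      |‖φ' t - b (φ t)‖ ^ 2 - ‖φ' t - b (v t)‖ ^ 2|
        ≤ 2 * (L : ℝ) * (g t * ‖φ' t‖) + 2 * (L : ℝ) * Cb * g t := by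
    intro t ht
    have hac : (φ' t - b (φ t)) - (φ' t - b (v t)) = b (v t) - b (φ t) :=
      sub_sub_sub_cancel_left (b (φ t)) (b (v t)) (φ' t)
    have hlip : ‖b (v t) - b (φ t)‖ ≤ (L : ℝ) * g t := by
      have := hb.dist_le_mul (v t) (φ t)
      rw [dist_eq_norm] at this
      refine le_trans this ?_
      have : dist (v t) (φ t) = ‖φ t - v t‖ := by rw [dist_eq_norm, norm_sub_rev]
      rw [dist_eq_norm, norm_sub_rev]
      exact mul_le_mul_of_nonneg_left (huv t ht) (NNReal.coe_nonneg L)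
    have hna : ‖φ' t - b (φ t)‖ ≤ ‖φ' t‖ + Cb := by
      refine le_trans (norm_sub_le _ _) ?_
      gcongr
      exact hbB _ (hφM t ht)
    have hnc : ‖φ' t - b (v t)‖ ≤ ‖φ' t‖ + Cb := by
      refine le_trans (norm_sub_le _ _) ?_
      gcongr
      exact hbB _ (hvM t ht)
    have key := sq_norm_diff_bound (φ' t - b (φ t)) (φ' t - b (v t))
    rw [hac] at key
    have hg0' := hg0 t ht
    have hL0 : (0:ℝ) ≤ L := NNReal.coe_nonneg L
    calc |‖φ' t - b (φ t)‖ ^ 2 - ‖φ' t - b (v t)‖ ^ 2|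
        ≤ ‖b (v t) - b (φ t)‖ * (‖φ' t - b (φ t)‖ + ‖φ' t - b (v t)‖) := key
      _ ≤ ((L:ℝ) * g t) * ((‖φ' t‖ + Cb) + (‖φ' t‖ + Cb)) := by
          refine mul_le_mul hlip (by gcongr) ?_ (by positivity)
          positivity
      _ = 2 * (L : ℝ) * (g t * ‖φ' t‖) + 2 * (L : ℝ) * Cb * g t := by ring
  -- measurability
  have hIocIcc : Ioc (0:ℝ) T ⊆ Icc 0 T := Ioc_subset_Icc_self
  have hφ'm : AEStronglyMeasurable φ' (volume.restrict (Ioc 0 T)) :=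
    hφ'.1.mono_measure (Measure.restrict_mono hIocIcc le_rfl)
  have hprim : ContinuousOn (fun t : ℝ => ∫ u in (0:ℝ)..t, φ' u) (Icc 0 T) := by
    have := continuousOn_primitive_interval (a := 0) (b := T) (μ := volume) (f := φ')
      (by rwa [uIcc_of_le hT.le])
    rwa [uIcc_of_le hT.le] at this
  have hbφm : AEStronglyMeasurable (fun t => b (φ t)) (volume.restrict (Ioc 0 T)) := by
    have hc : ContinuousOn (fun t : ℝ => b (x₀ + ∫ u in (0:ℝ)..t, φ' u)) (Icc 0 T) :=
      hb.continuous.comp_continuousOn (continuousOn_const.add hprim)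
    have hm2 : AEStronglyMeasurable (fun t : ℝ => b (x₀ + ∫ u in (0:ℝ)..t, φ' u))
        (volume.restrict (Ioc 0 T)) :=
      (hc.aestronglyMeasurable measurableSet_Icc).mono_measure
        (Measure.restrict_mono hIocIcc le_rfl)
    exact hm2.congr ((ae_restrict_mem measurableSet_Ioc).mono fun t ht => by
      simp only [hφ t (hIocIcc ht)])
  have hvm : AEStronglyMeasurable v (volume.restrict (Ioc 0 T)) := by
    have hveq : v = fun t : ℝ => (fun p : ℤ × ℤ =>
        (1 - θ) • φ (h * p.1) + θ • φ (h * p.2)) (⌊t / h⌋, ⌈t / h⌉) := by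
      funext t; simp only [hv_def, gridHat, gridCheck]
    rw [hveq]
    exact (measurable_comp_grid (h := h) (fun p : ℤ × ℤ =>
      (1 - θ) • φ (h * p.1) + θ • φ (h * p.2))).aestronglyMeasurable
  have hbvm : AEStronglyMeasurable (fun t => b (v t)) (volume.restrict (Ioc 0 T)) := by
    have hveq : (fun t : ℝ => b (v t)) = fun t : ℝ => (fun p : ℤ × ℤ =>
        b ((1 - θ) • φ (h * p.1) + θ • φ (h * p.2))) (⌊t / h⌋, ⌈t / h⌉) := by
      funext t; simp only [hv_def, gridHat, gridCheck]
    rw [hveq]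
    exact (measurable_comp_grid (h := h) (fun p : ℤ × ℤ =>
      b ((1 - θ) • φ (h * p.1) + θ • φ (h * p.2)))).aestronglyMeasurable
  have hgm : AEStronglyMeasurable g (volume.restrict (Ioc 0 T)) := by
    have hgeq : g = fun t : ℝ => (fun p : ℤ × ℤ =>
        ∫ u in (h * p.1 : ℝ)..(h * p.2 : ℝ), ‖φ' u‖) (⌊t / h⌋, ⌈t / h⌉) := by
      funext t; simp only [hg_def, gridHat, gridCheck]
    rw [hgeq]
    exact (measurable_comp_grid (h := h) (fun p : ℤ × ℤ =>
      ∫ u in (h * p.1 : ℝ)..(h * p.2 : ℝ), ‖φ' u‖)).aestronglyMeasurable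
  -- integrability of the two integrands
  have hsq_aesm : ∀ w : ℝ → EuclideanSpace ℝ (Fin d),
      AEStronglyMeasurable w (volume.restrict (Ioc 0 T)) →
      AEStronglyMeasurable (fun t => ‖φ' t - w t‖ ^ 2) (volume.restrict (Ioc 0 T)) := by
    intro w hw
    have hn := (hφ'm.sub hw).norm
    exact (hn.mul hn).congr (Filter.Eventually.of_forall fun t => (pow_two _).symm)
  have hbound_int : IntegrableOn (fun t => (‖φ' t‖ + Cb) ^ 2) (Ioc 0 T) volume := by
    have h1 : IntegrableOn (fun t => ‖φ' t‖ ^ 2) (Ioc 0 T) volume := hφ'2.mono_set hIocIcc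
    have h2 : IntegrableOn (fun t => ‖φ' t‖) (Ioc 0 T) volume := by
      have hn : IntegrableOn (fun u => ‖φ' u‖) (Icc (0:ℝ) T) volume := hφ'.norm
      exact hn.mono_set hIocIcc
    have h3 : IntegrableOn (fun _ : ℝ => Cb ^ 2) (Ioc 0 T) volume :=
      integrableOn_const measure_Ioc_lt_top.ne
    have heq : (fun t => (‖φ' t‖ + Cb) ^ 2)
        = fun t => ‖φ' t‖ ^ 2 + ((2 * Cb) * ‖φ' t‖ + Cb ^ 2) := by
      funext t; ring
    rw [heq]
    exact h1.add ((h2.const_mul (2 * Cb)).add h3)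
  have hXii : ∀ w : ℝ → EuclideanSpace ℝ (Fin d),
      AEStronglyMeasurable w (volume.restrict (Ioc 0 T)) →
      (∀ t ∈ Icc (0:ℝ) T, ‖w t‖ ≤ Cb) →
      IntervalIntegrable (fun t => ‖φ' t - w t‖ ^ 2) volume 0 T := by
    intro w hw hwb
    rw [intervalIntegrable_iff_integrableOn_Ioc_of_le hT.le]
    refine Integrable.mono' hbound_int (hsq_aesm w hw) ?_
    refine (ae_restrict_mem measurableSet_Ioc).mono fun t ht => ?_
    rw [Real.norm_eq_abs, abs_of_nonneg (sq_nonneg _)]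
    have hle : ‖φ' t - w t‖ ≤ ‖φ' t‖ + Cb :=
      le_trans (norm_sub_le _ _) (by gcongr; exact hwb t (hIocIcc ht))
    exact pow_le_pow_left₀ (norm_nonneg _) hle 2
  have hXint : IntervalIntegrable (fun t => ‖φ' t - b (φ t)‖ ^ 2) volume 0 T :=
    hXii _ hbφm (fun t ht => hbB _ (hφM t ht))
  have hYint : IntervalIntegrable (fun t => ‖φ' t - b (v t)‖ ^ 2) volume 0 T :=
    hXii _ hbvm (fun t ht => hbB _ (hvM t ht))
  have hgf_ii : IntervalIntegrable (fun t => g t * ‖φ' t‖) volume 0 T := by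
    rw [intervalIntegrable_iff_integrableOn_Ioc_of_le hT.le]
    have hbd : IntegrableOn (fun t => (Real.sqrt T * R) * ‖φ' t‖) (Ioc 0 T) volume := by
      have hn : IntegrableOn (fun u => ‖φ' u‖) (Icc (0:ℝ) T) volume := hφ'.norm
      exact (hn.mono_set hIocIcc).const_mul _
    refine Integrable.mono' hbd (hgm.mul hφ'm.norm) ?_
    refine (ae_restrict_mem measurableSet_Ioc).mono fun t ht => ?_
    have htI := hIocIcc ht
    rw [Real.norm_eq_abs, abs_of_nonneg (mul_nonneg (hg0 t htI) (norm_nonneg _))]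
    exact mul_le_mul_of_nonneg_right (hgub t htI) (norm_nonneg _)
  have hg_ii : IntervalIntegrable g volume 0 T := by
    rw [intervalIntegrable_iff_integrableOn_Ioc_of_le hT.le]
    have hbd : IntegrableOn (fun _ : ℝ => Real.sqrt T * R) (Ioc 0 T) volume :=
      integrableOn_const measure_Ioc_lt_top.ne
    refine Integrable.mono' hbd hgm ?_
    refine (ae_restrict_mem measurableSet_Ioc).mono fun t ht => ?_
    have htI := hIocIcc ht
    rw [Real.norm_eq_abs, abs_of_nonneg (hg0 t htI)]
    exact hgub t htI
  -- the grid sequence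
  set ag : ℕ → ℝ := fun k => (k : ℝ) * h with hag
  have e0 : ag 0 = 0 := by simp [hag]
  have eN : ag N = T := by simpa [hag] using hNh
  have hag_step : ∀ k : ℕ, ag (k + 1) = ag k + h := by
    intro k; simp only [hag]; push_cast; ring
  have hag_le : ∀ k : ℕ, ag k ≤ ag (k + 1) := by
    intro k; rw [hag_step]; linarith
  have hag_mem : ∀ k : ℕ, k ≤ N → ag k ∈ Icc (0:ℝ) T := by
    intro k hk
    constructor
    · simp only [hag]; positivity
    · rw [← hNh]; simp only [hag]
      have : (k : ℝ) ≤ (N : ℝ) := by exact_mod_cast hk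
      nlinarith
  have hsubcell : ∀ k : ℕ, k < N → uIcc (ag k) (ag (k + 1)) ⊆ uIcc (0:ℝ) T := by
    intro k hk
    rw [uIcc_of_le hT.le]
    exact hsub _ _ (hag_mem k hk.le) (hag_mem (k + 1) hk)
  -- the per-cell mass of ‖φ'‖
  have hgle_cell : ∀ k : ℕ, k < N → ∀ t ∈ Icc (ag k) (ag (k + 1)),
      g t ≤ ∫ u in ag k..ag (k + 1), ‖φ' u‖ := by
    intro k hk t htk
    have h1 : ag k ≤ gridHat h t := gridHat_ge hh0 htk.1
    have h2 : gridCheck h t ≤ ag (k + 1) := by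
      have ht' : t ≤ ((k + 1 : ℕ) : ℝ) * h := by
        have := htk.2
        simpa [hag] using this
      have := gridCheck_le hh0 (k := k + 1) ht'
      simpa [hag] using this
    exact intervalIntegral.integral_mono_interval h1 (gridHat_le_gridCheck hh0 t) h2
      (Filter.Eventually.of_forall fun x => norm_nonneg _)
      (hf_ii _ _ (hag_mem k hk.le) (hag_mem (k + 1) hk))
  -- first sum estimate : ∫ g·‖φ'‖ ≤ h R²
  have E1 : ∫ t in (0:ℝ)..T, g t * ‖φ' t‖ ≤ h * R ^ 2 := by
    have hcellii : ∀ k < N, IntervalIntegrable (fun t => g t * ‖φ' t‖) volume (ag k) (ag (k+1)) :=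
      fun k hk => hgf_ii.mono_set (hsubcell k hk)
    have hcellii2 : ∀ k < N, IntervalIntegrable (fun u => ‖φ' u‖ ^ 2) volume (ag k) (ag (k+1)) :=
      fun k hk => (hf2_ii 0 T h0T hTT).mono_set (hsubcell k hk)
    have hsum := intervalIntegral.sum_integral_adjacent_intervals
      (f := fun t => g t * ‖φ' t‖) (μ := volume) (a := ag) (n := N) hcellii
    have hsum2 := intervalIntegral.sum_integral_adjacent_intervals
      (f := fun u => ‖φ' u‖ ^ 2) (μ := volume) (a := ag) (n := N) hcellii2
    rw [e0, eN] at hsum hsum2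
    calc ∫ t in (0:ℝ)..T, g t * ‖φ' t‖
        = ∑ k ∈ Finset.range N, ∫ t in ag k..ag (k+1), g t * ‖φ' t‖ := hsum.symm
      _ ≤ ∑ k ∈ Finset.range N, h * ∫ u in ag k..ag (k+1), ‖φ' u‖ ^ 2 := by
          apply Finset.sum_le_sum
          intro k hk
          have hkN : k < N := Finset.mem_range.mp hk
          set c : ℝ := ∫ u in ag k..ag (k+1), ‖φ' u‖ with hc
          have step1 : ∫ t in ag k..ag (k+1), g t * ‖φ' t‖
              ≤ ∫ t in ag k..ag (k+1), c * ‖φ' t‖ := by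
            apply intervalIntegral.integral_mono_on (hag_le k) (hcellii k hkN)
              ((hf_ii _ _ (hag_mem k hkN.le) (hag_mem (k+1) hkN)).const_mul c)
            intro t htk
            exact mul_le_mul_of_nonneg_right (hgle_cell k hkN t htk) (norm_nonneg _)
          have step2 : ∫ t in ag k..ag (k+1), c * ‖φ' t‖ = c * c := by
            rw [intervalIntegral.integral_const_mul]
          have step3 : c * c ≤ h * ∫ u in ag k..ag (k+1), ‖φ' u‖ ^ 2 := by
            have hcs := cs_interval (fun u => ‖φ' u‖) (ag k) (ag (k+1)) (hag_le k)
              (fun x => norm_nonneg _)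
              (hf_ii _ _ (hag_mem k hkN.le) (hag_mem (k+1) hkN))
              (hcellii2 k hkN)
            have hlen : ag (k+1) - ag k = h := by rw [hag_step]; ring
            rw [hlen] at hcs
            calc c * c = c ^ 2 := (sq c).symm
              _ ≤ h * ∫ u in ag k..ag (k+1), ‖φ' u‖ ^ 2 := hcs
          linarith
      _ = h * ∑ k ∈ Finset.range N, ∫ u in ag k..ag (k+1), ‖φ' u‖ ^ 2 := by
          rw [Finset.mul_sum]
      _ = h * ∫ u in (0:ℝ)..T, ‖φ' u‖ ^ 2 := by rw [hsum2]
      _ ≤ h * R ^ 2 := by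
          exact mul_le_mul_of_nonneg_left hR2 hh0.le
  -- second sum estimate : ∫ g ≤ h √T R
  have E2 : ∫ t in (0:ℝ)..T, g t ≤ h * (Real.sqrt T * R) := by
    have hcellii : ∀ k < N, IntervalIntegrable g volume (ag k) (ag (k+1)) :=
      fun k hk => hg_ii.mono_set (hsubcell k hk)
    have hcellii1 : ∀ k < N, IntervalIntegrable (fun u => ‖φ' u‖) volume (ag k) (ag (k+1)) :=
      fun k hk => (hf_ii 0 T h0T hTT).mono_set (hsubcell k hk)
    have hsum := intervalIntegral.sum_integral_adjacent_intervals
      (f := g) (μ := volume) (a := ag) (n := N) hcellii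
    have hsum1 := intervalIntegral.sum_integral_adjacent_intervals
      (f := fun u => ‖φ' u‖) (μ := volume) (a := ag) (n := N) hcellii1
    rw [e0, eN] at hsum hsum1
    calc ∫ t in (0:ℝ)..T, g t
        = ∑ k ∈ Finset.range N, ∫ t in ag k..ag (k+1), g t := hsum.symm
      _ ≤ ∑ k ∈ Finset.range N, h * ∫ u in ag k..ag (k+1), ‖φ' u‖ := by
          apply Finset.sum_le_sum
          intro k hk
          have hkN : k < N := Finset.mem_range.mp hk
          set c : ℝ := ∫ u in ag k..ag (k+1), ‖φ' u‖ with hc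
          have step1 : ∫ t in ag k..ag (k+1), g t ≤ ∫ _t in ag k..ag (k+1), c := by
            apply intervalIntegral.integral_mono_on (hag_le k) (hcellii k hkN)
              intervalIntegrable_const
            intro t htk
            exact hgle_cell k hkN t htk
          have step2 : ∫ _t in ag k..ag (k+1), c = h * c := by
            rw [intervalIntegral.integral_const, hag_step, smul_eq_mul]; ring
          linarith
      _ = h * ∑ k ∈ Finset.range N, ∫ u in ag k..ag (k+1), ‖φ' u‖ := by rw [Finset.mul_sum]
      _ = h * ∫ u in (0:ℝ)..T, ‖φ' u‖ := by rw [hsum1]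
      _ ≤ h * (Real.sqrt T * R) := mul_le_mul_of_nonneg_left hF hh0.le
  -- assembling everything
  have key : |(∫ t in (0:ℝ)..T, ‖φ' t - b (φ t)‖ ^ 2)
      - ∫ t in (0:ℝ)..T, ‖φ' t - b (v t)‖ ^ 2|
      ≤ 2 * (L:ℝ) * (h * R ^ 2) + 2 * (L:ℝ) * Cb * (h * (Real.sqrt T * R)) := by
    calc |(∫ t in (0:ℝ)..T, ‖φ' t - b (φ t)‖ ^ 2)
        - ∫ t in (0:ℝ)..T, ‖φ' t - b (v t)‖ ^ 2|
        = |∫ t in (0:ℝ)..T, (‖φ' t - b (φ t)‖ ^ 2 - ‖φ' t - b (v t)‖ ^ 2)| := by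
          rw [intervalIntegral.integral_sub hXint hYint]
      _ ≤ ∫ t in (0:ℝ)..T, |‖φ' t - b (φ t)‖ ^ 2 - ‖φ' t - b (v t)‖ ^ 2| := by
          have := intervalIntegral.norm_integral_le_integral_norm
            (f := fun t => ‖φ' t - b (φ t)‖ ^ 2 - ‖φ' t - b (v t)‖ ^ 2)
            (μ := volume) (a := 0) (b := T) hT.le
          simpa [Real.norm_eq_abs] using this
      _ ≤ ∫ t in (0:ℝ)..T, (2 * (L:ℝ) * (g t * ‖φ' t‖) + 2 * (L:ℝ) * Cb * g t) := by
          apply intervalIntegral.integral_mono_on hT.le ((hXint.sub hYint).abs)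
            ((hgf_ii.const_mul (2 * (L:ℝ))).add (hg_ii.const_mul (2 * (L:ℝ) * Cb)))
          exact hXY
      _ = 2 * (L:ℝ) * (∫ t in (0:ℝ)..T, g t * ‖φ' t‖)
          + 2 * (L:ℝ) * Cb * (∫ t in (0:ℝ)..T, g t) := by
          rw [intervalIntegral.integral_add (hgf_ii.const_mul _) (hg_ii.const_mul _),
            intervalIntegral.integral_const_mul, intervalIntegral.integral_const_mul]
      _ ≤ 2 * (L:ℝ) * (h * R ^ 2) + 2 * (L:ℝ) * Cb * (h * (Real.sqrt T * R)) := by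
          have hL0 : (0:ℝ) ≤ (L:ℝ) := NNReal.coe_nonneg L
          have hIgf : 0 ≤ ∫ t in (0:ℝ)..T, g t * ‖φ' t‖ :=
            intervalIntegral.integral_nonneg hT.le fun t ht =>
              mul_nonneg (hg0 t ht) (norm_nonneg _)
          gcongr
  show |1/2 * (∫ t in (0:ℝ)..T, ‖φ' t - b (φ t)‖ ^ 2) -
      1/2 * ∫ t in (0:ℝ)..T, ‖φ' t - b (v t)‖ ^ 2|
      ≤ ((L:ℝ) * R ^ 2 + (L:ℝ) * Cb * (Real.sqrt T * R) + 1) * h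
  set IX : ℝ := ∫ t in (0:ℝ)..T, ‖φ' t - b (φ t)‖ ^ 2 with hIX
  set IY : ℝ := ∫ t in (0:ℝ)..T, ‖φ' t - b (v t)‖ ^ 2 with hIY
  have habs : |1/2 * IX - 1/2 * IY| = 1/2 * |IX - IY| := by
    rw [← mul_sub, abs_mul]; norm_num
  rw [habs]
  calc 1/2 * |IX - IY|
      ≤ 1/2 * (2 * (L:ℝ) * (h * R ^ 2) + 2 * (L:ℝ) * Cb * (h * (Real.sqrt T * R))) :=
        mul_le_mul_of_nonneg_left key (by norm_num)
    _ = ((L:ℝ) * R ^ 2 + (L:ℝ) * Cb * (Real.sqrt T * R)) * h := by ring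
    _ ≤ ((L:ℝ) * R ^ 2 + (L:ℝ) * Cb * (Real.sqrt T * R) + 1) * h := by nlinarith [hh0.le]
end
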